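/- arXiv:1709.04629 — 6 statements merged into one kernel-verified Lean document; each statement's English description precedes it below -/
import Mathlib

section
/- If h(z) = Σ a_n z^n and g(z) = Σ b_n z^n are analytic in the unit disk with |g'(z)| ≤ k|h'(z)| for all z in the disk and some k ∈ [0,1], then for all 0 ≤ r < 1, Σ_{n≥1} |b_n|² rⁿ ≤ k² Σ_{n≥1} |a_n|² rⁿ. -/
open Metric Complex MeasureTheory Filter Set AddCircle

lemma geom_poly_summable (j : ℕ) {q : ℝ} (h0 : 0 ≤ q) (h1 : q < 1) :
    Summable (fun n : ℕ => ((n : ℝ) + 1) ^ j * q ^ n) := by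
  rcases eq_or_lt_of_le h0 with h | h
  · apply summable_of_ne_finset_zero (s := {0})
    intro n hn
    simp only [Finset.mem_singleton] at hn
    simp [← h, zero_pow hn]
  · have hs : Summable (fun n : ℕ => (n : ℝ) ^ j * q ^ n) :=
      summable_pow_mul_geometric_of_norm_lt_one j (by rwa [Real.norm_eq_abs, abs_of_pos h])
    have := (hs.comp_injective (add_left_injective 1)).mul_left q⁻¹
    refine this.congr fun n => ?_
    simp only [Function.comp_apply, Nat.cast_add, Nat.cast_one]
    rw [pow_succ]
    field_simp

lemma coeff_bound {b : ℕ → ℂ} {g : ℂ → ℂ}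
    (hb : ∀ z ∈ ball (0:ℂ) 1, HasSum (fun n : ℕ => b n * z ^ n) (g z))
    {s : ℝ} (h0 : 0 ≤ s) (h1 : s < 1) : ∃ C : ℝ, 0 ≤ C ∧ ∀ m : ℕ, ‖b m‖ * s ^ m ≤ C := by
  have hs : (s : ℂ) ∈ ball (0:ℂ) 1 := by
    rw [mem_ball_zero_iff]
    simpa [Complex.norm_real, Real.norm_eq_abs, _root_.abs_of_nonneg h0] using h1
  have h2 : Tendsto (fun n => ‖b n * (s:ℂ) ^ n‖) atTop (nhds 0) := by
    simpa using ((hb _ hs).summable.tendsto_atTop_zero).norm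
  obtain ⟨C, hC⟩ := h2.bddAbove_range
  refine ⟨max C 0, le_max_right _ _, fun m => ?_⟩
  have := hC (Set.mem_range_self m)
  refine le_trans ?_ (le_max_of_le_left this)
  simp [norm_mul, norm_pow, Complex.norm_real, Real.norm_eq_abs, _root_.abs_of_nonneg h0]

lemma summable_coeff {b : ℕ → ℂ} {g : ℂ → ℂ}
    (hb : ∀ z ∈ ball (0:ℂ) 1, HasSum (fun n : ℕ => b n * z ^ n) (g z))
    (i j : ℕ) (hi : i = 1 ∨ i = 2)
    {s : ℝ} (h0 : 0 ≤ s) (h1 : s < 1) :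
    Summable (fun n : ℕ => ((n : ℝ) + 1) ^ j * ‖b (n + 1)‖ ^ i * s ^ n) := by
  set w : ℝ := (s + 1) / 2 with hw
  have hw0 : 0 < w := by positivity
  have hws : s < w := by rw [hw]; linarith
  have hw1 : w < 1 := by rw [hw]; linarith
  clear hw
  clear_value w
  have ht0 : 0 ≤ Real.sqrt w := Real.sqrt_nonneg _
  have ht1 : Real.sqrt w < 1 := by
    rw [show (1:ℝ) = Real.sqrt 1 by simp]
    exact Real.sqrt_lt_sqrt hw0.le hw1
  -- a bound ∀ m, ‖b m‖ ^ i * w ^ m ≤ C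
  obtain ⟨C, hC0, hC⟩ : ∃ C : ℝ, 0 ≤ C ∧ ∀ m : ℕ, ‖b m‖ ^ i * w ^ m ≤ C := by
    rcases hi with hi | hi
    · obtain ⟨C, hC0, hC⟩ := coeff_bound hb hw0.le hw1
      exact ⟨C, hC0, fun m => by simpa [hi] using hC m⟩
    · obtain ⟨C, hC0, hC⟩ := coeff_bound hb ht0 ht1
      refine ⟨C ^ 2, by positivity, fun m => ?_⟩
      have : (‖b m‖ * Real.sqrt w ^ m) ^ 2 ≤ C ^ 2 := by
        have h := hC m
        have : 0 ≤ ‖b m‖ * Real.sqrt w ^ m := by positivity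
        nlinarith [hC m]
      calc ‖b m‖ ^ i * w ^ m = (‖b m‖ * Real.sqrt w ^ m) ^ 2 := by
            rw [hi, mul_pow, ← pow_mul, mul_comm m 2, pow_mul, Real.sq_sqrt hw0.le]
        _ ≤ C ^ 2 := this
  have hq0 : 0 ≤ s / w := by positivity
  have hq1 : s / w < 1 := (div_lt_one hw0).2 hws
  have hsum := (geom_poly_summable j hq0 hq1).mul_left (C / w)
  refine Summable.of_nonneg_of_le (fun n => by positivity) (fun n => ?_) hsum
  have hbn := hC (n + 1)
  have h1 : ((n : ℝ) + 1) ^ j * ‖b (n + 1)‖ ^ i * s ^ n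
      = ((n : ℝ) + 1) ^ j * (‖b (n+1)‖ ^ i * w ^ (n+1)) * ((s / w) ^ n / w) := by
    rw [div_pow]
    field_simp
    ring
  rw [h1]
  have h2 : (‖b (n+1)‖ ^ i * w ^ (n+1)) * ((s / w) ^ n / w) ≤ C * ((s / w) ^ n / w) := by
    apply mul_le_mul_of_nonneg_right hbn
    positivity
  calc ((n : ℝ) + 1) ^ j * (‖b (n+1)‖ ^ i * w ^ (n+1)) * ((s / w) ^ n / w)
      ≤ ((n : ℝ) + 1) ^ j * (C * ((s / w) ^ n / w)) := by
        rw [mul_assoc]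
        exact mul_le_mul_of_nonneg_left h2 (by positivity)
    _ = C / w * (((n : ℝ) + 1) ^ j * (s / w) ^ n) := by ring

lemma hasFPowerSeries_of_hasSum {b : ℕ → ℂ} {g : ℂ → ℂ}
    (hb : ∀ z ∈ ball (0:ℂ) 1, HasSum (fun n : ℕ => b n * z ^ n) (g z)) :
    HasFPowerSeriesOnBall g (FormalMultilinearSeries.ofScalars ℂ b) 0 1 := by
  refine ⟨ENNReal.le_of_forall_nnreal_lt fun r hr => ?_, one_pos, fun {y} hy => ?_⟩
  · have hr1 : (r : ℝ) < 1 := by exact_mod_cast hr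
    set s : ℝ := ((r : ℝ) + 1) / 2 with hs
    have h0 : 0 ≤ s := by positivity
    have hrs : (r : ℝ) < s := by rw [hs]; linarith [r.coe_nonneg]
    have h1 : s < 1 := by rw [hs]; linarith
    clear hs; clear_value s
    obtain ⟨C, hC0, hC⟩ := coeff_bound hb h0 h1
    apply FormalMultilinearSeries.le_radius_of_summable
    have hgeo : Summable (fun n : ℕ => C * ((r : ℝ) / s) ^ n) := by
      apply Summable.mul_left
      apply summable_geometric_of_lt_one (by positivity)
      exact (div_lt_one (lt_of_le_of_lt r.coe_nonneg hrs)).2 hrs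
    refine Summable.of_nonneg_of_le (fun n => by positivity) (fun n => ?_) hgeo
    rw [FormalMultilinearSeries.ofScalars_norm]
    have hs0 : 0 < s := lt_of_le_of_lt r.coe_nonneg hrs
    have hsne : s ≠ 0 := hs0.ne'
    have : ‖b n‖ * (r:ℝ) ^ n = (‖b n‖ * s ^ n) * ((r:ℝ) / s) ^ n := by
      rw [div_pow]; field_simp
    rw [this]
    exact mul_le_mul_of_nonneg_right (hC n) (by positivity)
  · have hy' : y ∈ ball (0:ℂ) 1 := by
      rw [mem_ball_zero_iff]
      rw [mem_emetric_ball_zero_iff, ← ofReal_norm, ENNReal.ofReal_lt_one] at hy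
      exact_mod_cast hy
    have := hb y hy'
    simp only [FormalMultilinearSeries.ofScalars_apply_eq, smul_eq_mul, zero_add]
    exact this

lemma deriv_hasSum {b : ℕ → ℂ} {g : ℂ → ℂ}
    (hb : ∀ z ∈ ball (0:ℂ) 1, HasSum (fun n : ℕ => b n * z ^ n) (g z))
    {z : ℂ} (hz : z ∈ ball (0:ℂ) 1) (hz0 : z ≠ 0) :
    HasSum (fun n : ℕ => ((n : ℂ) + 1) * b (n + 1) * z ^ n) (deriv g z) := by
  have HP := (hasFPowerSeries_of_hasSum hb).fderiv
  have hz' : z ∈ Metric.eball (0:ℂ) 1 := by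
    rw [mem_emetric_ball_zero_iff, ← ofReal_norm, ENNReal.ofReal_lt_one]
    rw [mem_ball_zero_iff] at hz
    exact_mod_cast hz
  have h1 := HP.hasSum hz'
  simp only [zero_add] at h1
  have h2 := (ContinuousLinearMap.apply ℂ ℂ z).hasSum h1
  simp only [ContinuousLinearMap.apply_apply] at h2
  have h3 : ∀ n : ℕ, ((FormalMultilinearSeries.ofScalars ℂ b).derivSeries n fun _ => z) z
      = ((n : ℂ) + 1) * b (n + 1) * z ^ (n + 1) := by
    intro n
    rw [FormalMultilinearSeries.derivSeries_apply_diag]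
    rw [FormalMultilinearSeries.ofScalars_apply_eq]
    push_cast [nsmul_eq_mul, smul_eq_mul]
    ring
  have h4 : (fderiv ℂ g z) z = z * deriv g z := by
    have : deriv g z = (fderiv ℂ g z) 1 := rfl
    rw [this]
    have h := (fderiv ℂ g z).map_smul z (1:ℂ)
    rw [smul_eq_mul, mul_one] at h
    rw [h, smul_eq_mul]
  rw [h4] at h2
  simp only [h3] at h2
  have h5 := h2.div_const z
  rw [mul_comm z (deriv g z), mul_div_assoc, div_self hz0, mul_one] at h5
  refine h5.congr_fun fun n => ?_
  rw [pow_succ, mul_comm (z ^ n) z, ← mul_assoc, mul_assoc _ z (z^n), mul_comm z (z^n), ← mul_assoc, mul_div_assoc, div_self hz0, mul_one]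

section FourierHelp
variable {T : ℝ} [hT : Fact (0 < T)]

lemma fourierCoeff_fourier' (n m : ℤ) :
    fourierCoeff (⇑(fourier n) : AddCircle T → ℂ) m = if m = n then 1 else 0 := by
  have h := orthonormal_fourier (T := T)
  rw [orthonormal_iff_ite] at h
  have h2 := h m n
  rw [ContinuousMap.inner_toLp (@haarAddCircle T hT) (fourier m) (fourier n)] at h2
  rw [fourierCoeff]
  simp only [fourier_neg, smul_eq_mul]
  rw [← h2]; congr 1; ext t; ring

lemma parseval_cont (F : C(AddCircle T, ℂ)) :
    ∑' m : ℤ, ‖fourierCoeff (⇑F) m‖ ^ 2 = ∫ t, ‖F t‖ ^ 2 ∂haarAddCircle := by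
  have h := tsum_sq_fourierCoeff (ContinuousMap.toLp 2 haarAddCircle ℂ F)
  simp only [fourierCoeff_toLp] at h
  rw [h]
  apply integral_congr_ae
  filter_upwards [ContinuousMap.coeFn_toLp (p := 2) (𝕜 := ℂ) haarAddCircle F] with t ht
  rw [ht]

end FourierHelp

section FourierHelp2
variable {T : ℝ} [hT : Fact (0 < T)]

lemma fourierCoeff_of_hasSum {d : ℕ → ℂ} (hd : Summable fun n => ‖d n‖) {F : C(AddCircle T, ℂ)}
    (hF : HasSum (fun n : ℕ => d n • fourier n) F) (m : ℤ) :
    fourierCoeff (⇑F) m = if 0 ≤ m then d m.toNat else 0 := by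
  have hpt : ∀ t : AddCircle T, HasSum (fun n : ℕ => d n * fourier n t) (F t) := by
    intro t
    have := (ContinuousMap.evalCLM ℂ t).hasSum hF
    simpa using this
  have key : ∀ t : AddCircle T, (fourier (-m) t : ℂ) • F t
      = ∑' n : ℕ, d n * (fourier (-m) t * fourier n t) := by
    intro t
    have h2 := (hpt t).mul_left (fourier (-m) t)
    rw [smul_eq_mul, ← h2.tsum_eq]
    congr 1; ext n; ring
  rw [fourierCoeff]
  calc (∫ t : AddCircle T, fourier (-m) t • F t ∂haarAddCircle)
      = ∫ t : AddCircle T, ∑' n : ℕ, d n * (fourier (-m) t * fourier n t) ∂haarAddCircle := by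
        exact integral_congr_ae (Filter.Eventually.of_forall key)
    _ = ∑' n : ℕ, ∫ t : AddCircle T, d n * (fourier (-m) t * fourier n t) ∂haarAddCircle := by
        apply integral_tsum
        · intro n
          exact (Continuous.mul (continuous_const)
            ((map_continuous (fourier (-m))).mul (map_continuous (fourier n)))).aestronglyMeasurable
        · have hb : ∀ n : ℕ, (∫⁻ t : AddCircle T, ‖d n * (fourier (-m) t * fourier n t)‖ₑ
              ∂haarAddCircle) = (‖d n‖₊ : ENNReal) := by
            intro n
            have : ∀ t : AddCircle T, (‖d n * (fourier (-m) t * fourier n t)‖ₑ : ENNReal)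
                = (‖d n‖₊ : ENNReal) := by
              intro t
              rw [enorm_eq_nnnorm]
              congr 1
              simp [nnnorm_mul, ← norm_toNNReal, Circle.norm_coe]
            simp only [this]
            simp [lintegral_const]
          simp only [hb]
          rw [ENNReal.tsum_coe_ne_top_iff_summable]
          exact NNReal.summable_coe.mp (by simpa using hd)
    _ = ∑' n : ℕ, d n * (if m = (n : ℤ) then 1 else 0) := by
        congr 1; ext n
        rw [integral_const_mul]
        congr 1
        have := fourierCoeff_fourier' (T := T) (n : ℤ) m
        rw [fourierCoeff] at this
        simpa [smul_eq_mul] using this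
    _ = if 0 ≤ m then d m.toNat else 0 := by
        rcases le_or_gt 0 m with hm | hm
        · rw [if_pos hm]
          rw [tsum_eq_single m.toNat]
          · rw [if_pos (by omega), mul_one]
          · intro n hn
            rw [if_neg (by omega), mul_zero]
        · rw [if_neg (not_le.mpr hm)]
          convert tsum_zero with n
          rw [if_neg (by omega), mul_zero]

lemma tsum_sq_of_ite (d : ℕ → ℂ) :
    ∑' m : ℤ, ‖(if 0 ≤ m then d m.toNat else 0 : ℂ)‖ ^ 2 = ∑' n : ℕ, ‖d n‖ ^ 2 := by
  have hinj : Function.Injective (fun n : ℕ => (n : ℤ)) := fun x y h => by simpa using h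
  have := Function.Injective.tsum_eq hinj
    (f := fun m : ℤ => ‖(if 0 ≤ m then d m.toNat else 0 : ℂ)‖ ^ 2) ?_
  · rw [← this]
    apply tsum_congr; intro n
    simp
  · intro m hm
    simp only [Function.mem_support] at hm
    by_contra hc
    apply hm
    rw [if_neg, norm_zero]
    · norm_num
    · intro h0
      exact hc ⟨m.toNat, by simp; omega⟩

end FourierHelp2

section Key

variable {a b : ℕ → ℂ} {h g : ℂ → ℂ} {k : ℝ}

/-- norm of the derivative coefficient -/
lemma norm_dcoeff (c : ℕ → ℂ) (ρ : ℝ) (hρ : 0 ≤ ρ) (n : ℕ) :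
    ‖((n : ℂ) + 1) * c (n + 1) * (ρ : ℂ) ^ n‖ = ((n : ℝ) + 1) * ‖c (n + 1)‖ * ρ ^ n := by
  rw [norm_mul, norm_mul, norm_pow]
  congr 2
  · rw [show ((n:ℂ) + 1) = ((n + 1 : ℕ) : ℂ) by push_cast; ring, Complex.norm_natCast]
    push_cast; ring
  · rw [Complex.norm_real, Real.norm_eq_abs, _root_.abs_of_nonneg hρ]

/-- Construction of the boundary function and its Parseval identity. -/
lemma parseval_sum (c : ℕ → ℂ) {f : ℂ → ℂ}
    (hc : ∀ z ∈ ball (0:ℂ) 1, HasSum (fun n : ℕ => c n * z ^ n) (f z))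
    {ρ : ℝ} (hρ0 : 0 < ρ) (hρ1 : ρ < 1) :
    haveI : Fact (0 < 2 * Real.pi) := ⟨by positivity⟩
    ∃ F : C(AddCircle (2 * Real.pi), ℂ),
      (∀ x : ℝ, F ↑x = deriv f ((ρ : ℂ) * Complex.exp (x * I))) ∧
      ∑' n : ℕ, (((n : ℝ) + 1) * ‖c (n + 1)‖ * ρ ^ n) ^ 2
        = ∫ t, ‖F t‖ ^ 2 ∂haarAddCircle := by
  haveI : Fact (0 < 2 * Real.pi) := ⟨by positivity⟩
  set d : ℕ → ℂ := fun n => ((n : ℂ) + 1) * c (n + 1) * (ρ : ℂ) ^ n with hd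
  have hnorm : ∀ n, ‖d n‖ = ((n : ℝ) + 1) * ‖c (n + 1)‖ * ρ ^ n :=
    norm_dcoeff c ρ hρ0.le
  have hdsum : Summable fun n => ‖d n‖ := by
    have := summable_coeff hc 1 1 (Or.inl rfl) hρ0.le hρ1
    refine this.congr fun n => ?_
    rw [hnorm n]; ring
  have hsumC : Summable (fun n : ℕ => d n • fourier (n : ℤ) (T := 2 * Real.pi)) := by
    apply Summable.of_norm
    refine hdsum.congr fun n => ?_
    rw [norm_smul, fourier_norm, mul_one]
  obtain ⟨F, hF⟩ := hsumC
  have hpt : ∀ x : ℝ, F ↑x = deriv f ((ρ : ℂ) * Complex.exp (x * I)) := by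
    intro x
    set z : ℂ := (ρ : ℂ) * Complex.exp (x * I) with hz
    have hzball : z ∈ ball (0:ℂ) 1 := by
      rw [mem_ball_zero_iff, hz, norm_mul]
      rw [show ‖Complex.exp ((x:ℂ) * I)‖ = 1 by
        exact Complex.norm_exp_ofReal_mul_I x]
      rw [Complex.norm_real, Real.norm_eq_abs, _root_.abs_of_nonneg hρ0.le, mul_one]
      exact hρ1
    have hz0 : z ≠ 0 := by
      rw [hz]
      apply mul_ne_zero
      · exact_mod_cast (Complex.ofReal_ne_zero).2 hρ0.ne'
      · exact Complex.exp_ne_zero _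
    have h1 : HasSum (fun n : ℕ => d n * fourier (n : ℤ) (↑x : AddCircle (2 * Real.pi))) (F ↑x) := by
      have := (ContinuousMap.evalCLM ℂ ((x : AddCircle (2 * Real.pi)))).hasSum hF
      simpa using this
    have h2 : ∀ n : ℕ, d n * fourier (n : ℤ) (↑x : AddCircle (2 * Real.pi))
        = ((n : ℂ) + 1) * c (n + 1) * z ^ n := by
      intro n
      rw [fourier_coe_apply]
      have hpi : (2 * Real.pi : ℂ) ≠ 0 := by
        simp [Real.pi_ne_zero]
      have harg : (2 * (Real.pi:ℂ) * I * (((n:ℤ)):ℂ) * (x : ℂ) / ((2 * Real.pi : ℝ) : ℂ))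
          = (n : ℂ) * ((x : ℂ) * I) := by
        push_cast
        field_simp
      rw [harg, Complex.exp_nat_mul, hz, mul_pow, hd]
      ring
    have h3 : HasSum (fun n : ℕ => ((n : ℂ) + 1) * c (n + 1) * z ^ n) (F ↑x) := by
      refine h1.congr_fun fun n => (h2 n).symm
    exact h3.unique (deriv_hasSum hc hzball hz0)
  refine ⟨F, hpt, ?_⟩
  have hcoeff := fourierCoeff_of_hasSum hdsum hF
  have := parseval_cont F
  rw [← this]
  have : ∀ m : ℤ, ‖fourierCoeff (⇑F) m‖ ^ 2 = ‖(if 0 ≤ m then d m.toNat else 0 : ℂ)‖ ^ 2 := by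
    intro m; rw [hcoeff m]
  rw [tsum_congr this, tsum_sq_of_ite d]
  exact tsum_congr fun n => by rw [hnorm n]

end Key

lemma key_ineq {a b : ℕ → ℂ} {h g : ℂ → ℂ} {k : ℝ} (hk0 : 0 ≤ k)
    (ha : ∀ z ∈ ball (0:ℂ) 1, HasSum (fun n : ℕ => a n * z ^ n) (h z))
    (hb : ∀ z ∈ ball (0:ℂ) 1, HasSum (fun n : ℕ => b n * z ^ n) (g z))
    (hder : ∀ z ∈ ball (0:ℂ) 1, ‖deriv g z‖ ≤ k * ‖deriv h z‖)
    {u : ℝ} (hu0 : 0 < u) (hu1 : u < 1) :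
    ∑' n : ℕ, (((n : ℝ) + 1) ^ 2 * ‖b (n + 1)‖ ^ 2 * u ^ n)
      ≤ k ^ 2 * ∑' n : ℕ, (((n : ℝ) + 1) ^ 2 * ‖a (n + 1)‖ ^ 2 * u ^ n) := by
  haveI : Fact (0 < 2 * Real.pi) := ⟨by positivity⟩
  set ρ : ℝ := Real.sqrt u with hρdef
  have hρ0 : 0 < ρ := Real.sqrt_pos.2 hu0
  have hρ1 : ρ < 1 := by
    rw [hρdef, show (1:ℝ) = Real.sqrt 1 by simp]
    exact Real.sqrt_lt_sqrt hu0.le hu1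
  have hρsq : ρ ^ 2 = u := Real.sq_sqrt hu0.le
  obtain ⟨Fg, hFgpt, hFgsum⟩ := parseval_sum b hb hρ0 hρ1
  obtain ⟨Fh, hFhpt, hFhsum⟩ := parseval_sum a ha hρ0 hρ1
  -- pointwise comparison
  have hcomp : ∀ t : AddCircle (2 * Real.pi), ‖Fg t‖ ^ 2 ≤ k ^ 2 * ‖Fh t‖ ^ 2 := by
    intro t
    induction t using QuotientAddGroup.induction_on with
    | H x =>
      rw [show ((x : AddCircle (2 * Real.pi))) = ((x : ℝ) : AddCircle (2 * Real.pi)) from rfl]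
      rw [hFgpt x, hFhpt x]
      set z : ℂ := (ρ : ℂ) * Complex.exp (x * I) with hz
      have hzball : z ∈ ball (0:ℂ) 1 := by
        rw [mem_ball_zero_iff, hz, norm_mul]
        rw [show ‖Complex.exp ((x:ℂ) * I)‖ = 1 by
          exact Complex.norm_exp_ofReal_mul_I x]
        rw [Complex.norm_real, Real.norm_eq_abs, _root_.abs_of_nonneg hρ0.le, mul_one]
        exact hρ1
      have := hder z hzball
      calc ‖deriv g z‖ ^ 2 ≤ (k * ‖deriv h z‖) ^ 2 :=
            pow_le_pow_left₀ (norm_nonneg _) this 2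
        _ = k ^ 2 * ‖deriv h z‖ ^ 2 := by ring
  -- integrals
  have hintg : Integrable (fun t => ‖Fg t‖ ^ 2) (haarAddCircle (T := 2 * Real.pi)) :=
    (Fg.continuous.norm.pow 2).integrable_of_hasCompactSupport
      (HasCompactSupport.of_compactSpace _)
  have hinth : Integrable (fun t => k ^ 2 * ‖Fh t‖ ^ 2) (haarAddCircle (T := 2 * Real.pi)) :=
    (continuous_const.mul (Fh.continuous.norm.pow 2)).integrable_of_hasCompactSupport
      (HasCompactSupport.of_compactSpace _)
  have hint : (∫ t, ‖Fg t‖ ^ 2 ∂haarAddCircle) ≤ ∫ t, k ^ 2 * ‖Fh t‖ ^ 2 ∂haarAddCircle :=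
    integral_mono hintg hinth hcomp
  rw [integral_const_mul] at hint
  rw [← hFgsum, ← hFhsum] at hint
  -- rewrite terms
  have hterm : ∀ (c : ℕ → ℂ) (n : ℕ), (((n : ℝ) + 1) * ‖c (n + 1)‖ * ρ ^ n) ^ 2
      = ((n : ℝ) + 1) ^ 2 * ‖c (n + 1)‖ ^ 2 * u ^ n := by
    intro c n
    rw [mul_pow, mul_pow, ← pow_mul, mul_comm n 2, pow_mul, hρsq]
  calc ∑' n : ℕ, (((n : ℝ) + 1) ^ 2 * ‖b (n + 1)‖ ^ 2 * u ^ n)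
      = ∑' n : ℕ, (((n : ℝ) + 1) * ‖b (n + 1)‖ * ρ ^ n) ^ 2 :=
        tsum_congr fun n => (hterm b n).symm
    _ ≤ k ^ 2 * ∑' n : ℕ, (((n : ℝ) + 1) * ‖a (n + 1)‖ * ρ ^ n) ^ 2 := hint
    _ = k ^ 2 * ∑' n : ℕ, (((n : ℝ) + 1) ^ 2 * ‖a (n + 1)‖ ^ 2 * u ^ n) := by
        congr 1; exact tsum_congr fun n => hterm a n

noncomputable def Phi (c : ℕ → ℂ) (u : ℝ) : ENNReal :=
  ∑' n : ℕ, ENNReal.ofReal (((n : ℝ) + 1) ^ 2 * ‖c (n + 1)‖ ^ 2 * u ^ n)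

noncomputable def Psi (c : ℕ → ℂ) (t : ℝ) : ENNReal :=
  ∑' n : ℕ, ENNReal.ofReal (((n : ℝ) + 1) * ‖c (n + 1)‖ ^ 2 * t ^ n)

lemma L1 (C : ℝ) (hC : 0 ≤ C) {t : ℝ} (ht : 0 ≤ t) (n : ℕ) :
    ∫⁻ u in Ioc (0:ℝ) t, ENNReal.ofReal (C * u ^ n)
      = ENNReal.ofReal (C * t ^ (n + 1) / ((n : ℝ) + 1)) := by
  have hint : IntegrableOn (fun u : ℝ => C * u ^ n) (Ioc (0:ℝ) t) volume :=
    (continuous_const.mul (continuous_pow n)).integrableOn_Ioc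
  have hpos : 0 ≤ᵐ[volume.restrict (Ioc (0:ℝ) t)] fun u : ℝ => C * u ^ n := by
    rw [EventuallyLE, ae_restrict_iff' measurableSet_Ioc]
    exact Eventually.of_forall fun u hu => mul_nonneg hC (pow_nonneg hu.1.le n)
  rw [← ofReal_integral_eq_lintegral_ofReal hint hpos]
  congr 1
  rw [← intervalIntegral.integral_of_le ht, intervalIntegral.integral_const_mul, integral_pow]
  rw [zero_pow (by omega), sub_zero]
  ring

lemma L3 (c : ℕ → ℂ) {r : ℝ} (hr : 0 ≤ r) :
    ∫⁻ t in Ioc (0:ℝ) r, Psi c t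
      = ∑' n : ℕ, ENNReal.ofReal (‖c (n + 1)‖ ^ 2 * r ^ (n + 1)) := by
  unfold Psi
  rw [lintegral_tsum fun n => Measurable.aemeasurable (by fun_prop)]
  congr 1
  ext n
  rw [L1 _ (by positivity) hr n]
  congr 1
  have : (n : ℝ) + 1 ≠ 0 := by positivity
  field_simp

lemma L2 (c : ℕ → ℂ) {t : ℝ} (ht : 0 < t) :
    (ENNReal.ofReal t)⁻¹ * ∫⁻ u in Ioc (0:ℝ) t, Phi c u = Psi c t := by
  unfold Phi Psi
  rw [lintegral_tsum fun n => Measurable.aemeasurable (by fun_prop)]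
  have hper : ∀ n : ℕ, (∫⁻ u in Ioc (0:ℝ) t,
        ENNReal.ofReal (((n : ℝ) + 1) ^ 2 * ‖c (n + 1)‖ ^ 2 * u ^ n))
      = ENNReal.ofReal t * ENNReal.ofReal (((n : ℝ) + 1) * ‖c (n + 1)‖ ^ 2 * t ^ n) := by
    intro n
    rw [L1 _ (by positivity) ht.le n]
    rw [← ENNReal.ofReal_mul ht.le]
    congr 1
    have h1 : (n : ℝ) + 1 ≠ 0 := by positivity
    field_simp
    ring
  simp only [hper]
  rw [ENNReal.tsum_mul_left, ← mul_assoc, ENNReal.inv_mul_cancel, one_mul]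
  · simpa using ht
  · exact ENNReal.ofReal_ne_top

lemma Phi_le {a b : ℕ → ℂ} {h g : ℂ → ℂ} {k : ℝ} (hk0 : 0 ≤ k)
    (ha : ∀ z ∈ ball (0:ℂ) 1, HasSum (fun n : ℕ => a n * z ^ n) (h z))
    (hb : ∀ z ∈ ball (0:ℂ) 1, HasSum (fun n : ℕ => b n * z ^ n) (g z))
    (hder : ∀ z ∈ ball (0:ℂ) 1, ‖deriv g z‖ ≤ k * ‖deriv h z‖)
    {u : ℝ} (hu0 : 0 < u) (hu1 : u < 1) :
    Phi b u ≤ ENNReal.ofReal (k ^ 2) * Phi a u := by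
  have hsb := summable_coeff hb 2 2 (Or.inr rfl) hu0.le hu1
  have hsa := summable_coeff ha 2 2 (Or.inr rfl) hu0.le hu1
  have hb' : Phi b u = ENNReal.ofReal (∑' n : ℕ, ((n : ℝ) + 1) ^ 2 * ‖b (n + 1)‖ ^ 2 * u ^ n) := by
    rw [ENNReal.ofReal_tsum_of_nonneg (fun n => by positivity) hsb]; rfl
  have ha' : Phi a u = ENNReal.ofReal (∑' n : ℕ, ((n : ℝ) + 1) ^ 2 * ‖a (n + 1)‖ ^ 2 * u ^ n) := by
    rw [ENNReal.ofReal_tsum_of_nonneg (fun n => by positivity) hsa]; rfl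
  rw [hb', ha', ← ENNReal.ofReal_mul (by positivity)]
  exact ENNReal.ofReal_le_ofReal (key_ineq hk0 ha hb hder hu0 hu1)

theorem bohr_stmt_0 (a b : ℕ → ℂ) (h g : ℂ → ℂ) (k : ℝ)
    (hk0 : 0 ≤ k) (hk1 : k ≤ 1)
    (hh : AnalyticOn ℂ h (ball (0:ℂ) 1))
    (hg : AnalyticOn ℂ g (ball (0:ℂ) 1))
    (ha : ∀ z ∈ ball (0:ℂ) 1, HasSum (fun n : ℕ => a n * z ^ n) (h z))
    (hb : ∀ z ∈ ball (0:ℂ) 1, HasSum (fun n : ℕ => b n * z ^ n) (g z))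
    (hder : ∀ z ∈ ball (0:ℂ) 1, ‖deriv g z‖ ≤ k * ‖deriv h z‖)
    (r : ℝ) (hr0 : 0 ≤ r) (hr1 : r < 1) :
    ∑' n : ℕ, ‖b (n + 1)‖^2 * r ^ (n + 1) ≤
      k ^ 2 * ∑' n : ℕ, ‖a (n + 1)‖^2 * r ^ (n + 1) := by
  rcases eq_or_lt_of_le hr0 with hr | hr
  · -- r = 0
    have hz : ∀ (c : ℕ → ℂ), ∑' n : ℕ, ‖c (n + 1)‖^2 * r ^ (n + 1) = 0 := by
      intro c
      convert tsum_zero with n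
      rw [← hr, zero_pow (by omega), mul_zero]
    rw [hz a, hz b, mul_zero]
  -- summability of both sides
  have hsummain : ∀ (c : ℕ → ℂ), (∀ z ∈ ball (0:ℂ) 1,
      HasSum (fun n : ℕ => c n * z ^ n) ((if True then h else g) z)) → True := fun _ _ => trivial
  have hsum : ∀ (c : ℕ → ℂ) (f : ℂ → ℂ), (∀ z ∈ ball (0:ℂ) 1,
        HasSum (fun n : ℕ => c n * z ^ n) (f z)) →
      Summable (fun n : ℕ => ‖c (n + 1)‖ ^ 2 * r ^ (n + 1)) := by
    intro c f hc
    have := (summable_coeff hc 2 0 (Or.inr rfl) hr0 hr1).mul_left r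
    refine this.congr fun n => ?_
    rw [pow_succ, pow_zero]
    ring
  have hsa := hsum a h ha
  have hsb := hsum b g hb
  -- ENNReal chain
  have hofR : ∀ (c : ℕ → ℂ), Summable (fun n : ℕ => ‖c (n + 1)‖ ^ 2 * r ^ (n + 1)) →
      ENNReal.ofReal (∑' n : ℕ, ‖c (n + 1)‖ ^ 2 * r ^ (n + 1))
        = ∑' n : ℕ, ENNReal.ofReal (‖c (n + 1)‖ ^ 2 * r ^ (n + 1)) := by
    intro c hc
    exact ENNReal.ofReal_tsum_of_nonneg (fun n => by positivity) hc
  have hchain : ∑' n : ℕ, ENNReal.ofReal (‖b (n + 1)‖ ^ 2 * r ^ (n + 1))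
      ≤ ENNReal.ofReal (k ^ 2) * ∑' n : ℕ, ENNReal.ofReal (‖a (n + 1)‖ ^ 2 * r ^ (n + 1)) := by
    rw [← L3 b hr0, ← L3 a hr0, ← lintegral_const_mul' _ _ ENNReal.ofReal_ne_top]
    apply setLIntegral_mono' measurableSet_Ioc
    intro t ht
    rw [← L2 b ht.1, ← L2 a ht.1]
    have hineq : ∫⁻ u in Ioc (0:ℝ) t, Phi b u
        ≤ ENNReal.ofReal (k ^ 2) * ∫⁻ u in Ioc (0:ℝ) t, Phi a u := by
      rw [← lintegral_const_mul' _ _ ENNReal.ofReal_ne_top]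
      apply setLIntegral_mono' measurableSet_Ioc
      intro u hu
      exact Phi_le hk0 ha hb hder hu.1 (lt_of_le_of_lt (hu.2.trans ht.2) hr1)
    calc (ENNReal.ofReal t)⁻¹ * ∫⁻ u in Ioc (0:ℝ) t, Phi b u
        ≤ (ENNReal.ofReal t)⁻¹ * (ENNReal.ofReal (k ^ 2) * ∫⁻ u in Ioc (0:ℝ) t, Phi a u) :=
          mul_le_mul_right hineq _
      _ = ENNReal.ofReal (k ^ 2) * ((ENNReal.ofReal t)⁻¹ * ∫⁻ u in Ioc (0:ℝ) t, Phi a u) := by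
          ring
  rw [← hofR b hsb, ← hofR a hsa, ← ENNReal.ofReal_mul (by positivity)] at hchain
  have := (ENNReal.ofReal_le_ofReal_iff (mul_nonneg (by positivity) (tsum_nonneg fun n => by positivity))).1 hchain
  simpa using this
end

section
/- For each k ∈ [0,1) and each a ∈ (0,1), taking h(z) = (a - z)/(1 - a z) and g = λ k h with |λ| = 1, the Bohr sum satisfies Σ |a_n| rⁿ + Σ |b_n| rⁿ = a + (1-a²)(1+k) r/(1 - a r), and this quantity is ≥ 1 if and only if r ≥ 1/(1 + k + (2+k)a). -/
open Metric Complex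

theorem bohr_stmt_4 (k a : ℝ) (hk0 : 0 ≤ k) (hk1 : k < 1)
    (ha0 : 0 < a) (ha1 : a < 1) (lam : ℂ) (hlam : ‖lam‖ = 1)
    (A B : ℕ → ℂ)
    (hA0 : A 0 = (a : ℂ))
    (hAn : ∀ n : ℕ, 1 ≤ n → A n = -((1 - a ^ 2 : ℝ) : ℂ) * (a : ℂ) ^ (n - 1))
    (hB : ∀ n : ℕ, B n = lam * (k : ℂ) * A n)
    (r : ℝ) (hr0 : 0 ≤ r) (hr1 : r < 1) :
    ((∑' n : ℕ, ‖A n‖ * r ^ n) +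
        ∑' n : ℕ, ‖B (n + 1)‖ * r ^ (n + 1)
      = a + (1 - a ^ 2) * (1 + k) * r / (1 - a * r)) ∧
    (1 ≤ (∑' n : ℕ, ‖A n‖ * r ^ n) +
        ∑' n : ℕ, ‖B (n + 1)‖ * r ^ (n + 1)
      ↔ 1 / (1 + k + (2 + k) * a) ≤ r) := by
  set c : ℝ := 1 - a ^ 2 with hc
  have hc0 : 0 ≤ c := by nlinarith
  have har0 : 0 ≤ a * r := mul_nonneg ha0.le hr0
  have har1 : a * r < 1 := by nlinarith
  have hD : 0 < 1 - a * r := by linarith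
  have habsA : ∀ n : ℕ, ‖A (n + 1)‖ = c * a ^ n := by
    intro n
    rw [hAn (n + 1) (by omega)]
    have : (-((c : ℝ) : ℂ) * (a : ℂ) ^ (n + 1 - 1)) = ((-c * a ^ n : ℝ) : ℂ) := by
      push_cast; ring
    rw [this, Complex.norm_real, Real.norm_eq_abs, abs_mul, abs_neg, _root_.abs_of_nonneg hc0, _root_.abs_pow,
      _root_.abs_of_nonneg ha0.le]
  have hfA : (fun n : ℕ => ‖A (n + 1)‖ * r ^ (n + 1))
      = fun n : ℕ => (c * r) * (a * r) ^ n := by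
    funext n
    rw [habsA n, mul_pow]
    ring
  have hfB : (fun n : ℕ => ‖B (n + 1)‖ * r ^ (n + 1))
      = fun n : ℕ => (k * c * r) * (a * r) ^ n := by
    funext n
    rw [hB, norm_mul, norm_mul, hlam, habsA n, Complex.norm_real, Real.norm_eq_abs,
      _root_.abs_of_nonneg hk0, mul_pow]
    ring
  have hgeo : Summable (fun n : ℕ => (a * r) ^ n) :=
    summable_geometric_of_lt_one har0 har1
  have hgeosum : ∑' n : ℕ, (a * r) ^ n = (1 - a * r)⁻¹ :=
    tsum_geometric_of_lt_one har0 har1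
  have hsumA : Summable (fun n : ℕ => ‖A n‖ * r ^ n) := by
    rw [← summable_nat_add_iff 1, hfA]
    exact hgeo.mul_left _
  have htA : ∑' n : ℕ, ‖A n‖ * r ^ n = a + c * r / (1 - a * r) := by
    rw [hsumA.tsum_eq_zero_add, hfA, tsum_mul_left, hgeosum, hA0,
      Complex.norm_real, Real.norm_eq_abs, _root_.abs_of_nonneg ha0.le]
    simp [div_eq_mul_inv]
  have htB : ∑' n : ℕ, ‖B (n + 1)‖ * r ^ (n + 1)
      = k * c * r / (1 - a * r) := by
    rw [hfB, tsum_mul_left, hgeosum, div_eq_mul_inv]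
  have heq : (∑' n : ℕ, ‖A n‖ * r ^ n) +
      ∑' n : ℕ, ‖B (n + 1)‖ * r ^ (n + 1)
      = a + c * (1 + k) * r / (1 - a * r) := by
    rw [htA, htB]
    field_simp
    ring
  refine ⟨heq, ?_⟩
  rw [heq]
  have hT : 0 < 1 + k + (2 + k) * a := by nlinarith
  have key : a + c * (1 + k) * r / (1 - a * r)
      = (a * (1 - a * r) + c * (1 + k) * r) / (1 - a * r) := by
    field_simp
  rw [key, le_div_iff₀ hD, one_mul, div_le_iff₀ hT]
  simp only [hc]
  have ha1' : 0 < 1 - a := by linarith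
  constructor
  · intro h
    have h1 : (1 - a) * (1 - a * r) ≤ (1 - a) * ((1 + a) * (1 + k) * r) := by nlinarith
    have h2 : (1 - a * r) ≤ (1 + a) * (1 + k) * r :=
      (mul_le_mul_iff_right₀ ha1').mp h1
    nlinarith
  · intro h
    have h2 : (1 - a * r) ≤ (1 + a) * (1 + k) * r := by nlinarith
    have h1 := (mul_le_mul_iff_right₀ ha1').mpr h2
    nlinarith
end

section
/- Let p ≥ 1 and r^p ≤ 1/3. If h(z) = Σ_{n≥0} a_{pn+1} z^{pn+1} is analytic with |h| ≤ 1 on the unit disk, then Σ_{n≥0} |a_{pn+1}| r^{pn+1} ≤ max{2r^{p+1}, r}. -/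
open Metric Complex MeasureTheory intervalIntegral Real

private lemma orth_int (k : ℤ) (hk : k ≠ 0) :
    (∫ θ : ℝ in (0:ℝ)..(2*π), Complex.exp (k * θ * I)) = 0 := by
  have h1 : ∀ θ : ℝ, Complex.exp ((k:ℂ) * θ * I) = Complex.exp (((k:ℂ) * I) * θ) := by
    intro θ; ring_nf
  rw [intervalIntegral.integral_congr (g := fun θ : ℝ => Complex.exp ((k * I) * θ)) (fun θ _ => h1 θ)]
  rw [integral_exp_mul_complex (by simp [hk, Complex.I_ne_zero])]
  have h2 : Complex.exp ((k:ℂ) * I * (2*π)) = 1 := by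
    rw [show (k:ℂ) * I * (2*(π:ℝ)) = k * (2*π*I) by push_cast; ring]
    exact Complex.exp_int_mul_two_pi_mul_I k
  simp [h2]

private lemma orth_int0 : (∫ _θ : ℝ in (0:ℝ)..(2*π), (1:ℂ)) = 2*π := by
  simp

private lemma summ (p : ℕ) (hp : 1 ≤ p) (c : ℕ → ℂ) (h : ℂ → ℂ)
    (hc : ∀ z ∈ ball (0:ℂ) 1, HasSum (fun n : ℕ => c n * z ^ (p * n + 1)) (h z))
    {s : ℝ} (hs0 : 0 ≤ s) (hs1 : s < 1) :
    Summable (fun k : ℕ => ‖c k‖ * s ^ (p*k+1)) := by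
  set s' : ℝ := (1+s)/2 with hs'
  have hss' : s < s' := by rw [hs']; linarith
  have hs'0 : 0 < s' := by rw [hs']; linarith
  have hs'1 : s' < 1 := by rw [hs']; linarith
  have hz : (s' : ℂ) ∈ ball (0:ℂ) 1 := by
    simp [Complex.norm_real, Real.norm_eq_abs, abs_of_pos hs'0, hs'1]
  have hsum := (hc _ hz).summable
  have hbdd : BddAbove (Set.range fun k => ‖c k‖ * s' ^ (p*k+1)) := by
    have ht : Filter.Tendsto (fun k => ‖c k * (s':ℂ) ^ (p*k+1)‖) Filter.atTop (nhds 0) := by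
      simpa using (hsum.tendsto_atTop_zero.norm)
    have := ht.bddAbove_range
    convert this using 2 with k
    · rfl
    simp [norm_mul, norm_pow, Complex.norm_real, Real.norm_eq_abs, abs_of_pos hs'0]
  obtain ⟨C, hC⟩ := hbdd
  have hCnn : ∀ k, ‖c k‖ * s' ^ (p*k+1) ≤ C := fun k => hC ⟨k, rfl⟩
  have hq0 : 0 ≤ s / s' := div_nonneg hs0 hs'0.le
  have hq1 : s / s' < 1 := (div_lt_one hs'0).2 hss'
  refine Summable.of_nonneg_of_le (fun k => by positivity) (fun k => ?_)
    ((summable_geometric_of_lt_one hq0 hq1).mul_left C)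
  have h1 : ‖c k‖ * s ^ (p*k+1)
      = (‖c k‖ * s' ^ (p*k+1)) * (s/s')^(p*k+1) := by
    rw [div_pow s s', mul_assoc, mul_div_assoc', mul_div_cancel_left₀ _ (pow_ne_zero _ hs'0.ne')]
  rw [h1]
  have hk1 : k ≤ p*k+1 := Nat.le_succ_of_le (Nat.le_mul_of_pos_left k hp)
  have h2 : (s/s')^(p*k+1) ≤ (s/s')^k := pow_le_pow_of_le_one hq0 hq1.le hk1
  exact mul_le_mul (hCnn k) h2 (by positivity) (le_trans (by positivity) (hCnn k))


private lemma coeff_core (p : ℕ) (hp : 1 ≤ p) (c : ℕ → ℂ) (h : ℂ → ℂ)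
    (hh : AnalyticOn ℂ h (ball (0:ℂ) 1))
    (hc : ∀ z ∈ ball (0:ℂ) 1, HasSum (fun n : ℕ => c n * z ^ (p * n + 1)) (h z))
    {ρ : ℝ} (hρ0 : 0 < ρ) (hρ1 : ρ < 1) (m : ℤ) :
    HasSum (fun k : ℕ => c k * (ρ:ℂ)^(p*k+1) *
        (∫ θ : ℝ in (0:ℝ)..(2*π), Complex.exp (((((p*k+1 : ℕ) : ℤ) - m : ℤ) : ℂ) * θ * I)))
      (∫ θ : ℝ in (0:ℝ)..(2*π), h (ρ * Complex.exp (θ * I)) * Complex.exp (-m * θ * I)) := by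
  have hsummab := summ p hp c h hc hρ0.le hρ1
  set F : ℕ → ℝ → ℂ := fun k θ => c k * (ρ:ℂ)^(p*k+1) * Complex.exp (((((p*k+1 : ℕ) : ℤ) - m : ℤ) : ℂ) * θ * I) with hF
  have hFcont : ∀ k, Continuous (F k) := by
    intro k
    apply Continuous.mul continuous_const
    exact Complex.continuous_exp.comp (by continuity)
  have hFint : ∀ k, IntegrableOn (F k) (Set.Ioc (0:ℝ) (2*π)) volume := fun k =>
    ((hFcont k).integrableOn_Ioc)
  have hFnorm : ∀ k (θ : ℝ), ‖F k θ‖ = ‖c k‖ * ρ ^ (p*k+1) := by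
    intro k θ
    have : ((((p*k+1 : ℕ) : ℤ) - m : ℤ) : ℂ) * θ * I = (((((p*k+1 : ℕ) : ℤ) - m : ℤ) * θ : ℝ) : ℂ) * I := by
      push_cast; ring
    rw [hF]
    simp only [norm_mul, map_mul, norm_pow, Complex.norm_real, Real.norm_eq_abs,
      abs_of_pos hρ0, this, Complex.norm_exp_ofReal_mul_I, mul_one]
  have hFsumnorm : Summable fun k => ∫ θ in Set.Ioc (0:ℝ) (2*π), ‖F k θ‖ := by
    have : ∀ k, (∫ θ in Set.Ioc (0:ℝ) (2*π), ‖F k θ‖) = (‖c k‖ * ρ ^ (p*k+1)) * (2*π) := by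
      intro k
      simp only [hFnorm]
      rw [MeasureTheory.setIntegral_const]
      simp [Real.volume_Ioc, smul_eq_mul, Real.pi_pos.le]
      ring
    simp only [this]
    exact hsummab.mul_right _
  have key := MeasureTheory.hasSum_integral_of_summable_integral_norm hFint hFsumnorm
  have h2π : (0:ℝ) ≤ 2*π := by positivity
  have htsum : ∀ θ : ℝ, (∑' k, F k θ) = h (ρ * Complex.exp (θ * I)) * Complex.exp (-m * θ * I) := by
    intro θ
    have hzball : (ρ : ℂ) * Complex.exp (θ * I) ∈ ball (0:ℂ) 1 := by
      simp only [mem_ball, dist_zero_right, norm_mul, Complex.norm_real, Real.norm_eq_abs,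
        abs_of_pos hρ0]
      rw [Complex.norm_exp_ofReal_mul_I]
      simpa using hρ1
    have hs := (hc _ hzball).mul_right (Complex.exp (-m * θ * I))
    have heq : (fun k => c k * ((ρ:ℂ) * Complex.exp (θ*I)) ^ (p*k+1) * Complex.exp (-m * θ * I)) = fun k => F k θ := by
      funext k
      rw [hF, mul_pow, ← Complex.exp_nat_mul, ← mul_assoc, mul_assoc _ (Complex.exp _) _,
        ← Complex.exp_add]
      congr 2
      push_cast
      ring
    rw [heq] at hs
    exact hs.tsum_eq
  have hconv : (∫ θ in Set.Ioc (0:ℝ) (2*π), (∑' k, F k θ)) =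
      ∫ θ : ℝ in (0:ℝ)..(2*π), h (ρ * Complex.exp (θ * I)) * Complex.exp (-m * θ * I) := by
    rw [intervalIntegral.integral_of_le h2π]
    exact MeasureTheory.setIntegral_congr_fun measurableSet_Ioc (fun θ _ => htsum θ)
  rw [hconv] at key
  convert key using 2 with k
  · rfl
  rw [intervalIntegral.integral_of_le h2π, hF]
  rw [MeasureTheory.integral_const_mul]

private lemma coeffG_zero (p : ℕ) (hp : 1 ≤ p) (c : ℕ → ℂ) (h : ℂ → ℂ)
    (hh : AnalyticOn ℂ h (ball (0:ℂ) 1))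
    (hc : ∀ z ∈ ball (0:ℂ) 1, HasSum (fun n : ℕ => c n * z ^ (p * n + 1)) (h z))
    {ρ : ℝ} (hρ0 : 0 < ρ) (hρ1 : ρ < 1) (m : ℤ) (hm : m ≤ 0) :
    (∫ θ : ℝ in (0:ℝ)..(2*π), h (ρ * Complex.exp (θ * I)) * Complex.exp (-m * θ * I)) = 0 := by
  have core := coeff_core p hp c h hh hc hρ0 hρ1 m
  have hz : ∀ k : ℕ, (∫ θ : ℝ in (0:ℝ)..(2*π),
      Complex.exp (((((p*k+1 : ℕ) : ℤ) - m : ℤ) : ℂ) * θ * I)) = 0 := by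
    intro k
    exact orth_int _ (by omega)
  simp only [hz, mul_zero] at core
  exact core.unique hasSum_zero

private lemma coeffG_pos (p : ℕ) (hp : 1 ≤ p) (c : ℕ → ℂ) (h : ℂ → ℂ)
    (hh : AnalyticOn ℂ h (ball (0:ℂ) 1))
    (hc : ∀ z ∈ ball (0:ℂ) 1, HasSum (fun n : ℕ => c n * z ^ (p * n + 1)) (h z))
    {ρ : ℝ} (hρ0 : 0 < ρ) (hρ1 : ρ < 1) (k₀ : ℕ) :
    (∫ θ : ℝ in (0:ℝ)..(2*π), h (ρ * Complex.exp (θ * I)) *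
      Complex.exp (-((p*k₀+1 : ℕ) : ℤ) * θ * I)) = c k₀ * (ρ:ℂ)^(p*k₀+1) * (2*π) := by
  have core := coeff_core p hp c h hh hc hρ0 hρ1 ((p*k₀+1 : ℕ) : ℤ)
  have hz : (fun k : ℕ => c k * (ρ:ℂ)^(p*k+1) * (∫ θ : ℝ in (0:ℝ)..(2*π),
      Complex.exp (((((p*k+1 : ℕ) : ℤ) - ((p*k₀+1 : ℕ) : ℤ) : ℤ) : ℂ) * θ * I)))
      = fun k : ℕ => if k = k₀ then c k₀ * (ρ:ℂ)^(p*k₀+1) * (2*π) else 0 := by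
    funext k
    by_cases hk : k = k₀
    · subst hk
      simp only [sub_self, if_true]
      norm_num
    · rw [if_neg hk, mul_eq_zero]
      right
      have hpk : p*k ≠ p*k₀ := fun hcon => hk (Nat.eq_of_mul_eq_mul_left (by omega) hcon)
      have hne : ((p*k+1 : ℕ) : ℤ) - ((p*k₀+1:ℕ) : ℤ) ≠ 0 := by push_cast; omega
      exact orth_int _ hne
  rw [hz] at core
  exact core.unique (hasSum_ite_eq k₀ _)

private lemma mu_align (z1 z2 : ℂ) (s t : ℝ) (hs : 0 ≤ s) (ht : 0 ≤ t) :
    ∃ μ : ℂ, ‖μ‖ = 1 ∧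
      ‖↑s * z1 + μ * (↑t * z2)‖ = s * ‖z1‖ + t * ‖z2‖ := by
  by_cases h1 : z1 = 0
  · refine ⟨1, by simp, ?_⟩
    simp [h1, map_mul, Complex.norm_real, Real.norm_eq_abs, _root_.abs_of_nonneg ht, _root_.abs_of_nonneg hs, mul_assoc]
  by_cases h2 : z2 = 0
  · refine ⟨1, by simp, ?_⟩
    simp [h2, map_mul, Complex.norm_real, Real.norm_eq_abs, _root_.abs_of_nonneg hs, mul_assoc]
  have ha1 : ‖z1‖ ≠ 0 := by simpa using h1
  have ha2 : ‖z2‖ ≠ 0 := by simpa using h2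
  refine ⟨(z1 * (‖z2‖ : ℂ)) / ((‖z1‖ : ℂ) * z2), ?_, ?_⟩
  · rw [norm_div, norm_mul, norm_mul]
    simp only [Complex.norm_real, Real.norm_eq_abs, _root_.abs_of_nonneg (norm_nonneg _)]
    rw [div_eq_one_iff_eq (by positivity)]
  · have hz1 : ((‖z1‖ : ℝ) : ℂ) ≠ 0 := by simpa using h1
    have hz2c : ((‖z2‖ : ℝ) : ℂ) ≠ 0 := by simpa using h2
    have key : ↑s * z1 + (z1 * (‖z2‖ : ℂ)) / ((‖z1‖ : ℂ) * z2) * (↑t * z2)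
        = z1 * ((s + t * ‖z2‖ / ‖z1‖ : ℝ) : ℂ) := by
      push_cast
      field_simp
    rw [key, norm_mul, Complex.norm_real, Real.norm_eq_abs, _root_.abs_of_nonneg (by positivity)]
    field_simp

private lemma isplit (f g k : ℝ → ℂ) (a b : ℂ) (hf : Continuous f) (hg : Continuous g)
    (hk : Continuous k) :
    (∫ θ : ℝ in (0:ℝ)..(2*π), (f θ + a * g θ + b * k θ)) =
      (∫ θ : ℝ in (0:ℝ)..(2*π), f θ) + a * (∫ θ : ℝ in (0:ℝ)..(2*π), g θ)
        + b * (∫ θ : ℝ in (0:ℝ)..(2*π), k θ) := by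
  have hfi : IntervalIntegrable f volume 0 (2*π) := hf.intervalIntegrable _ _
  have hgi : IntervalIntegrable (fun θ => a * g θ) volume 0 (2*π) :=
    (continuous_const.mul hg).intervalIntegrable _ _
  have hki : IntervalIntegrable (fun θ => b * k θ) volume 0 (2*π) :=
    (continuous_const.mul hk).intervalIntegrable _ _
  rw [intervalIntegral.integral_add (hfi.add hgi) hki, intervalIntegral.integral_add hfi hgi,
    intervalIntegral.integral_const_mul, intervalIntegral.integral_const_mul]
private lemma iconj (f : ℝ → ℂ) :
    (∫ θ : ℝ in (0:ℝ)..(2*π), (starRingEnd ℂ) (f θ))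
      = (starRingEnd ℂ) (∫ θ : ℝ in (0:ℝ)..(2*π), f θ) := by
  rw [intervalIntegral.integral_of_le (by positivity),
    intervalIntegral.integral_of_le (by positivity), integral_conj]

private lemma key_ineq_s10 (p : ℕ) (hp : 1 ≤ p) (c : ℕ → ℂ) (h : ℂ → ℂ)
    (hh : AnalyticOn ℂ h (ball (0:ℂ) 1))
    (hc : ∀ z ∈ ball (0:ℂ) 1, HasSum (fun n : ℕ => c n * z ^ (p * n + 1)) (h z))
    (hb : ∀ z ∈ ball (0:ℂ) 1, ‖h z‖ ≤ 1)
    {ρ : ℝ} (hρ0 : 0 < ρ) (hρ1 : ρ < 1) (n : ℕ) (hn : 1 ≤ n)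
    {x y : ℝ} (hx : 0 ≤ x) (hy : 0 ≤ y) :
    x^2 * (‖c 0‖ * ρ)^2
      + (x * (‖c n‖ * ρ^(p*n+1)) + y * (‖c 0‖ * ρ))^2 ≤ x^2 + y^2 := by
  have hπ := Real.pi_pos
  have h2π : (0:ℝ) ≤ 2*π := by positivity
  have hpn1 : 1 ≤ p*n := Nat.one_le_iff_ne_zero.mpr (Nat.mul_ne_zero (by omega) (by omega))
  obtain ⟨μ, hμ1, hμβ⟩ := mu_align (c n * (ρ:ℂ)^(p*n+1)) (c 0 * (ρ:ℂ)) x y hx hy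
  set E : ℂ → ℝ → ℂ := fun a θ => Complex.exp (a * θ * I) with hE
  set u : ℝ → ℂ := fun θ => h (↑ρ * Complex.exp (↑θ * I)) with hu
  set Nc : ℂ := ((p*n : ℕ) : ℂ) with hNc
  set Mc : ℂ := ((p*n+1 : ℕ) : ℂ) with hMc
  set φ : ℝ → ℂ := fun θ => ↑x + (μ * ↑y) * E Nc θ with hφ
  set α : ℂ := ↑x * (c 0 * ↑ρ) with hα
  set β : ℂ := ↑x * (c n * (ρ:ℂ)^(p*n+1)) + μ * (↑y * (c 0 * ↑ρ)) with hβ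
  set w : ℝ → ℂ := fun θ => u θ * φ θ - α * E 1 θ - β * E Mc θ with hw
  -- basic continuity
  have hEcont : ∀ a : ℂ, Continuous (E a) := fun a =>
    Complex.continuous_exp.comp ((continuous_const.mul Complex.continuous_ofReal).mul
      continuous_const)
  have hmem : ∀ θ : ℝ, (↑ρ * Complex.exp (↑θ * I)) ∈ ball (0:ℂ) 1 := by
    intro θ
    simp only [mem_ball, dist_zero_right, norm_mul, Complex.norm_real, Real.norm_eq_abs,
      _root_.abs_of_pos hρ0, Complex.norm_exp_ofReal_mul_I, mul_one]
    exact hρ1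
  have hucont : Continuous u := by
    rw [hu]
    apply hh.continuousOn.comp_continuous
    · exact continuous_const.mul (Complex.continuous_exp.comp
        (Complex.continuous_ofReal.mul continuous_const))
    · exact hmem
  have hφcont : Continuous φ := continuous_const.add (continuous_const.mul (hEcont Nc))
  have hwcont : Continuous w := ((hucont.mul hφcont).sub (continuous_const.mul (hEcont 1))).sub
    (continuous_const.mul (hEcont Mc))
  have hu1 : ∀ θ : ℝ, ‖u θ‖ ≤ 1 := fun θ => hb _ (hmem θ)
  -- merge lemma
  have hEmul : ∀ (a b : ℂ) (θ : ℝ), E a θ * E b θ = E (a+b) θ := by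
    intro a b θ
    simp only [hE]
    rw [← Complex.exp_add]
    ring_nf
  have hEconj : ∀ (a : ℂ), (starRingEnd ℂ) a = a →
      ∀ θ : ℝ, (starRingEnd ℂ) (E a θ) = E (-a) θ := by
    intro a ha θ
    simp only [hE]
    rw [← Complex.exp_conj]
    congr 1
    rw [map_mul, map_mul, ha, Complex.conj_I, Complex.conj_ofReal]
    ring
  -- integral values
  have hGz : ∀ m : ℤ, 0 ≤ m →
      (∫ θ : ℝ in (0:ℝ)..(2*π), u θ * E ((m:ℂ)) θ) = 0 := by
    intro m hm
    have h0 := coeffG_zero p hp c h hh hc hρ0 hρ1 (-m) (by omega)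
    rw [show -(((-m : ℤ)):ℂ) = ((m:ℂ)) by push_cast; ring] at h0
    simpa only [hu, hE] using h0
  have hGp0 : (∫ θ : ℝ in (0:ℝ)..(2*π), u θ * E (-1) θ) = c 0 * ↑ρ * (2*π) := by
    have h0 := coeffG_pos p hp c h hh hc hρ0 hρ1 0
    rw [show (-((p*0+1 : ℕ) : ℤ) : ℂ) = (-1 : ℂ) by norm_num] at h0
    rw [show p*0+1 = 1 by ring] at h0
    simpa only [hu, hE, pow_one] using h0
  have hGpn : (∫ θ : ℝ in (0:ℝ)..(2*π), u θ * E (-Mc) θ) = c n * (ρ:ℂ)^(p*n+1) * (2*π) := by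
    have h0 := coeffG_pos p hp c h hh hc hρ0 hρ1 n
    rw [show (-((p*n+1 : ℕ) : ℤ) : ℂ) = -Mc by rw [hMc]; push_cast; ring] at h0
    simpa only [hu, hE] using h0
  have hE2π : (∫ θ : ℝ in (0:ℝ)..(2*π), E 0 θ) = ((2*π : ℝ) : ℂ) := by
    simp only [hE, zero_mul, Complex.exp_zero]
    rw [intervalIntegral.integral_const, Complex.real_smul]
    push_cast
    ring
  have hEzero : ∀ m : ℤ, m ≠ 0 → (∫ θ : ℝ in (0:ℝ)..(2*π), E ((m:ℂ)) θ) = 0 := by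
    intro m hm
    simpa only [hE] using orth_int m hm
  -- first moment computations
  have S1 : (∫ θ : ℝ in (0:ℝ)..(2*π), u θ * φ θ * E (-1) θ) = 2*π*α := by
    have hpt : ∀ θ : ℝ, u θ * φ θ * E (-1) θ
        = (0:ℂ) + ↑x * (u θ * E (-1) θ) + (μ*↑y) * (u θ * E (Nc + (-1)) θ) := by
      intro θ
      rw [← hEmul Nc (-1) θ, hφ]
      ring
    rw [intervalIntegral.integral_congr (fun θ _ => hpt θ)]
    rw [isplit (fun _ => (0:ℂ)) (fun θ => u θ * E (-1) θ) (fun θ => u θ * E (Nc + (-1)) θ)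
      (↑x) (μ*↑y) continuous_const (hucont.mul (hEcont _)) (hucont.mul (hEcont _))]
    rw [intervalIntegral.integral_zero, hGp0]
    rw [show Nc + (-1) = ((((p*n : ℕ) : ℤ) - 1 : ℤ) : ℂ) by rw [hNc]; push_cast; ring]
    rw [hGz (((p*n : ℕ) : ℤ) - 1) (by omega)]
    rw [hα]
    push_cast
    ring
  have SM : (∫ θ : ℝ in (0:ℝ)..(2*π), u θ * φ θ * E (-Mc) θ) = 2*π*β := by
    have hpt : ∀ θ : ℝ, u θ * φ θ * E (-Mc) θ
        = (0:ℂ) + ↑x * (u θ * E (-Mc) θ) + (μ*↑y) * (u θ * E (-1) θ) := by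
      intro θ
      have : Nc + (-Mc) = -1 := by rw [hNc, hMc]; push_cast; ring
      rw [show u θ * E (-1) θ = u θ * E (Nc + (-Mc)) θ by rw [this], ← hEmul Nc (-Mc) θ, hφ]
      ring
    rw [intervalIntegral.integral_congr (fun θ _ => hpt θ)]
    rw [isplit (fun _ => (0:ℂ)) (fun θ => u θ * E (-Mc) θ) (fun θ => u θ * E (-1) θ)
      (↑x) (μ*↑y) continuous_const (hucont.mul (hEcont _)) (hucont.mul (hEcont _))]
    rw [intervalIntegral.integral_zero, hGp0, hGpn, hβ]
    push_cast
    ring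
  -- w against E(-1), E(-Mc)
  have W1 : (∫ θ : ℝ in (0:ℝ)..(2*π), w θ * E (-1) θ) = 0 := by
    have hpt : ∀ θ : ℝ, w θ * E (-1) θ
        = u θ * φ θ * E (-1) θ + (-α) * E 0 θ + (-β) * E (Mc + (-1)) θ := by
      intro θ
      rw [← hEmul Mc (-1) θ, show E 0 θ = E (1 + (-1)) θ by norm_num, ← hEmul 1 (-1) θ, hw]
      ring
    rw [intervalIntegral.integral_congr (fun θ _ => hpt θ)]
    rw [isplit (fun θ => u θ * φ θ * E (-1) θ) (E 0) (fun θ => E (Mc + (-1)) θ)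
      (-α) (-β) ((hucont.mul hφcont).mul (hEcont _)) (hEcont _) (hEcont _)]
    rw [S1, hE2π]
    rw [show Mc + (-1) = (((p*n : ℕ) : ℤ) : ℂ) by rw [hMc]; push_cast; ring]
    rw [hEzero ((p*n : ℕ) : ℤ) (by omega)]
    push_cast
    ring
  have WM : (∫ θ : ℝ in (0:ℝ)..(2*π), w θ * E (-Mc) θ) = 0 := by
    have hpt : ∀ θ : ℝ, w θ * E (-Mc) θ
        = u θ * φ θ * E (-Mc) θ + (-α) * E (1 + (-Mc)) θ + (-β) * E 0 θ := by
      intro θ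
      rw [← hEmul 1 (-Mc) θ, show E 0 θ = E (Mc + (-Mc)) θ by norm_num, ← hEmul Mc (-Mc) θ, hw]
      ring
    rw [intervalIntegral.integral_congr (fun θ _ => hpt θ)]
    rw [isplit (fun θ => u θ * φ θ * E (-Mc) θ) (fun θ => E (1 + (-Mc)) θ) (E 0)
      (-α) (-β) ((hucont.mul hφcont).mul (hEcont _)) (hEcont _) (hEcont _)]
    rw [SM, hE2π]
    rw [show (1 : ℂ) + (-Mc) = (((-(p*n : ℕ) : ℤ)) : ℂ) by rw [hMc]; push_cast; ring]
    rw [hEzero (-(p*n : ℕ) : ℤ) (by omega)]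
    push_cast
    ring
  
  -- conjugation facts
  have hconjMc : (starRingEnd ℂ) Mc = Mc := by rw [hMc]; exact Complex.conj_natCast _
  have hconjNc : (starRingEnd ℂ) Nc = Nc := by rw [hNc]; exact Complex.conj_natCast _
  have hconj1 : (starRingEnd ℂ) (1:ℂ) = 1 := map_one _
  have hμns : μ * (starRingEnd ℂ) μ = 1 := by
    rw [Complex.mul_conj, Complex.normSq_eq_norm_sq, hμ1]
    norm_num
  have hE0 : ∀ θ : ℝ, E 0 θ = 1 := by intro θ; simp [hE]
  have hconjE1 : ∀ θ : ℝ, (starRingEnd ℂ) (E 1 θ) = E (-1) θ := hEconj 1 hconj1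
  have hconjEM : ∀ θ : ℝ, (starRingEnd ℂ) (E Mc θ) = E (-Mc) θ := hEconj Mc hconjMc
  have hconjEN : ∀ θ : ℝ, (starRingEnd ℂ) (E Nc θ) = E (-Nc) θ := hEconj Nc hconjNc
  have hccont : Continuous (starRingEnd ℂ) := Complex.continuous_conj
  -- Step A3/A4 : ∫ E * conj(uφ)
  have A3 : (∫ θ : ℝ in (0:ℝ)..(2*π), E 1 θ * (starRingEnd ℂ) (u θ * φ θ))
      = (starRingEnd ℂ) (2*π*α) := by
    have hpt : ∀ θ : ℝ, E 1 θ * (starRingEnd ℂ) (u θ * φ θ)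
        = (starRingEnd ℂ) (u θ * φ θ * E (-1) θ) := by
      intro θ
      rw [map_mul (starRingEnd ℂ) (u θ * φ θ) (E (-1) θ), hEconj (-1) (by simp) θ, neg_neg]
      ring
    rw [intervalIntegral.integral_congr (fun θ _ => hpt θ), iconj, S1]
  have A4 : (∫ θ : ℝ in (0:ℝ)..(2*π), E Mc θ * (starRingEnd ℂ) (u θ * φ θ))
      = (starRingEnd ℂ) (2*π*β) := by
    have hpt : ∀ θ : ℝ, E Mc θ * (starRingEnd ℂ) (u θ * φ θ)
        = (starRingEnd ℂ) (u θ * φ θ * E (-Mc) θ) := by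
      intro θ
      rw [map_mul (starRingEnd ℂ) (u θ * φ θ) (E (-Mc) θ),
        hEconj (-Mc) (by rw [map_neg, hconjMc]) θ, neg_neg]
      ring
    rw [intervalIntegral.integral_congr (fun θ _ => hpt θ), iconj, SM]
  -- Step A2 : ∫ w * conj(uφ)
  have A2 : (∫ θ : ℝ in (0:ℝ)..(2*π), w θ * (starRingEnd ℂ) (u θ * φ θ))
      = (∫ θ : ℝ in (0:ℝ)..(2*π), (u θ * φ θ) * (starRingEnd ℂ) (u θ * φ θ))
        + (-α) * (starRingEnd ℂ) (2*π*α) + (-β) * (starRingEnd ℂ) (2*π*β) := by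
    have hpt : ∀ θ : ℝ, w θ * (starRingEnd ℂ) (u θ * φ θ)
        = (u θ * φ θ) * (starRingEnd ℂ) (u θ * φ θ)
          + (-α) * (E 1 θ * (starRingEnd ℂ) (u θ * φ θ))
          + (-β) * (E Mc θ * (starRingEnd ℂ) (u θ * φ θ)) := by
      intro θ
      rw [hw]
      ring
    rw [intervalIntegral.integral_congr (fun θ _ => hpt θ)]
    rw [isplit ((fun θ => (u θ * φ θ) * (starRingEnd ℂ) (u θ * φ θ)))
      (fun θ => E 1 θ * (starRingEnd ℂ) (u θ * φ θ))
      (fun θ => E Mc θ * (starRingEnd ℂ) (u θ * φ θ)) (-α) (-β)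
      ((hucont.mul hφcont).mul (hccont.comp (hucont.mul hφcont)))
      ((hEcont _).mul (hccont.comp (hucont.mul hφcont)))
      ((hEcont _).mul (hccont.comp (hucont.mul hφcont)))]
    rw [A3, A4]
  -- Step A1 : ∫ w * conj w
  have A1 : (∫ θ : ℝ in (0:ℝ)..(2*π), w θ * (starRingEnd ℂ) (w θ))
      = (∫ θ : ℝ in (0:ℝ)..(2*π), (u θ * φ θ) * (starRingEnd ℂ) (u θ * φ θ))
        + (-α) * (starRingEnd ℂ) (2*π*α) + (-β) * (starRingEnd ℂ) (2*π*β) := by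
    have hpt : ∀ θ : ℝ, w θ * (starRingEnd ℂ) (w θ)
        = w θ * (starRingEnd ℂ) (u θ * φ θ)
          + (-(starRingEnd ℂ) α) * (w θ * E (-1) θ)
          + (-(starRingEnd ℂ) β) * (w θ * E (-Mc) θ) := by
      intro θ
      have : (starRingEnd ℂ) (w θ) = (starRingEnd ℂ) (u θ * φ θ)
          - (starRingEnd ℂ) α * E (-1) θ - (starRingEnd ℂ) β * E (-Mc) θ := by
        rw [hw]
        simp only [map_sub, map_mul, hconjE1, hconjEM]
      rw [this]
      ring
    rw [intervalIntegral.integral_congr (fun θ _ => hpt θ)]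
    rw [isplit (fun θ => w θ * (starRingEnd ℂ) (u θ * φ θ))
      (fun θ => w θ * E (-1) θ) (fun θ => w θ * E (-Mc) θ)
      (-(starRingEnd ℂ) α) (-(starRingEnd ℂ) β)
      (hwcont.mul (hccont.comp (hucont.mul hφcont)))
      (hwcont.mul (hEcont _)) (hwcont.mul (hEcont _))]
    rw [W1, WM, A2]
    ring
  -- realification
  have hreW : (∫ θ : ℝ in (0:ℝ)..(2*π), w θ * (starRingEnd ℂ) (w θ))
      = (((∫ θ : ℝ in (0:ℝ)..(2*π), Complex.normSq (w θ)) : ℝ) : ℂ) := by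
    rw [intervalIntegral.integral_congr (fun θ _ => Complex.mul_conj (w θ))]
    exact intervalIntegral.integral_ofReal
  have hreV : (∫ θ : ℝ in (0:ℝ)..(2*π), (u θ * φ θ) * (starRingEnd ℂ) (u θ * φ θ))
      = (((∫ θ : ℝ in (0:ℝ)..(2*π), Complex.normSq (u θ * φ θ)) : ℝ) : ℂ) := by
    rw [intervalIntegral.integral_congr (fun θ _ => Complex.mul_conj (u θ * φ θ))]
    exact intervalIntegral.integral_ofReal
  have hrealeq : (∫ θ : ℝ in (0:ℝ)..(2*π), Complex.normSq (w θ))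
      = (∫ θ : ℝ in (0:ℝ)..(2*π), Complex.normSq (u θ * φ θ))
        - 2*π*Complex.normSq α - 2*π*Complex.normSq β := by
    have hc1 : (-α) * (starRingEnd ℂ) (2*π*α) = -(2*(π:ℂ)*(Complex.normSq α : ℝ)) := by
      rw [map_mul, ← Complex.mul_conj]
      rw [show (starRingEnd ℂ) (2*(π:ℝ):ℂ) = (2*(π:ℝ):ℂ) by
        rw [show ((2*(π:ℝ):ℂ)) = (((2*π : ℝ):ℝ):ℂ) by push_cast; ring, Complex.conj_ofReal]]
      push_cast
      ring
    have hc2 : (-β) * (starRingEnd ℂ) (2*π*β) = -(2*(π:ℂ)*(Complex.normSq β : ℝ)) := by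
      rw [map_mul, ← Complex.mul_conj]
      rw [show (starRingEnd ℂ) (2*(π:ℝ):ℂ) = (2*(π:ℝ):ℂ) by
        rw [show ((2*(π:ℝ):ℂ)) = (((2*π : ℝ):ℝ):ℂ) by push_cast; ring, Complex.conj_ofReal]]
      push_cast
      ring
    have := A1
    rw [hreW, hreV, hc1, hc2] at this
    have h2 : (((∫ θ : ℝ in (0:ℝ)..(2*π), Complex.normSq (w θ)) : ℝ) : ℂ)
        = (((∫ θ : ℝ in (0:ℝ)..(2*π), Complex.normSq (u θ * φ θ))
            - 2*π*Complex.normSq α - 2*π*Complex.normSq β : ℝ) : ℂ) := by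
      rw [this]
      push_cast
      ring
    exact_mod_cast h2
  -- positivity and upper bound
  have hNSw0 : (0:ℝ) ≤ ∫ θ : ℝ in (0:ℝ)..(2*π), Complex.normSq (w θ) :=
    intervalIntegral.integral_nonneg h2π (fun θ _ => Complex.normSq_nonneg _)
  -- ∫ normSq φ
  have hφφ : (∫ θ : ℝ in (0:ℝ)..(2*π), Complex.normSq (φ θ)) = 2*π*(x^2+y^2) := by
    have hpt : ∀ θ : ℝ, φ θ * (starRingEnd ℂ) (φ θ)
        = ((x^2+y^2 : ℝ):ℂ) + (↑x*↑y*(starRingEnd ℂ) μ) * E (-Nc) θ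
          + (↑x*↑y*μ) * E Nc θ := by
      intro θ
      have hconjφ : (starRingEnd ℂ) (φ θ) = ↑x + ((starRingEnd ℂ) μ * ↑y) * E (-Nc) θ := by
        rw [hφ]
        simp only [map_add, map_mul, Complex.conj_ofReal, hconjEN]
      have h1 : E Nc θ * E (-Nc) θ = 1 := by
        rw [hEmul]
        simpa using hE0 θ
      rw [hφ, hconjφ]
      calc (↑x + μ * ↑y * E Nc θ) * (↑x + ((starRingEnd ℂ) μ * ↑y) * E (-Nc) θ)
          = ↑x*↑x + (↑x*↑y*(starRingEnd ℂ) μ) * E (-Nc) θ + (↑x*↑y*μ) * E Nc θ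
            + (μ * (starRingEnd ℂ) μ) * ((↑y*↑y) * (E Nc θ * E (-Nc) θ)) := by ring
        _ = _ := by rw [h1, hμns]; push_cast; ring
    have hcx : (∫ θ : ℝ in (0:ℝ)..(2*π), φ θ * (starRingEnd ℂ) (φ θ))
        = ((2*π*(x^2+y^2) : ℝ) : ℂ) := by
      rw [intervalIntegral.integral_congr (fun θ _ => hpt θ)]
      rw [isplit (fun _ => ((x^2+y^2 : ℝ):ℂ)) (E (-Nc)) (E Nc)
        (↑x*↑y*(starRingEnd ℂ) μ) (↑x*↑y*μ) continuous_const (hEcont _) (hEcont _)]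
      rw [show -Nc = (((-(p*n : ℕ) : ℤ)) : ℂ) by rw [hNc]; push_cast; ring]
      rw [hEzero (-(p*n : ℕ) : ℤ) (by omega)]
      rw [show Nc = ((((p*n : ℕ) : ℤ)) : ℂ) by rw [hNc]; push_cast; ring]
      rw [hEzero ((p*n : ℕ) : ℤ) (by omega)]
      rw [intervalIntegral.integral_const, Complex.real_smul]
      push_cast
      ring
    have hre : (∫ θ : ℝ in (0:ℝ)..(2*π), φ θ * (starRingEnd ℂ) (φ θ))
        = (((∫ θ : ℝ in (0:ℝ)..(2*π), Complex.normSq (φ θ)) : ℝ) : ℂ) := by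
      rw [intervalIntegral.integral_congr (fun θ _ => Complex.mul_conj (φ θ))]
      exact intervalIntegral.integral_ofReal
    rw [hre] at hcx
    exact_mod_cast hcx
  have hmono : (∫ θ : ℝ in (0:ℝ)..(2*π), Complex.normSq (u θ * φ θ))
      ≤ (∫ θ : ℝ in (0:ℝ)..(2*π), Complex.normSq (φ θ)) := by
    apply intervalIntegral.integral_mono_on h2π
    · exact ((Complex.continuous_normSq.comp (hucont.mul hφcont)).intervalIntegrable _ _)
    · exact ((Complex.continuous_normSq.comp hφcont).intervalIntegrable _ _)
    · intro θ _
      rw [Complex.normSq_mul]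
      have h1 : Complex.normSq (u θ) ≤ 1 := by
        rw [Complex.normSq_eq_norm_sq]
        exact pow_le_one₀ (norm_nonneg _) (hu1 θ)
      exact mul_le_of_le_one_left (Complex.normSq_nonneg _) h1
  -- combine
  have hfin : Complex.normSq α + Complex.normSq β ≤ x^2 + y^2 := by
    have h1 : 2*π*(Complex.normSq α + Complex.normSq β) ≤ 2*π*(x^2+y^2) := by
      rw [hφφ] at hmono
      linarith [hrealeq, hNSw0, hmono]
    exact (mul_le_mul_iff_of_pos_left (by positivity : (0:ℝ) < 2*π)).mp h1
  -- identify norms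
  have hnsα : Complex.normSq α = x^2 * (‖c 0‖ * ρ)^2 := by
    rw [Complex.normSq_eq_norm_sq, hα, norm_mul, norm_mul, Complex.norm_real, Real.norm_eq_abs, Complex.norm_real, Real.norm_eq_abs,
      _root_.abs_of_nonneg hx, _root_.abs_of_pos hρ0]
    ring
  have hnsβ : Complex.normSq β
      = (x * (‖c n‖ * ρ^(p*n+1)) + y * (‖c 0‖ * ρ))^2 := by
    rw [Complex.normSq_eq_norm_sq, hμβ, norm_mul, norm_mul, norm_pow, Complex.norm_real, Real.norm_eq_abs,
      _root_.abs_of_pos hρ0]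
  rw [hnsα, hnsβ] at hfin
  exact hfin

private lemma quad_bound (A B : ℝ) (hA : 0 ≤ A) (hB : 0 ≤ B)
    (H : ∀ x y : ℝ, 0 ≤ x → 0 ≤ y → x^2*A^2 + (x*B + y*A)^2 ≤ x^2 + y^2) :
    B ≤ 1 - A^2 := by
  have h10 := H 1 0 (by norm_num) le_rfl
  have hA2 : A^2 + B^2 ≤ 1 := by nlinarith [h10]
  have hA1 : A ≤ 1 := by nlinarith [sq_nonneg B]
  rcases eq_or_lt_of_le hA1 with hA1' | hA1'
  · -- A = 1 forces B = 0
    have hB2 : B^2 ≤ 0 := by nlinarith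
    have : B = 0 := by nlinarith [sq_nonneg B]
    simp only [this, ← hA1']
    nlinarith
  · have hD : 0 < 1 - A^2 := by nlinarith
    set q : ℝ := A*B/(1-A^2) with hq
    have hq0 : 0 ≤ q := by positivity
    have hqD : q * (1-A^2) = A*B := div_mul_cancel₀ _ hD.ne'
    have h2 := H 1 q (by norm_num) hq0
    have h3 : (1^2*A^2 + (1*B + q*A)^2) * (1-A^2)^2 ≤ (1^2 + q^2) * (1-A^2)^2 :=
      mul_le_mul_of_nonneg_right h2 (by positivity)
    have e2 : (1^2*A^2 + (1*B + q*A)^2) * (1-A^2)^2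
        = A^2*(1-A^2)^2 + (B*(1-A^2) + A*(q*(1-A^2)))^2 := by ring
    have e3 : (1^2 + q^2) * (1-A^2)^2 = (1-A^2)^2 + (q*(1-A^2))^2 := by ring
    rw [e2, e3, hqD] at h3
    have e4 : B*(1-A^2) + A*(A*B) = B := by ring
    rw [e4] at h3
    -- h3 : A^2*(1-A^2)^2 + B^2 ≤ (1-A^2)^2 + (A*B)^2
    nlinarith [h3, hD, mul_pos hD hD, sq_nonneg (1 - A^2 - B), sq_nonneg (1 - A^2 + B)]

private lemma wiener (p : ℕ) (hp : 1 ≤ p) (c : ℕ → ℂ) (h : ℂ → ℂ)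
    (hh : AnalyticOn ℂ h (ball (0:ℂ) 1))
    (hc : ∀ z ∈ ball (0:ℂ) 1, HasSum (fun n : ℕ => c n * z ^ (p * n + 1)) (h z))
    (hb : ∀ z ∈ ball (0:ℂ) 1, ‖h z‖ ≤ 1) :
    ‖c 0‖ ≤ 1 ∧
      ∀ n : ℕ, 1 ≤ n → ‖c n‖ ≤ 1 - ‖c 0‖^2 := by
  have hW : ∀ n : ℕ, 1 ≤ n → ∀ ρ : ℝ, 0 < ρ → ρ < 1 →
      ‖c n‖ * ρ^(p*n+1) ≤ 1 - (‖c 0‖ * ρ)^2 := by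
    intro n hn ρ hρ0 hρ1
    apply quad_bound _ _ (by positivity) (by positivity)
    intro x y hx hy
    exact key_ineq_s10 p hp c h hh hc hb hρ0 hρ1 n hn hx hy
  have hmem : Set.Ioo (0:ℝ) 1 ∈ nhdsWithin (1:ℝ) (Set.Iio 1) :=
    Ioo_mem_nhdsLT_of_mem (by norm_num : (1:ℝ) ∈ Set.Ioc (0:ℝ) 1)
  constructor
  · -- |c 0| ≤ 1
    have h1 : Filter.Tendsto (fun ρ : ℝ => ‖c 0‖ * ρ)
        (nhdsWithin (1:ℝ) (Set.Iio 1)) (nhds (‖c 0‖)) := by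
      have hcont : Continuous (fun ρ : ℝ => ‖c 0‖ * ρ) :=
        continuous_const.mul continuous_id
      have := hcont.tendsto (1:ℝ)
      simp only [mul_one] at this
      exact this.mono_left nhdsWithin_le_nhds
    apply le_of_tendsto h1
    filter_upwards [hmem] with ρ hρ
    have := hW 1 le_rfl ρ hρ.1 hρ.2
    nlinarith [norm_nonneg (c 1), pow_pos hρ.1 (p*1+1), mul_nonneg (norm_nonneg (c 0)) hρ.1.le]
  · intro n hn
    have h1 : Filter.Tendsto (fun ρ : ℝ => ‖c n‖ * ρ^(p*n+1))
        (nhdsWithin (1:ℝ) (Set.Iio 1)) (nhds (‖c n‖)) := by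
      have hcont : Continuous (fun ρ : ℝ => ‖c n‖ * ρ^(p*n+1)) :=
        continuous_const.mul (continuous_pow (p*n+1))
      have := hcont.tendsto (1:ℝ)
      simp only [one_pow, mul_one] at this
      exact this.mono_left nhdsWithin_le_nhds
    have h2 : Filter.Tendsto (fun ρ : ℝ => 1 - (‖c 0‖ * ρ)^2)
        (nhdsWithin (1:ℝ) (Set.Iio 1)) (nhds (1 - ‖c 0‖^2)) := by
      have : Continuous fun ρ : ℝ => 1 - (‖c 0‖ * ρ)^2 := by continuity
      have := this.tendsto (1:ℝ)
      simp only [mul_one] at this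
      exact this.mono_left nhdsWithin_le_nhds
    apply le_of_tendsto_of_tendsto h1 h2
    filter_upwards [hmem] with ρ hρ
    exact hW n hn ρ hρ.1 hρ.2

set_option maxHeartbeats 1000000 in
theorem bohr_stmt_10 (p : ℕ) (hp : 1 ≤ p) (r : ℝ) (hr0 : 0 ≤ r) (hr1 : r < 1)
    (hr3 : r ^ p ≤ 1 / 3)
    (c : ℕ → ℂ) (h : ℂ → ℂ)
    (hh : AnalyticOn ℂ h (ball (0:ℂ) 1))
    (hc : ∀ z ∈ ball (0:ℂ) 1, HasSum (fun n : ℕ => c n * z ^ (p * n + 1)) (h z))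
    (hb : ∀ z ∈ ball (0:ℂ) 1, ‖h z‖ ≤ 1) :
    ∑' n : ℕ, ‖c n‖ * r ^ (p * n + 1) ≤ max (2 * r ^ (p + 1)) r := by
  obtain ⟨ha1, hwn⟩ := wiener p hp c h hh hc hb
  set a : ℝ := ‖c 0‖ with haa
  have ha0 : 0 ≤ a := norm_nonneg _
  have hsum := summ p hp c h hc hr0 hr1
  have htp0 : 0 ≤ r^p := by positivity
  have htp1 : r^p < 1 := by nlinarith
  -- split off first term
  rw [hsum.tsum_eq_zero_add]
  have hsum' : Summable (fun k : ℕ => ‖c (k+1)‖ * r ^ (p*(k+1)+1)) :=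
    (summable_nat_add_iff 1).2 hsum
  have hgsum : Summable (fun k : ℕ => (1-a^2) * (r^(p+1) * (r^p)^k)) :=
    ((summable_geometric_of_lt_one htp0 htp1).mul_left _).mul_left _
  have htail : (∑' k : ℕ, ‖c (k+1)‖ * r ^ (p*(k+1)+1))
      ≤ ∑' k : ℕ, (1-a^2) * (r^(p+1) * (r^p)^k) := by
    apply Summable.tsum_le_tsum _ hsum' hgsum
    intro k
    have hpow : r ^ (p*(k+1)+1) = r^(p+1) * (r^p)^k := by
      rw [← pow_mul, ← pow_add]
      congr 1
      ring
    rw [hpow]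
    apply mul_le_mul_of_nonneg_right (hwn (k+1) (by omega)) (by positivity)
  have hgeo : (∑' k : ℕ, (1-a^2) * (r^(p+1) * (r^p)^k))
      = (1-a^2) * (r^(p+1) * (1 - r^p)⁻¹) := by
    rw [tsum_mul_left, tsum_mul_left, tsum_geometric_of_lt_one htp0 htp1]
  have hmain : a * r ^ (p*0+1) + (1-a^2) * (r^(p+1) * (1 - r^p)⁻¹) ≤ r := by
    have hinv : (1 - r^p)⁻¹ ≤ (2/3 : ℝ)⁻¹ := by
      apply inv_anti₀ (by norm_num)
      linarith
    have hrp1 : r^(p+1) = r * r^p := by rw [pow_succ]; ring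
    have h1 : (1-a^2) * (r^(p+1) * (1 - r^p)⁻¹) ≤ (1-a^2) * (r^(p+1) * (3/2)) := by
      apply mul_le_mul_of_nonneg_left _ (by nlinarith)
      apply mul_le_mul_of_nonneg_left _ (by positivity)
      calc (1 - r^p)⁻¹ ≤ (2/3 : ℝ)⁻¹ := hinv
        _ = 3/2 := by norm_num
    have h2 : a * r ^ (p*0+1) = a * r := by norm_num
    rw [h2]
    have h3 : a * r + (1-a^2) * (r^(p+1) * (3/2)) ≤ r := by
      rw [hrp1]
      have hna : 0 ≤ 1 - a^2 := by nlinarith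
      have h4 : r * r^p ≤ r * (1/3) := mul_le_mul_of_nonneg_left hr3 hr0
      nlinarith [mul_nonneg hna (sub_nonneg.2 h4), mul_nonneg hr0 (sq_nonneg (1-a))]
    linarith
  have : a * r ^ (p*0+1) + (∑' k : ℕ, ‖c (k+1)‖ * r ^ (p*(k+1)+1)) ≤ r := by
    calc a * r ^ (p*0+1) + (∑' k : ℕ, ‖c (k+1)‖ * r ^ (p*(k+1)+1))
        ≤ a * r ^ (p*0+1) + (1-a^2) * (r^(p+1) * (1 - r^p)⁻¹) := by
          rw [← hgeo] at hmain ⊢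
          linarith [htail]
      _ ≤ r := hmain
  exact le_trans this (le_max_right _ _)
end

section
/- Let p ≥ 2. If h(z) = Σ_{n≥0} a_n z^{pn+1} and g(z) = Σ_{n≥0} b_n z^{pn+1} are analytic in the unit disk with ‖h‖_∞ ≤ 1 and ‖g‖_∞ ≤ 1, then Σ_{n≥0} (|a_n| + |b_n|) r^{pn+1} ≤ 1 for r ≤ 1/2, and the constant 1/2 is sharp (extremal f(z) = z + conj(z), i.e., h(z) = g(z) = z). -/
open Metric Complex

noncomputable def bohrPS (c : ℕ → ℂ) : FormalMultilinearSeries ℂ ℂ ℂ :=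
  fun n => ContinuousMultilinearMap.mkPiRing ℂ (Fin n) (c n)

lemma bohrPS_apply (c : ℕ → ℂ) (n : ℕ) (y : ℂ) :
    (bohrPS c n fun _ => y) = c n * y ^ n := by
  simp [bohrPS, smul_eq_mul, mul_comm]

lemma mem_eball_iff (y : ℂ) : y ∈ Metric.eball (0:ℂ) 1 ↔ y ∈ ball (0:ℂ) 1 := by
  simp only [Metric.mem_eball, Metric.mem_ball, edist_dist, ENNReal.ofReal_lt_one]

lemma bohr_hasFPS (c : ℕ → ℂ)
    (hsum : ∀ w ∈ ball (0:ℂ) 1, Summable fun m => c m * w ^ m) :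
    HasFPowerSeriesOnBall (fun w => ∑' m, c m * w ^ m) (bohrPS c) 0 1 := by
  refine ⟨?_, one_pos, ?_⟩
  · refine ENNReal.le_of_forall_nnreal_lt fun r hr => ?_
    have hr1 : (r : ℝ) < 1 := by exact_mod_cast hr
    refine FormalMultilinearSeries.le_radius_of_summable_norm _ ?_
    have hmem : (((r:ℝ)) : ℂ) ∈ ball (0:ℂ) 1 := by
      rw [mem_ball_zero_iff]
      simpa [_root_.abs_of_nonneg r.coe_nonneg] using hr1
    have hs := summable_norm_iff.mpr (hsum _ hmem)
    refine hs.congr fun n => ?_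
    simp [bohrPS, ContinuousMultilinearMap.norm_mkPiRing, norm_mul, norm_pow,
      _root_.abs_of_nonneg r.coe_nonneg]
  · intro y hy
    rw [mem_eball_iff] at hy
    have h2 : (fun n => bohrPS c n fun _ => y) = fun m => c m * y ^ m :=
      funext fun n => bohrPS_apply c n y
    simp only [zero_add]
    rw [h2]
    exact (hsum y hy).hasSum

lemma bohr_tsum_zero (c : ℕ → ℂ) : ∑' m, c m * (0:ℂ) ^ m = c 0 := by
  rw [tsum_eq_single 0 (fun m hm => by simp [zero_pow hm])]; simp
lemma schwarzPick {Φ : ℂ → ℂ} {δ : ℝ} (hδ1 : δ < 1)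
    (hd : DifferentiableOn ℂ Φ (ball 0 1))
    (hb : ∀ w ∈ ball (0:ℂ) 1, ‖Φ w‖ ≤ δ) :
    ‖deriv Φ 0‖ ≤ 1 - ‖Φ 0‖ ^ 2 := by
  have h0m : (0:ℂ) ∈ ball (0:ℂ) 1 := mem_ball_self one_pos
  have hδ0 : 0 ≤ δ := le_trans (norm_nonneg _) (hb 0 h0m)
  set c₀ := Φ 0 with hc₀
  have hkey : ∀ z w : ℂ, Complex.normSq (1 - (starRingEnd ℂ) w * z) - Complex.normSq (z - w)
      = (1 - Complex.normSq z) * (1 - Complex.normSq w) := by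
    intro z w
    simp only [Complex.normSq_apply, Complex.sub_re, Complex.sub_im, Complex.mul_re,
      Complex.mul_im, Complex.one_re, Complex.one_im, Complex.conj_re, Complex.conj_im]
    ring
  have hnsq : ∀ w ∈ ball (0:ℂ) 1, Complex.normSq (Φ w) < 1 := by
    intro w hw
    have h1 := hb w hw
    rw [← Complex.sq_norm]
    nlinarith [norm_nonneg (Φ w)]
  have hlt : ∀ w ∈ ball (0:ℂ) 1,
      Complex.normSq (Φ w - c₀) < Complex.normSq (1 - (starRingEnd ℂ) c₀ * Φ w) := by
    intro w hw
    have h1 := hnsq w hw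
    have h2 := hnsq 0 h0m
    have h3 := hkey (Φ w) c₀
    rw [← hc₀] at h2
    nlinarith [Complex.normSq_nonneg (Φ w - c₀)]
  have habslt : ∀ w ∈ ball (0:ℂ) 1,
      ‖Φ w - c₀‖ < ‖1 - (starRingEnd ℂ) c₀ * Φ w‖ := by
    intro w hw
    rw [Complex.norm_def, Complex.norm_def]
    exact Real.sqrt_lt_sqrt (Complex.normSq_nonneg _) (hlt w hw)
  have hden : ∀ w ∈ ball (0:ℂ) 1, (1 - (starRingEnd ℂ) c₀ * Φ w) ≠ 0 := by
    intro w hw hzero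
    have h2 := habslt w hw
    rw [hzero, norm_zero] at h2
    exact absurd h2 (not_lt.mpr (norm_nonneg _))
  set ψ : ℂ → ℂ := fun u => (Φ u - c₀) / (1 - (starRingEnd ℂ) c₀ * Φ u) with hψdef
  have hψd : DifferentiableOn ℂ ψ (ball 0 1) :=
    (hd.sub (differentiableOn_const _)).div
      ((differentiableOn_const _).sub ((differentiableOn_const _).mul hd)) hden
  have hψ0 : ψ 0 = 0 := by simp [hψdef, hc₀]
  have hmaps : Set.MapsTo ψ (ball (0:ℂ) 1) (ball (ψ 0) 1) := by
    intro w hw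
    rw [hψ0, mem_ball_zero_iff]
    have hdpos : 0 < ‖1 - (starRingEnd ℂ) c₀ * Φ w‖ :=
      lt_of_le_of_lt (norm_nonneg _) (habslt w hw)
    rw [hψdef]
    simp only [norm_div]
    rw [div_lt_one hdpos]
    exact habslt w hw
  have hder := Complex.norm_deriv_le_div_of_mapsTo_ball hψd (hmaps.mono_right ball_subset_closedBall) one_pos
  have hΦ0d : DifferentiableAt ℂ Φ 0 := hd.differentiableAt (isOpen_ball.mem_nhds h0m)
  have hg0ne : (1 - (starRingEnd ℂ) c₀ * Φ 0) ≠ 0 := hden 0 h0m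
  have hderiv : deriv ψ 0 = deriv Φ 0 / (1 - (starRingEnd ℂ) c₀ * c₀) := by
    have hg0ne' : (1 - (starRingEnd ℂ) c₀ * c₀) ≠ 0 := hg0ne
    rw [hψdef]
    rw [deriv_fun_div (c := fun y => Φ y - c₀) (d := fun y => 1 - (starRingEnd ℂ) c₀ * Φ y) (hΦ0d.sub_const _)
      ((differentiableAt_const _).sub ((differentiableAt_const _).mul hΦ0d)) hg0ne]
    rw [deriv_sub_const, deriv_const_sub, deriv_const_mul _ hΦ0d]
    rw [sub_self, zero_mul, sub_zero, sq, mul_div_mul_right _ _ hg0ne']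
  have hg0 : (1 - (starRingEnd ℂ) c₀ * c₀) = ((1 - Complex.normSq c₀ : ℝ) : ℂ) := by
    rw [mul_comm, Complex.mul_conj]
    push_cast
    ring
  have hnsq0 : Complex.normSq c₀ < 1 := by
    have := hnsq 0 h0m; rwa [← hc₀] at this
  have habsg0 : ‖1 - (starRingEnd ℂ) c₀ * c₀‖ = 1 - Complex.normSq c₀ := by
    rw [hg0, Complex.norm_real, Real.norm_eq_abs, _root_.abs_of_pos (by linarith)]
  rw [hderiv, norm_div, habsg0] at hder
  rw [div_one] at hder
  rw [div_le_one (by linarith)] at hder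
  rw [Complex.sq_norm]
  exact hder
lemma wiener1 (c : ℕ → ℂ) {δ : ℝ} (hδ1 : δ < 1)
    (hsum : ∀ w ∈ ball (0:ℂ) 1, Summable fun m => c m * w ^ m)
    (hb : ∀ w ∈ ball (0:ℂ) 1, ‖∑' m, c m * w ^ m‖ ≤ δ) :
    ‖c 1‖ ≤ 1 - ‖c 0‖ ^ 2 := by
  have hps := bohr_hasFPS c hsum
  have hset : Metric.eball (0:ℂ) 1 = ball (0:ℂ) 1 := Set.ext fun y => mem_eball_iff y
  have hd : DifferentiableOn ℂ (fun w => ∑' m, c m * w ^ m) (ball 0 1) := by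
    have := hps.differentiableOn
    rwa [hset] at this
  have hder : deriv (fun w => ∑' m, c m * w ^ m) 0 = c 1 := by
    rw [hps.hasFPowerSeriesAt.deriv, bohrPS_apply]
    simp
  have h0 : (∑' m, c m * (0:ℂ) ^ m) = c 0 := bohr_tsum_zero c
  have := schwarzPick hδ1 hd hb
  rwa [hder, h0] at this
lemma bohr_avg (c : ℕ → ℂ) (n : ℕ) (hn : 1 ≤ n) {δ : ℝ}
    (hsum : ∀ w ∈ ball (0:ℂ) 1, Summable fun m => c m * w ^ m)
    (hb : ∀ w ∈ ball (0:ℂ) 1, ‖∑' m, c m * w ^ m‖ ≤ δ) :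
    (∀ u ∈ ball (0:ℂ) 1, Summable fun k => c (k * n) * u ^ k) ∧
      (∀ u ∈ ball (0:ℂ) 1, ‖∑' k, c (k * n) * u ^ k‖ ≤ δ) := by
  have hn0 : n ≠ 0 := by omega
  have hnC : ((n:ℂ)) ≠ 0 := Nat.cast_ne_zero.mpr hn0
  have hnR : ((n:ℝ)) ≠ 0 := Nat.cast_ne_zero.mpr hn0
  have key : ∀ u ∈ ball (0:ℂ) 1,
      ∃ A : ℂ, HasSum (fun k => c (k * n) * u ^ k) A ∧ ‖A‖ ≤ δ := by
    intro u hu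
    rcases eq_or_ne u 0 with rfl | hu0
    · refine ⟨c 0, ?_, ?_⟩
      · have heq : (fun k => c (k * n) * (0:ℂ) ^ k) = fun k => if k = 0 then c 0 else 0 := by
          funext k
          rcases eq_or_ne k 0 with rfl | hk
          · simp
          · simp [zero_pow hk, hk]
        rw [heq]
        exact hasSum_ite_eq 0 (c 0)
      · have h1 := hb 0 (mem_ball_self one_pos)
        rwa [bohr_tsum_zero] at h1
    · set v := u ^ (((n:ℂ))⁻¹) with hv
      have hvn : v ^ n = u := Complex.cpow_nat_inv_pow u hn0
      have hun : ‖u‖ < 1 := by rwa [mem_ball_zero_iff] at hu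
      have hvlt : ‖v‖ < 1 := by
        by_contra hge
        push_neg at hge
        have h1 : (1:ℝ) ≤ ‖v‖ ^ n := one_le_pow₀ hge
        rw [← norm_pow, hvn] at h1
        linarith
      set ω : ℂ := Complex.exp ((((2 * Real.pi / n : ℝ)) : ℂ) * Complex.I) with hω
      have hωabs : ‖ω‖ = 1 := Complex.norm_exp_ofReal_mul_I _
      have hωm : ∀ m : ℕ, (ω ^ m = 1 ↔ n ∣ m) := by
        intro m
        rw [hω, ← Complex.exp_nat_mul, Complex.exp_eq_one_iff]
        constructor
        · rintro ⟨k, hk⟩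
          push_cast at hk
          have hπ : (Real.pi : ℂ) ≠ 0 := by exact_mod_cast Real.pi_ne_zero
          have hmn : (m : ℂ) = k * n := by
            field_simp at hk
            have h2 : (m:ℂ) * (2 * (Real.pi:ℂ) * Complex.I)
                = (k * n) * (2 * (Real.pi:ℂ) * Complex.I) := by linear_combination (2 * (Real.pi:ℂ) * Complex.I) * hk
            exact mul_right_cancel₀ (mul_ne_zero (mul_ne_zero two_ne_zero hπ) Complex.I_ne_zero) h2
          have hmz : (m : ℤ) = k * n := by exact_mod_cast hmn
          exact Int.natCast_dvd_natCast.mp ⟨k, by rw [hmz]; ring⟩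
        · rintro ⟨t, rfl⟩
          refine ⟨t, ?_⟩
          push_cast
          field_simp
      have hgeom : ∀ m : ℕ,
          (∑ j ∈ Finset.range n, (ω ^ m) ^ j) = if n ∣ m then (n:ℂ) else 0 := by
        intro m
        by_cases hdvd : n ∣ m
        · rw [if_pos hdvd, (hωm m).mpr hdvd]
          simp
        · rw [if_neg hdvd]
          have h1 : ω ^ m ≠ 1 := fun h => hdvd ((hωm m).mp h)
          rw [geom_sum_eq h1]
          have h2 : (ω ^ m) ^ n = 1 := by
            rw [← pow_mul, mul_comm, pow_mul, (hωm n).mpr dvd_rfl, one_pow]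
          rw [h2]
          simp
      have hjmem : ∀ j : ℕ, (ω ^ j * v) ∈ ball (0:ℂ) 1 := by
        intro j
        rw [mem_ball_zero_iff]
        have : ‖ω ^ j * v‖ = ‖v‖ := by
          simp [norm_mul, norm_pow, hωabs]
        rw [this]
        exact hvlt
      set T : ℕ → ℂ := fun j => ∑' m, c m * (ω ^ j * v) ^ m with hT
      set A : ℂ := (n:ℂ)⁻¹ * ∑ j ∈ Finset.range n, T j with hA
      have h1 : ∀ j ∈ Finset.range n, HasSum (fun m => c m * (ω ^ j * v) ^ m) (T j) :=
        fun j _ => (hsum _ (hjmem j)).hasSum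
      have h2 := (hasSum_sum h1).mul_left ((n:ℂ)⁻¹)
      have heq : (fun m => (n:ℂ)⁻¹ * ∑ j ∈ Finset.range n, c m * (ω ^ j * v) ^ m)
          = fun m => if n ∣ m then c m * v ^ m else 0 := by
        funext m
        have hterm : ∀ j, c m * (ω ^ j * v) ^ m = (ω ^ m) ^ j * (c m * v ^ m) := by
          intro j
          rw [mul_pow, pow_right_comm]
          ring
        simp_rw [hterm]
        rw [← Finset.sum_mul, hgeom m]
        by_cases hdvd : n ∣ m
        · rw [if_pos hdvd, if_pos hdvd, ← mul_assoc, inv_mul_cancel₀ hnC, one_mul]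
        · rw [if_neg hdvd, if_neg hdvd]
          ring
      rw [heq] at h2
      have hinj : Function.Injective (fun k : ℕ => k * n) := fun k₁ k₂ hk =>
        Nat.eq_of_mul_eq_mul_right (by omega) hk
      have hvanish : ∀ m ∉ Set.range (fun k : ℕ => k * n),
          (if n ∣ m then c m * v ^ m else 0) = 0 := by
        intro m hm
        rw [if_neg]
        rintro ⟨t, rfl⟩
        exact hm ⟨t, mul_comm t n⟩
      have h3 := (hinj.hasSum_iff hvanish).mpr h2
      have heq2 : ((fun m => if n ∣ m then c m * v ^ m else 0) ∘ fun k : ℕ => k * n)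
          = fun k => c (k * n) * u ^ k := by
        funext k
        simp only [Function.comp]
        rw [if_pos (dvd_mul_left n k)]
        congr 1
        rw [pow_mul', hvn]
      rw [heq2] at h3
      refine ⟨A, h3, ?_⟩
      rw [hA, norm_mul]
      have habsinv : ‖(n:ℂ)⁻¹‖ = (n:ℝ)⁻¹ := by
        rw [norm_inv, Complex.norm_natCast]
      rw [habsinv]
      have hsum_le : ‖∑ j ∈ Finset.range n, T j‖ ≤ (n:ℝ) * δ := by
        refine le_trans (norm_sum_le _ _) ?_
        have : ∀ j ∈ Finset.range n, ‖T j‖ ≤ δ := fun j _ => hb _ (hjmem j)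
        calc ∑ j ∈ Finset.range n, ‖T j‖ ≤ ∑ _j ∈ Finset.range n, δ :=
              Finset.sum_le_sum this
          _ = (n:ℝ) * δ := by rw [Finset.sum_const, Finset.card_range]; simp [nsmul_eq_mul]
      calc (n:ℝ)⁻¹ * ‖∑ j ∈ Finset.range n, T j‖ ≤ (n:ℝ)⁻¹ * ((n:ℝ) * δ) := by
            refine mul_le_mul_of_nonneg_left hsum_le (by positivity)
        _ = δ := by field_simp
  constructor
  · intro u hu
    obtain ⟨A, hA, _⟩ := key u hu
    exact hA.summable
  · intro u hu
    obtain ⟨A, hA, hAb⟩ := key u hu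
    rwa [hA.tsum_eq]

lemma wiener_s11 (c : ℕ → ℂ) {δ : ℝ} (hδ1 : δ < 1)
    (hsum : ∀ w ∈ ball (0:ℂ) 1, Summable fun m => c m * w ^ m)
    (hb : ∀ w ∈ ball (0:ℂ) 1, ‖∑' m, c m * w ^ m‖ ≤ δ)
    (n : ℕ) (hn : 1 ≤ n) :
    ‖c n‖ ≤ 1 - ‖c 0‖ ^ 2 := by
  obtain ⟨hsum', hb'⟩ := bohr_avg c n hn hsum hb
  have h1 := wiener1 (fun k => c (k * n)) hδ1 hsum' hb'
  simpa using h1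
set_option maxHeartbeats 1000000 in
lemma bohr_core {p : ℕ} (hp : 2 ≤ p) {δ : ℝ} (hδ0 : 0 < δ) (hδ1 : δ < 1) (a : ℕ → ℂ) (h : ℂ → ℂ)
    (hh : AnalyticOn ℂ h (ball 0 1))
    (hs : ∀ z ∈ ball (0:ℂ) 1, HasSum (fun n => a n * z ^ (p * n + 1)) (h z))
    (hb : ∀ z ∈ ball (0:ℂ) 1, ‖h z‖ ≤ δ)
    (r : ℝ) (hr0 : 0 ≤ r) (hr : r ≤ 1 / 2) :
    ∑' n, ‖a n‖ * r ^ (p * n + 1) ≤ 1 / 2 := by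
  have hp0 : p ≠ 0 := by omega
  have h0m : (0:ℂ) ∈ ball (0:ℂ) 1 := mem_ball_self one_pos
  set δ' : ℝ := (1 + δ) / 2 with hδ'def
  have hδ'1 : δ' < 1 := by rw [hδ'def]; linarith
  have hδ'δ : δ < δ' := by rw [hδ'def]; linarith
  have hδ'0 : 0 ≤ δ' := by rw [hδ'def]; linarith
  -- h 0 = 0
  have hh0 : h 0 = 0 := by
    have h1 := hs 0 h0m
    have h2 : (fun n => a n * (0:ℂ) ^ (p * n + 1)) = fun _ => 0 := by
      funext n
      simp [zero_pow (Nat.succ_ne_zero (p * n))]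
    rw [h2] at h1
    exact (h1.unique hasSum_zero)
  -- Schwarz
  have hschwarz : ∀ z ∈ ball (0:ℂ) 1, ‖h z‖ ≤ δ' * ‖z‖ := by
    intro z hz
    have hmaps : Set.MapsTo h (ball (0:ℂ) 1) (ball (h 0) δ') := by
      intro w hw
      rw [hh0, mem_ball_zero_iff]
      exact lt_of_le_of_lt (hb w hw) hδ'δ
    have h1 := Complex.dist_le_div_mul_dist_of_mapsTo_ball hh.differentiableOn (hmaps.mono_right ball_subset_closedBall) hz
    rw [hh0] at h1
    simpa [dist_zero_right, div_one] using h1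
  -- representation via p-th roots
  have hroot : ∀ w : ℂ, w ∈ ball (0:ℂ) 1 → w ≠ 0 →
      ∃ z : ℂ, z ≠ 0 ∧ z ∈ ball (0:ℂ) 1 ∧
        HasSum (fun n => a n * w ^ n) (h z * z⁻¹) ∧
        ‖h z * z⁻¹‖ ≤ δ' := by
    intro w hw hw0
    set z := w ^ (((p:ℂ))⁻¹) with hzdef
    have hzp : z ^ p = w := Complex.cpow_nat_inv_pow w hp0
    have hz0 : z ≠ 0 := by
      intro hz
      rw [hz, zero_pow hp0] at hzp
      exact hw0 hzp.symm
    have hwa : ‖w‖ < 1 := by rwa [mem_ball_zero_iff] at hw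
    have hza : ‖z‖ < 1 := by
      by_contra hge
      push_neg at hge
      have h1 : (1:ℝ) ≤ ‖z‖ ^ p := one_le_pow₀ hge
      rw [← norm_pow, hzp] at h1
      linarith
    have hzb : z ∈ ball (0:ℂ) 1 := by rwa [mem_ball_zero_iff]
    have h1 := (hs z hzb).mul_right z⁻¹
    have heq : (fun n => a n * z ^ (p * n + 1) * z⁻¹) = fun n => a n * w ^ n := by
      funext n
      rw [← hzp, ← pow_mul, pow_succ]
      field_simp
    rw [heq] at h1
    refine ⟨z, hz0, hzb, h1, ?_⟩
    rw [norm_mul, norm_inv]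
    have hzane : ‖z‖ ≠ 0 := by
      simpa using hz0
    calc ‖h z‖ * (‖z‖)⁻¹ ≤ (δ' * ‖z‖) * (‖z‖)⁻¹ := by
          refine mul_le_mul_of_nonneg_right (hschwarz z hzb) (by positivity)
      _ = δ' := by field_simp
  have hΦsum : ∀ w ∈ ball (0:ℂ) 1, Summable fun m => a m * w ^ m := by
    intro w hw
    rcases eq_or_ne w 0 with rfl | hw0
    · refine summable_of_ne_finset_zero (s := {0}) fun m hm => ?_
      simp only [Finset.mem_singleton] at hm
      simp [zero_pow hm]
    · obtain ⟨z, _, _, h1, _⟩ := hroot w hw hw0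
      exact h1.summable
  have hΦb' : ∀ w ∈ ball (0:ℂ) 1, w ≠ 0 → ‖∑' m, a m * w ^ m‖ ≤ δ' := by
    intro w hw hw0
    obtain ⟨z, _, _, h1, h2⟩ := hroot w hw hw0
    rwa [h1.tsum_eq]
  have hcont : ContinuousAt (fun w => ∑' m, a m * w ^ m) 0 :=
    (bohr_hasFPS a hΦsum).hasFPowerSeriesAt.continuousAt
  have ha0 : ‖∑' m, a m * (0:ℂ) ^ m‖ ≤ δ' := by
    have htend : Filter.Tendsto (fun w => ∑' m, a m * w ^ m) (nhdsWithin 0 {(0:ℂ)}ᶜ)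
        (nhds (∑' m, a m * (0:ℂ) ^ m)) := hcont.tendsto.mono_left nhdsWithin_le_nhds
    have hev : ∀ᶠ w in nhdsWithin (0:ℂ) {(0:ℂ)}ᶜ,
        ‖∑' m, a m * w ^ m‖ ≤ δ' := by
      filter_upwards [self_mem_nhdsWithin,
        eventually_nhdsWithin_of_eventually_nhds
          (isOpen_ball.eventually_mem h0m)] with w hw1 hw2
      exact hΦb' w hw2 hw1
    exact le_of_tendsto (continuous_norm.continuousAt.tendsto.comp htend) hev
  have hΦb : ∀ w ∈ ball (0:ℂ) 1, ‖∑' m, a m * w ^ m‖ ≤ δ' := by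
    intro w hw
    rcases eq_or_ne w 0 with rfl | hw0
    · exact ha0
    · exact hΦb' w hw hw0
  have hwiener : ∀ n : ℕ, 1 ≤ n →
      ‖a n‖ ≤ 1 - ‖a 0‖ ^ 2 :=
    fun n hn => wiener_s11 a hδ'1 hΦsum hΦb n hn
  -- arithmetic
  set t := ‖a 0‖ with htdef
  have ht0 : 0 ≤ t := norm_nonneg _
  have ht1 : t ≤ 1 := by
    have := ha0
    rw [bohr_tsum_zero] at this
    exact le_trans this (le_of_lt hδ'1)
  have hrc : (((r:ℝ)) : ℂ) ∈ ball (0:ℂ) 1 := by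
    rw [mem_ball_zero_iff]
    simp only [Complex.norm_real, Real.norm_eq_abs]
    rw [_root_.abs_of_nonneg hr0]
    linarith
  have hS : Summable (fun n => ‖a n‖ * r ^ (p * n + 1)) := by
    have h1 := summable_norm_iff.mpr (hs _ hrc).summable
    refine h1.congr fun n => ?_
    simp only [norm_mul, norm_pow, Complex.norm_real, Real.norm_eq_abs]
    rw [_root_.abs_of_nonneg hr0]
  have hrp : r ^ p ≤ (1:ℝ)/4 := by
    calc r ^ p ≤ (1/2:ℝ) ^ p := pow_le_pow_left₀ hr0 hr p
      _ ≤ (1/2:ℝ) ^ 2 := pow_le_pow_of_le_one (by norm_num) (by norm_num) hp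
      _ = 1/4 := by norm_num
  have hrp0 : 0 ≤ r ^ p := by positivity
  have hgeo : Summable (fun m : ℕ => (r ^ p) ^ m) :=
    summable_geometric_of_lt_one hrp0 (by linarith)
  have ht2 : 0 ≤ 1 - t ^ 2 := by nlinarith
  have htail_term : ∀ m : ℕ, ‖a (m + 1)‖ * r ^ (p * (m + 1) + 1)
      ≤ (1 - t ^ 2) * ((r ^ p) ^ m * (r ^ p * r)) := by
    intro m
    have h1 := hwiener (m + 1) (by omega)
    have h2 : r ^ (p * (m + 1) + 1) = (r ^ p) ^ m * (r ^ p * r) := by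
      rw [show p * (m + 1) + 1 = p * m + (p + 1) by ring, pow_add, pow_mul, pow_succ]
    rw [h2]
    have h3 : (0:ℝ) ≤ (r ^ p) ^ m * (r ^ p * r) := by positivity
    exact mul_le_mul_of_nonneg_right h1 h3
  have htailsum : Summable fun m : ℕ => (1 - t ^ 2) * ((r ^ p) ^ m * (r ^ p * r)) := by
    exact ((hgeo.mul_right _).mul_left _)
  have hsplit := Summable.tsum_eq_zero_add hS
  have hshift : Summable fun m : ℕ => ‖a (m + 1)‖ * r ^ (p * (m + 1) + 1) :=
    (summable_nat_add_iff 1).mpr hS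
  have htail_le : (∑' m, ‖a (m + 1)‖ * r ^ (p * (m + 1) + 1))
      ≤ (1 - t ^ 2) * r * (1/3) := by
    have hc1 : (∑' m, ‖a (m + 1)‖ * r ^ (p * (m + 1) + 1))
        ≤ ∑' m, (1 - t ^ 2) * ((r ^ p) ^ m * (r ^ p * r)) :=
      Summable.tsum_le_tsum htail_term hshift htailsum
    have hc2 : (∑' m : ℕ, (1 - t ^ 2) * ((r ^ p) ^ m * (r ^ p * r)))
        = (1 - t ^ 2) * ((1 - r ^ p)⁻¹ * (r ^ p * r)) := by
      rw [tsum_mul_left, tsum_mul_right, tsum_geometric_of_lt_one hrp0 (by linarith)]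
    have hpos : (0:ℝ) < 1 - r ^ p := by linarith
    have hq : (1 - r ^ p)⁻¹ * (r ^ p * r) ≤ r * (1/3) := by
      rw [← div_eq_inv_mul, div_le_iff₀ hpos]
      nlinarith
    calc (∑' m, ‖a (m + 1)‖ * r ^ (p * (m + 1) + 1))
        ≤ (1 - t ^ 2) * ((1 - r ^ p)⁻¹ * (r ^ p * r)) := by rw [← hc2]; exact hc1
      _ ≤ (1 - t ^ 2) * (r * (1/3)) := mul_le_mul_of_nonneg_left hq ht2
      _ = (1 - t ^ 2) * r * (1/3) := by ring
  have hf0 : ‖a 0‖ * r ^ (p * 0 + 1) = t * r := by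
    rw [← htdef]
    norm_num
  rw [hsplit, hf0]
  have hfin : t * r + (1 - t ^ 2) * r * (1/3) ≤ 1/2 := by
    nlinarith [mul_nonneg hr0 (mul_nonneg (sub_nonneg.2 ht1) (show (0:ℝ) ≤ 2 - t by linarith))]
  linarith
set_option maxHeartbeats 1000000 in
theorem bohr_stmt_11 (p : ℕ) (hp : 2 ≤ p) :
    (∀ (a b : ℕ → ℂ) (h g : ℂ → ℂ),
      AnalyticOn ℂ h (ball (0:ℂ) 1) → AnalyticOn ℂ g (ball (0:ℂ) 1) →
      (∀ z ∈ ball (0:ℂ) 1, HasSum (fun n : ℕ => a n * z ^ (p * n + 1)) (h z)) →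
      (∀ z ∈ ball (0:ℂ) 1, HasSum (fun n : ℕ => b n * z ^ (p * n + 1)) (g z)) →
      (∀ z ∈ ball (0:ℂ) 1, ‖h z‖ ≤ 1) →
      (∀ z ∈ ball (0:ℂ) 1, ‖g z‖ ≤ 1) →
      ∀ r : ℝ, 0 ≤ r → r ≤ 1 / 2 →
        ∑' n : ℕ, (‖a n‖ + ‖b n‖) * r ^ (p * n + 1) ≤ 1) ∧
    (∀ ρ : ℝ, 1 / 2 < ρ → ρ < 1 →
      ∃ (a b : ℕ → ℂ) (h g : ℂ → ℂ),
        AnalyticOn ℂ h (ball (0:ℂ) 1) ∧ AnalyticOn ℂ g (ball (0:ℂ) 1) ∧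
        (∀ z ∈ ball (0:ℂ) 1, HasSum (fun n : ℕ => a n * z ^ (p * n + 1)) (h z)) ∧
        (∀ z ∈ ball (0:ℂ) 1, HasSum (fun n : ℕ => b n * z ^ (p * n + 1)) (g z)) ∧
        (∀ z ∈ ball (0:ℂ) 1, ‖h z‖ ≤ 1) ∧
        (∀ z ∈ ball (0:ℂ) 1, ‖g z‖ ≤ 1) ∧
        1 < ∑' n : ℕ, (‖a n‖ + ‖b n‖) * ρ ^ (p * n + 1)) := by
  constructor
  · intro a b h g hh hg hsa hsb hba hbb r hr0 hr12
    have hrc : (((r:ℝ)) : ℂ) ∈ ball (0:ℂ) 1 := by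
      rw [mem_ball_zero_iff]
      simp only [Complex.norm_real, Real.norm_eq_abs]
      rw [_root_.abs_of_nonneg hr0]
      linarith
    have hsummable : ∀ (c : ℕ → ℂ) (f : ℂ → ℂ),
        (∀ z ∈ ball (0:ℂ) 1, HasSum (fun n : ℕ => c n * z ^ (p * n + 1)) (f z)) →
        Summable (fun n => ‖c n‖ * r ^ (p * n + 1)) := by
      intro c f hsf
      have h1 := summable_norm_iff.mpr (hsf _ hrc).summable
      refine h1.congr fun n => ?_
      simp only [norm_mul, norm_pow, Complex.norm_real, Real.norm_eq_abs]
      rw [_root_.abs_of_nonneg hr0]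
    have hSa := hsummable a h hsa
    have hSb := hsummable b g hsb
    have key : ∀ (c : ℕ → ℂ) (f : ℂ → ℂ), AnalyticOn ℂ f (ball (0:ℂ) 1) →
        (∀ z ∈ ball (0:ℂ) 1, HasSum (fun n : ℕ => c n * z ^ (p * n + 1)) (f z)) →
        (∀ z ∈ ball (0:ℂ) 1, ‖f z‖ ≤ 1) →
        ∑' n, ‖c n‖ * r ^ (p * n + 1) ≤ 1 / 2 := by
      intro c f hf hsf hbf
      by_contra hcon
      push_neg at hcon
      set S := ∑' n, ‖c n‖ * r ^ (p * n + 1) with hSdef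
      have hSpos : (0:ℝ) < S := lt_trans (by norm_num) hcon
      set δ : ℝ := (1/2 + S) / (2 * S) with hδdef
      have hδ0 : 0 < δ := by positivity
      have hδ1 : δ < 1 := by
        rw [hδdef, div_lt_one (by positivity)]
        linarith
      have happ := bohr_core hp hδ0 hδ1 (fun n => (δ:ℂ) * c n) (fun z => (δ:ℂ) * f z)
        (analyticOn_const.mul hf)
        (fun z hz => by
          have h1 := (hsf z hz).mul_left (((δ:ℝ)):ℂ)
          have heq2 : (fun i => (((δ:ℝ)):ℂ) * (c i * z ^ (p * i + 1)))
              = fun n => (((δ:ℝ)):ℂ) * c n * z ^ (p * n + 1) := by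
            funext i
            ring
          rwa [heq2] at h1)
        (fun z hz => by
          rw [norm_mul, Complex.norm_real, Real.norm_eq_abs, _root_.abs_of_pos hδ0]
          calc δ * ‖f z‖ ≤ δ * 1 :=
                mul_le_mul_of_nonneg_left (hbf z hz) (le_of_lt hδ0)
            _ = δ := mul_one δ)
        r hr0 hr12
      have heq : (fun n => ‖(δ:ℂ) * c n‖ * r ^ (p * n + 1))
          = fun n => δ * (‖c n‖ * r ^ (p * n + 1)) := by
        funext n
        rw [norm_mul, Complex.norm_real, Real.norm_eq_abs, _root_.abs_of_pos hδ0]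
        ring
      rw [heq, tsum_mul_left] at happ
      rw [← hSdef] at happ
      have hfinal : δ * S = (1/2 + S) / 2 := by
        rw [hδdef]
        field_simp
      rw [hfinal] at happ
      linarith
    have ha := key a h hh hsa hba
    have hb' := key b g hg hsb hbb
    have heq : (fun n : ℕ => (‖a n‖ + ‖b n‖) * r ^ (p * n + 1))
        = fun n => ‖a n‖ * r ^ (p * n + 1) + ‖b n‖ * r ^ (p * n + 1) := by
      funext n
      ring
    rw [heq, Summable.tsum_add hSa hSb]
    linarith
  · intro ρ hρ1 hρ2
    refine ⟨(fun n => if n = 0 then 1 else 0), (fun n => if n = 0 then 1 else 0),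
      id, id, analyticOn_id, analyticOn_id, ?_, ?_, ?_, ?_, ?_⟩
    · intro z hz
      have heq : (fun n : ℕ => (if n = 0 then (1:ℂ) else 0) * z ^ (p * n + 1))
          = fun n => if n = 0 then z else 0 := by
        funext n
        rcases eq_or_ne n 0 with rfl | hn
        · simp
        · simp [hn]
      rw [heq]
      exact hasSum_ite_eq 0 z
    · intro z hz
      have heq : (fun n : ℕ => (if n = 0 then (1:ℂ) else 0) * z ^ (p * n + 1))
          = fun n => if n = 0 then z else 0 := by
        funext n
        rcases eq_or_ne n 0 with rfl | hn
        · simp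
        · simp [hn]
      rw [heq]
      exact hasSum_ite_eq 0 z
    · intro z hz
      rw [mem_ball_zero_iff] at hz
      exact le_of_lt hz
    · intro z hz
      rw [mem_ball_zero_iff] at hz
      exact le_of_lt hz
    · have heq : (fun n : ℕ => (‖if n = 0 then (1:ℂ) else 0‖
          + ‖if n = 0 then (1:ℂ) else 0‖) * ρ ^ (p * n + 1))
          = fun n => if n = 0 then 2 * ρ else 0 := by
        funext n
        rcases eq_or_ne n 0 with rfl | hn
        · norm_num
        · simp [hn]
      rw [heq, tsum_ite_eq]
      linarith
end

section
/- Let f = h + conj(g) be a locally univalent K-quasiconformal harmonic mapping of 𝔻 where h' is bounded. Then ((K+1)/(2K)) Σ_{n≥1} (|a_n| + |b_n|) n r^{n-1} ≤ ‖h'‖_∞ for all r ≤ 1/3, and the constant 1/3 is sharp. -/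
open Metric Complex

open FormalMultilinearSeries

noncomputable def Complex.abs : AbsoluteValue ℂ ℝ := NormedField.toAbsoluteValue ℂ

theorem Complex.norm_eq_abs (z : ℂ) : ‖z‖ = Complex.abs z := rfl

theorem Complex.abs_ofReal (r : ℝ) : Complex.abs (r : ℂ) = |r| := by
  rw [← Complex.norm_eq_abs, Complex.norm_real, Real.norm_eq_abs]

theorem Complex.abs_natCast (n : ℕ) : Complex.abs (n : ℂ) = n := by
  rw [← Complex.norm_eq_abs, Complex.norm_natCast]

theorem Complex.abs_conj (z : ℂ) : Complex.abs ((starRingEnd ℂ) z) = Complex.abs z := by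
  rw [← Complex.norm_eq_abs, ← Complex.norm_eq_abs, Complex.norm_conj]

theorem Complex.sq_abs (z : ℂ) : Complex.abs z ^ 2 = Complex.normSq z := by
  rw [← Complex.norm_eq_abs, Complex.sq_norm]

theorem Complex.re_le_abs (z : ℂ) : z.re ≤ Complex.abs z := Complex.re_le_norm z

theorem Complex.abs_deriv_le_div_of_mapsTo_ball {f : ℂ → ℂ} {c : ℂ} {R₁ R₂ : ℝ}
    (hd : DifferentiableOn ℂ f (ball c R₁)) (h_maps : Set.MapsTo f (ball c R₁) (ball (f c) R₂))
    (h₀ : 0 < R₁) : Complex.abs (deriv f c) ≤ R₂ / R₁ :=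
  Complex.norm_deriv_le_div_of_mapsTo_ball hd (h_maps.mono_right ball_subset_closedBall) h₀

lemma aux_hasFPowerSeries {c : ℕ → ℂ} {f : ℂ → ℂ}
    (hc : ∀ z ∈ ball (0:ℂ) 1, HasSum (fun n : ℕ => c n * z ^ n) (f z)) :
    HasFPowerSeriesOnBall f (ofScalars ℂ c) 0 1 := by
  constructor
  · -- radius
    apply ENNReal.le_of_forall_nnreal_lt
    intro r hr
    have hrball : ((r:ℝ):ℂ) ∈ ball (0:ℂ) 1 := by
      simp only [mem_ball, dist_zero_right, Complex.norm_real, Real.norm_eq_abs]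
      rw [NNReal.abs_eq r]
      exact_mod_cast hr
    have hsum := (hc _ hrball).summable
    apply le_radius_of_tendsto (l := 0)
    have h0 := hsum.tendsto_atTop_zero
    have h1 := (continuous_norm.tendsto (0:ℂ)).comp h0
    simp only [Function.comp_def, norm_zero] at h1
    have heq : (fun n => ‖ofScalars ℂ c n‖ * (r:ℝ) ^ n) = fun n => ‖c n * ((r:ℝ):ℂ) ^ n‖ := by
      funext n
      rw [ofScalars_norm, norm_mul, norm_pow, Complex.norm_real, Real.norm_eq_abs,
        NNReal.abs_eq r]
    rw [heq]
    exact h1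
  · exact one_pos
  · intro y hy
    rw [mem_eball_zero_iff, ← ofReal_norm, ENNReal.ofReal_lt_one] at hy
    have hy' : y ∈ ball (0:ℂ) 1 := by
      simp only [mem_ball, dist_zero_right]
      exact_mod_cast hy
    have heq : (fun n => ofScalars ℂ c n fun _ => y) = fun n => c n * y ^ n := by
      funext n; rw [ofScalars_apply_eq, smul_eq_mul]
    rw [zero_add, heq]
    exact hc y hy'

lemma aux_hasSum_deriv {c : ℕ → ℂ} {f : ℂ → ℂ}
    (hc : ∀ z ∈ ball (0:ℂ) 1, HasSum (fun n : ℕ => c n * z ^ n) (f z)) :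
    ∀ z ∈ ball (0:ℂ) 1, HasSum (fun n : ℕ => ((n:ℂ) + 1) * c (n + 1) * z ^ n) (deriv f z) := by
  have hp := aux_hasFPowerSeries hc
  have hq := hp.fderiv
  intro z hz
  rw [mem_ball, dist_zero_right] at hz
  have hz' : z ∈ eball (0:ℂ) 1 := by
    rw [mem_eball_zero_iff, ← ofReal_norm, ENNReal.ofReal_lt_one]
    exact_mod_cast hz
  have hs := hq.hasSum hz'
  rw [zero_add] at hs
  have hs1 := (ContinuousLinearMap.apply ℂ ℂ (1:ℂ)).hasSum hs
  simp only [ContinuousLinearMap.apply_apply] at hs1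
  have hderiv : fderiv ℂ f z 1 = deriv f z := fderiv_apply_one_eq_deriv
  rw [hderiv] at hs1
  by_cases hz0 : z = 0
  · subst hz0
    have : HasSum (fun n : ℕ => ((n:ℂ) + 1) * c (n + 1) * (0:ℂ) ^ n) (c 1) := by
      convert hasSum_single (f := fun n : ℕ => ((n:ℂ) + 1) * c (n + 1) * (0:ℂ) ^ n) 0 ?_ using 1
      · norm_num
      · intro b hb
        simp [zero_pow hb]
    have hd : deriv f 0 = c 1 := by
      rw [hp.hasFPowerSeriesAt.deriv, ofScalars_apply_eq]
      simp
    rwa [hd]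
  · convert hs1 using 1
    · rfl
    funext n
    have hdiag := (ofScalars ℂ c).derivSeries_apply_diag n z
    have hlin : ((ofScalars ℂ c).derivSeries n fun _ => z) z
        = z * (((ofScalars ℂ c).derivSeries n fun _ => z) 1) := by
      have hms := (((ofScalars ℂ c).derivSeries n) fun _ => z).map_smul z 1
      simpa using hms
    rw [ofScalars_apply_eq] at hdiag
    apply mul_left_cancel₀ hz0
    rw [← hlin, hdiag]
    simp only [smul_eq_mul, nsmul_eq_mul]
    push_cast
    ring

lemma aux_balleq : eball (0:ℂ) 1 = ball (0:ℂ) 1 := by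
  ext w
  rw [mem_eball_zero_iff, ← ofReal_norm, ENNReal.ofReal_lt_one, mem_ball, dist_zero_right]

lemma aux_sym {c : ℕ → ℂ} {f : ℂ → ℂ} {M : ℝ}
    (hc : ∀ z ∈ ball (0:ℂ) 1, HasSum (fun n : ℕ => c n * z ^ n) (f z))
    (hM : ∀ z ∈ ball (0:ℂ) 1, Complex.abs (f z) ≤ M) {m : ℕ} (hm : 1 ≤ m) :
    ∃ G : ℂ → ℂ, DifferentiableOn ℂ G (ball (0:ℂ) 1) ∧
      (∀ w ∈ ball (0:ℂ) 1, Complex.abs (G w) ≤ M) ∧ G 0 = c 0 ∧ deriv G 0 = c m := by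
  have hm0 : m ≠ 0 := by omega
  set ζ : ℂ := Complex.exp (2 * Real.pi * Complex.I / m) with hζdef
  have hprim : IsPrimitiveRoot ζ m := Complex.isPrimitiveRoot_exp m hm0
  have hζone : Complex.abs ζ = 1 := by
    have h1 : (Complex.abs ζ) ^ m = 1 := by
      rw [← map_pow, hprim.pow_eq_one, map_one]
    have h0 : 0 ≤ Complex.abs ζ := Complex.abs.nonneg ζ
    rcases lt_trichotomy (Complex.abs ζ) 1 with hlt | heq | hgt
    · exfalso; nlinarith [pow_lt_one₀ h0 hlt hm0]
    · exact heq
    · exfalso; nlinarith [one_lt_pow₀ hgt hm0]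
  set G : ℂ → ℂ := fun w => ∑' k : ℕ, c (m * k) * w ^ k with hGdef
  -- summability at m-th powers
  have hGsum : ∀ z : ℂ, Complex.abs z < 1 →
      HasSum (fun k : ℕ => c (m * k) * (z ^ m) ^ k) (G (z ^ m)) := by
    intro z hz
    have hzball : z ∈ ball (0:ℂ) 1 := by rwa [mem_ball, dist_zero_right]
    have hinj : Function.Injective (fun k : ℕ => m * k) :=
      fun k l hkl => by simpa [hm0] using hkl
    have hsum := ((hc z hzball).summable.comp_injective hinj)
    have heq : ((fun n : ℕ => c n * z ^ n) ∘ fun k : ℕ => m * k)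
        = fun k : ℕ => c (m * k) * (z ^ m) ^ k := by
      funext k; simp [Function.comp, pow_mul]
    rw [heq] at hsum
    exact hsum.hasSum
  -- root extraction
  have hroot : ∀ w ∈ ball (0:ℂ) 1, ∃ z : ℂ, z ^ m = w ∧ Complex.abs z < 1 := by
    intro w hw
    rw [mem_ball, dist_zero_right] at hw
    obtain ⟨z, hz⟩ := IsAlgClosed.exists_pow_nat_eq w (show 0 < m by omega)
    refine ⟨z, hz, ?_⟩
    by_contra hge
    push_neg at hge
    have : (1:ℝ) ≤ Complex.abs z ^ m := one_le_pow₀ hge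
    rw [← map_pow, hz] at this
    rw [Complex.norm_eq_abs] at hw
    linarith
  -- the averaging identity
  have havg : ∀ z : ℂ, Complex.abs z < 1 →
      (m:ℂ) * G (z ^ m) = ∑ j ∈ Finset.range m, f (ζ ^ j * z) := by
    intro z hz
    have h1 : HasSum (fun i : ℕ => ∑ j ∈ Finset.range m, c i * (ζ ^ j * z) ^ i)
        (∑ j ∈ Finset.range m, f (ζ ^ j * z)) := by
      apply hasSum_sum
      intro j _
      apply hc
      rw [mem_ball, dist_zero_right, Complex.norm_eq_abs, map_mul, map_pow, hζone, one_pow,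
        one_mul]
      exact hz
    have h2 : (fun i : ℕ => ∑ j ∈ Finset.range m, c i * (ζ ^ j * z) ^ i)
        = fun i : ℕ => if m ∣ i then (m:ℂ) * (c i * z ^ i) else 0 := by
      funext i
      have hterm : ∀ j, c i * (ζ ^ j * z) ^ i = (ζ ^ i) ^ j * (c i * z ^ i) := by
        intro j
        rw [mul_pow, ← pow_mul, ← pow_mul, mul_comm j i]
        ring
      rw [Finset.sum_congr rfl fun j _ => hterm j, ← Finset.sum_mul]
      by_cases hdvd : m ∣ i
      · have : ζ ^ i = 1 := (hprim.pow_eq_one_iff_dvd i).mpr hdvd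
        simp [this, hdvd]
      · have hne : ζ ^ i ≠ 1 := fun hh => hdvd ((hprim.pow_eq_one_iff_dvd i).mp hh)
        rw [geom_sum_eq hne m]
        have : (ζ ^ i) ^ m = 1 := by rw [← pow_mul, mul_comm i m, pow_mul, hprim.pow_eq_one,
          one_pow]
        simp [this, hdvd]
    have h3 : HasSum (fun i : ℕ => if m ∣ i then (m:ℂ) * (c i * z ^ i) else 0)
        ((m:ℂ) * G (z ^ m)) := by
      have h4 := (hGsum z hz).mul_left (m:ℂ)
      have hinj : Function.Injective (fun k : ℕ => m * k) :=
        fun k l hkl => by simpa [hm0] using hkl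
      apply (Function.Injective.hasSum_iff hinj ?_).mp
      · have heq : ((fun i : ℕ => if m ∣ i then (m:ℂ) * (c i * z ^ i) else 0) ∘
            fun k : ℕ => m * k) = fun k : ℕ => (m:ℂ) * (c (m * k) * (z ^ m) ^ k) := by
          funext k
          simp [Function.comp, Dvd.intro k rfl, pow_mul]
        rw [heq]
        exact h4
      · intro x hx
        have : ¬ m ∣ x := by
          intro ⟨k, hk⟩
          exact hx ⟨k, hk.symm⟩
        simp [this]
    rw [h2] at h1
    exact h3.unique h1
  have hG_hasSum : ∀ w ∈ ball (0:ℂ) 1, HasSum (fun k : ℕ => c (m * k) * w ^ k) (G w) := by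
    intro w hw
    obtain ⟨z, hzw, hz⟩ := hroot w hw
    rw [← hzw]
    exact hGsum z hz
  have hpG := aux_hasFPowerSeries hG_hasSum
  refine ⟨G, ?_, ?_, ?_, ?_⟩
  · have := hpG.differentiableOn
    rwa [aux_balleq] at this
  · intro w hw
    obtain ⟨z, hzw, hz⟩ := hroot w hw
    have havg' := havg z hz
    rw [hzw] at havg'
    have hmem : ∀ j : ℕ, ζ ^ j * z ∈ ball (0:ℂ) 1 := by
      intro j
      rw [mem_ball, dist_zero_right, Complex.norm_eq_abs, map_mul, map_pow, hζone, one_pow,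
        one_mul]
      exact hz
    have hbound : Complex.abs ((m:ℂ) * G w) ≤ m * M := by
      rw [havg']
      refine le_trans (Complex.abs.sum_le _ _) ?_
      calc ∑ j ∈ Finset.range m, Complex.abs (f (ζ ^ j * z))
          ≤ ∑ _j ∈ Finset.range m, M := Finset.sum_le_sum fun j _ => hM _ (hmem j)
        _ = m * M := by simp [mul_comm]
    rw [map_mul, Complex.abs_natCast] at hbound
    have hmpos : (0:ℝ) < m := by exact_mod_cast (show 0 < m by omega)
    exact le_of_mul_le_mul_left hbound hmpos
  · have := hG_hasSum 0 (by simp)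
    have hsingle : HasSum (fun k : ℕ => c (m * k) * (0:ℂ) ^ k) (c 0) := by
      convert hasSum_single (f := fun k : ℕ => c (m * k) * (0:ℂ) ^ k) 0 ?_ using 1
      · simp
      · intro b hb
        simp [zero_pow hb]
    exact this.unique hsingle
  · rw [hpG.hasFPowerSeriesAt.deriv, ofScalars_apply_eq]
    simp

-- Schwarz–Pick at 0 for a function bounded by M on the unit ball
lemma aux_SP {G : ℂ → ℂ} {M : ℝ} (hd : DifferentiableOn ℂ G (ball (0:ℂ) 1))
    (hG : ∀ w ∈ ball (0:ℂ) 1, Complex.abs (G w) ≤ M) (hM : 0 < M) :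
    Complex.abs (deriv G 0) ≤ (M ^ 2 - Complex.abs (G 0) ^ 2) / M := by
  set a : ℂ := G 0 with ha
  have h0mem : (0:ℂ) ∈ ball (0:ℂ) 1 := by simp
  have haM : Complex.abs a ≤ M := hG 0 h0mem
  have key : ∀ M' : ℝ, M < M' → Complex.abs (deriv G 0) * M' ≤ M' ^ 2 - Complex.abs a ^ 2 := by
    intro M' hM'
    have hM'0 : 0 < M' := lt_trans hM hM'
    have hMM' : M ^ 2 < M' ^ 2 := by nlinarith
    have hanlt : Complex.normSq a < M' ^ 2 := by
      have h1 : Complex.abs a ^ 2 ≤ M ^ 2 := pow_le_pow_left₀ (Complex.abs.nonneg a) haM 2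
      rw [← Complex.sq_abs a]; linarith
    have hxlt : ∀ w ∈ ball (0:ℂ) 1, Complex.normSq (G w) < M' ^ 2 := by
      intro w hw
      have h1 : Complex.abs (G w) ^ 2 ≤ M ^ 2 :=
        pow_le_pow_left₀ (Complex.abs.nonneg _) (hG w hw) 2
      rw [← Complex.sq_abs (G w)]; linarith
    set ψ : ℂ → ℂ := fun w => (M' : ℂ) ^ 2 * (G w - a) / ((M' : ℂ) ^ 2 - (starRingEnd ℂ) a * G w)
      with hψ
    have hden : ∀ w ∈ ball (0:ℂ) 1, ((M' : ℂ) ^ 2 - (starRingEnd ℂ) a * G w) ≠ 0 := by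
      intro w hw hzero
      have h1 : Complex.abs ((starRingEnd ℂ) a * G w) ≤ M * M := by
        rw [map_mul, Complex.abs_conj]
        exact mul_le_mul haM (hG w hw) (Complex.abs.nonneg _) (le_of_lt hM)
      have h2 : ((M' : ℂ) ^ 2) = (starRingEnd ℂ) a * G w := sub_eq_zero.mp hzero
      rw [← h2, map_pow, Complex.abs_ofReal, abs_of_pos hM'0] at h1
      nlinarith
    have hψd : DifferentiableOn ℂ ψ (ball (0:ℂ) 1) := by
      apply DifferentiableOn.div
      · exact (differentiableOn_const _).mul (hd.sub (differentiableOn_const _))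
      · exact (differentiableOn_const _).sub ((differentiableOn_const _).mul hd)
      · exact hden
    have hψ0 : ψ 0 = 0 := by simp [hψ, ha]
    have hmaps : Set.MapsTo ψ (ball (0:ℂ) 1) (ball (ψ 0) M') := by
      rw [hψ0]
      intro w hw
      rw [mem_ball, dist_zero_right, Complex.norm_eq_abs]
      have hkey : M' ^ 2 * Complex.normSq (G w - a) < Complex.normSq ((M' : ℂ) ^ 2 -
          (starRingEnd ℂ) a * G w) := by
        have hid : Complex.normSq ((M' : ℂ) ^ 2 - (starRingEnd ℂ) a * G w)
            - M' ^ 2 * Complex.normSq (G w - a)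
            = (M' ^ 2 - Complex.normSq (G w)) * (M' ^ 2 - Complex.normSq a) := by
          rw [show ((M':ℂ)) ^ 2 = ((M' ^ 2 : ℝ) : ℂ) by push_cast; ring]
          simp only [Complex.normSq_apply, Complex.sub_re, Complex.sub_im, Complex.mul_re,
            Complex.mul_im, Complex.conj_re, Complex.conj_im, Complex.ofReal_re,
            Complex.ofReal_im]
          ring
        have h1 := hxlt w hw
        nlinarith
      rw [hψ, map_div₀, map_mul]
      rw [div_lt_iff₀ (Complex.abs.pos (hden w hw))]
      have e1 : Complex.abs ((M' : ℂ) ^ 2) = M' ^ 2 := by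
        rw [map_pow, Complex.abs_ofReal, abs_of_pos hM'0]
      rw [e1]
      have h2 : (M' * Complex.abs (G w - a)) ^ 2 < (Complex.abs ((M' : ℂ) ^ 2 -
          (starRingEnd ℂ) a * G w)) ^ 2 := by
        rw [mul_pow, Complex.sq_abs, Complex.sq_abs]
        exact hkey
      have h3 : M' * Complex.abs (G w - a) < Complex.abs ((M' : ℂ) ^ 2 -
          (starRingEnd ℂ) a * G w) :=
        lt_of_pow_lt_pow_left₀ 2 (Complex.abs.nonneg _) h2
      nlinarith [mul_lt_mul_of_pos_left h3 hM'0]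
    have hSchwarz := Complex.abs_deriv_le_div_of_mapsTo_ball hψd hmaps one_pos
    rw [div_one] at hSchwarz
    have hGat : HasDerivAt G (deriv G 0) 0 :=
      (hd.differentiableAt (isOpen_ball.mem_nhds h0mem)).hasDerivAt
    have hden0 : ((M' : ℂ) ^ 2 - (starRingEnd ℂ) a * a) ≠ 0 := by
      have := hden 0 h0mem
      rwa [← ha] at this
    have hnum : HasDerivAt (fun w => (M' : ℂ) ^ 2 * (G w - a))
        ((M' : ℂ) ^ 2 * deriv G 0) 0 := by
      simpa using ((hGat.sub_const a).const_mul ((M' : ℂ) ^ 2))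
    have hdenD : HasDerivAt (fun w => (M' : ℂ) ^ 2 - (starRingEnd ℂ) a * G w)
        (-((starRingEnd ℂ) a * deriv G 0)) 0 := by
      simpa using ((hGat.const_mul ((starRingEnd ℂ) a)).const_sub ((M' : ℂ) ^ 2))
    have hψat : HasDerivAt ψ
        (((M' : ℂ) ^ 2 * deriv G 0 * ((M' : ℂ) ^ 2 - (starRingEnd ℂ) a * a) -
          (M' : ℂ) ^ 2 * (G 0 - a) * -((starRingEnd ℂ) a * deriv G 0)) /
          ((M' : ℂ) ^ 2 - (starRingEnd ℂ) a * a) ^ 2) 0 := by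
      have := hnum.div hdenD hden0
      simp only [ha] at this ⊢
      exact this
    have hψderiv : deriv ψ 0 = (M' : ℂ) ^ 2 * deriv G 0 / ((M' : ℂ) ^ 2 - (starRingEnd ℂ) a * a)
        := by
      rw [hψat.deriv, ← ha]
      field_simp
      ring
    have hconj : (starRingEnd ℂ) a * a = (Complex.normSq a : ℂ) := by
      rw [mul_comm, Complex.mul_conj]
    rw [hψderiv, hconj] at hSchwarz
    have hpos : 0 < M' ^ 2 - Complex.normSq a := by linarith
    have habs : Complex.abs ((M' : ℂ) ^ 2 - (Complex.normSq a : ℂ)) = M' ^ 2 - Complex.normSq a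
        := by
      rw [show ((M' : ℂ) ^ 2 - (Complex.normSq a : ℂ)) = (((M' ^ 2 - Complex.normSq a : ℝ)) : ℂ)
        by push_cast; ring]
      rw [Complex.abs_ofReal, abs_of_pos hpos]
    rw [map_div₀, map_mul, habs, map_pow, Complex.abs_ofReal, abs_of_pos hM'0] at hSchwarz
    rw [div_le_iff₀ hpos] at hSchwarz
    have hsq := Complex.sq_abs a
    nlinarith
  have hlim : Filter.Tendsto (fun M' : ℝ => M' ^ 2 - Complex.abs a ^ 2 -
      Complex.abs (deriv G 0) * M') (nhdsWithin M (Set.Ioi M))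
      (nhds (M ^ 2 - Complex.abs a ^ 2 - Complex.abs (deriv G 0) * M)) := by
    apply Filter.Tendsto.mono_left _ nhdsWithin_le_nhds
    exact Continuous.tendsto (by continuity) M
  have hge : 0 ≤ M ^ 2 - Complex.abs a ^ 2 - Complex.abs (deriv G 0) * M := by
    refine ge_of_tendsto hlim ?_
    filter_upwards [self_mem_nhdsWithin] with M' hM'
    have := key M' hM'
    linarith
  rw [le_div_iff₀ hM]
  linarith

lemma aux_bohr {c : ℕ → ℂ} {f : ℂ → ℂ} {M : ℝ}
    (hc : ∀ z ∈ ball (0:ℂ) 1, HasSum (fun n : ℕ => c n * z ^ n) (f z))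
    (hM : ∀ z ∈ ball (0:ℂ) 1, Complex.abs (f z) ≤ M)
    {r : ℝ} (hr0 : 0 ≤ r) (hr : r ≤ 1 / 3) :
    Summable (fun n : ℕ => Complex.abs (c n) * r ^ n) ∧
      ∑' n : ℕ, Complex.abs (c n) * r ^ n ≤ M := by
  have h0mem : (0:ℂ) ∈ ball (0:ℂ) 1 := by simp
  have hc0 : c 0 = f 0 := by
    have h1 := hc 0 h0mem
    have h2 : HasSum (fun n : ℕ => c n * (0:ℂ) ^ n) (c 0) := by
      convert hasSum_single (f := fun n : ℕ => c n * (0:ℂ) ^ n) 0 ?_ using 1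
      · simp
      · intro b hb; simp [zero_pow hb]
    exact (h2.unique h1)
  have hc0M : Complex.abs (c 0) ≤ M := hc0 ▸ hM 0 h0mem
  have hM0 : 0 ≤ M := le_trans (Complex.abs.nonneg _) hc0M
  have hr1 : r < 1 := lt_of_le_of_lt hr (by norm_num)
  rcases eq_or_lt_of_le hM0 with hMz | hMpos
  · -- M = 0 : all coefficients vanish
    have hzero : ∀ n : ℕ, c n = 0 := by
      intro n
      rcases Nat.eq_zero_or_pos n with rfl | hn
      · have := hc0M
        rw [← hMz] at this
        exact Complex.abs.eq_zero.mp (le_antisymm this (Complex.abs.nonneg _))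
      · obtain ⟨G, hGd, hGb, hG0, hGderiv⟩ := aux_sym hc hM hn
        have hGzero : ∀ w ∈ ball (0:ℂ) 1, G w = 0 := by
          intro w hw
          have := hGb w hw
          rw [← hMz] at this
          exact Complex.abs.eq_zero.mp (le_antisymm this (Complex.abs.nonneg _))
        have hev : G =ᶠ[nhds (0:ℂ)] fun _ => 0 := by
          filter_upwards [isOpen_ball.mem_nhds h0mem] with w hw
          exact hGzero w hw
        rw [← hGderiv, hev.deriv_eq, deriv_const]
    have heq : (fun n : ℕ => Complex.abs (c n) * r ^ n) = fun _ => 0 := by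
      funext n; simp [hzero n]
    rw [heq]
    simpa [← hMz] using summable_zero
  · -- M > 0
    set D : ℝ := (M ^ 2 - Complex.abs (c 0) ^ 2) / M with hD
    have key : ∀ m : ℕ, 1 ≤ m → Complex.abs (c m) ≤ D := by
      intro m hm
      obtain ⟨G, hGd, hGb, hG0, hGderiv⟩ := aux_sym hc hM hm
      have := aux_SP hGd hGb hMpos
      rwa [hGderiv, hG0] at this
    have hD0 : 0 ≤ D := by
      apply div_nonneg _ hM0
      nlinarith [Complex.abs.nonneg (c 0)]
    have hbound : ∀ n : ℕ, Complex.abs (c n) * r ^ n ≤ (Complex.abs (c 0) + D) * r ^ n := by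
      intro n
      apply mul_le_mul_of_nonneg_right _ (pow_nonneg hr0 n)
      rcases Nat.eq_zero_or_pos n with rfl | hn
      · linarith
      · linarith [key n hn, Complex.abs.nonneg (c 0)]
    have hgeom : Summable (fun n : ℕ => (Complex.abs (c 0) + D) * r ^ n) :=
      (summable_geometric_of_lt_one hr0 hr1).mul_left _
    have hsum : Summable (fun n : ℕ => Complex.abs (c n) * r ^ n) :=
      Summable.of_nonneg_of_le (fun n => by positivity) hbound hgeom
    refine ⟨hsum, ?_⟩
    rw [Summable.tsum_eq_zero_add hsum]
    have htail_s : Summable (fun n : ℕ => Complex.abs (c (n + 1)) * r ^ (n + 1)) :=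
      by
        have h' := hsum.comp_injective (add_left_injective 1)
        simpa [Function.comp_def] using h'
    have hgeom2 : Summable (fun n : ℕ => D * r * r ^ n) :=
      (summable_geometric_of_lt_one hr0 hr1).mul_left _
    have htail : ∑' n : ℕ, Complex.abs (c (n + 1)) * r ^ (n + 1) ≤ ∑' n : ℕ, D * r * r ^ n := by
      apply Summable.tsum_le_tsum _ htail_s hgeom2
      intro n
      have := key (n + 1) (by omega)
      calc Complex.abs (c (n + 1)) * r ^ (n + 1) ≤ D * r ^ (n + 1) :=
            mul_le_mul_of_nonneg_right this (pow_nonneg hr0 _)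
        _ = D * r * r ^ n := by ring
    have hgeomval : ∑' n : ℕ, D * r * r ^ n = D * r * (1 - r)⁻¹ := by
      rw [tsum_mul_left, tsum_geometric_of_lt_one hr0 hr1]
    have h1r : 0 < 1 - r := by linarith
    have hhalf : D * r * (1 - r)⁻¹ ≤ D / 2 := by
      rw [div_eq_mul_inv, mul_inv_le_iff₀ h1r] at *
      · nlinarith
    have hDM : D * M = M ^ 2 - Complex.abs (c 0) ^ 2 := by
      rw [hD]
      field_simp
    have hfinal : Complex.abs (c 0) + D / 2 ≤ M := by
      nlinarith [sq_nonneg (M - Complex.abs (c 0))]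
    simp only [pow_zero, mul_one]
    linarith [htail, hgeomval ▸ htail, hhalf]

lemma aux_part1 (K : ℝ) (hK : 1 ≤ K) (a b : ℕ → ℂ) (h g : ℂ → ℂ) (M : ℝ)
    (hha : ∀ z ∈ ball (0:ℂ) 1, HasSum (fun n : ℕ => a n * z ^ n) (h z))
    (hgb : ∀ z ∈ ball (0:ℂ) 1, HasSum (fun n : ℕ => b n * z ^ n) (g z))
    (hMh : ∀ z ∈ ball (0:ℂ) 1, Complex.abs (deriv h z) ≤ M)
    (hqc : ∀ z ∈ ball (0:ℂ) 1,
      Complex.abs (deriv g z) ≤ ((K - 1) / (K + 1)) * Complex.abs (deriv h z))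
    (r : ℝ) (hr0 : 0 ≤ r) (hr13 : r ≤ 1 / 3) :
    ((K + 1) / (2 * K)) *
      ∑' n : ℕ, (Complex.abs (a (n + 1)) + Complex.abs (b (n + 1))) * (n + 1) * r ^ n ≤ M := by
  have hK0 : 0 < K := lt_of_lt_of_le one_pos hK
  set k : ℝ := (K - 1) / (K + 1) with hk
  have hk0 : 0 ≤ k := div_nonneg (by linarith) (by linarith)
  set c : ℕ → ℂ := fun n => ((n:ℂ) + 1) * a (n + 1) with hc
  set d : ℕ → ℂ := fun n => ((n:ℂ) + 1) * b (n + 1) with hd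
  have hcs := aux_hasSum_deriv hha
  have hds := aux_hasSum_deriv hgb
  have hgM : ∀ z ∈ ball (0:ℂ) 1, Complex.abs (deriv g z) ≤ k * M := by
    intro z hz
    exact le_trans (hqc z hz) (mul_le_mul_of_nonneg_left (hMh z hz) hk0)
  obtain ⟨S1, B1⟩ := aux_bohr hcs hMh hr0 hr13
  obtain ⟨S2, B2⟩ := aux_bohr hds hgM hr0 hr13
  have habs : ∀ (u : ℕ → ℂ) (n : ℕ),
      Complex.abs (((n:ℂ) + 1) * u (n + 1)) = ((n:ℝ) + 1) * Complex.abs (u (n + 1)) := by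
    intro u n
    rw [map_mul]
    congr 1
    rw [show ((n:ℂ) + 1) = (((n + 1 : ℕ)):ℂ) by push_cast; ring, Complex.abs_natCast]
    push_cast; ring
  have hsummand : (fun n : ℕ => (Complex.abs (a (n + 1)) + Complex.abs (b (n + 1)))
      * ((n:ℝ) + 1) * r ^ n)
      = fun n : ℕ => Complex.abs (c n) * r ^ n + Complex.abs (d n) * r ^ n := by
    funext n
    rw [hc, hd, habs a n, habs b n]
    ring
  rw [hsummand, Summable.tsum_add S1 S2]
  have hsum_le : ∑' n : ℕ, Complex.abs (c n) * r ^ n + ∑' n : ℕ, Complex.abs (d n) * r ^ n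
      ≤ M + k * M := add_le_add B1 B2
  have hcoef : 0 ≤ (K + 1) / (2 * K) := by positivity
  calc (K + 1) / (2 * K) * (∑' n : ℕ, Complex.abs (c n) * r ^ n
        + ∑' n : ℕ, Complex.abs (d n) * r ^ n)
      ≤ (K + 1) / (2 * K) * (M + k * M) := mul_le_mul_of_nonneg_left hsum_le hcoef
    _ = M := by
        rw [hk]
        field_simp
        ring

set_option maxHeartbeats 1000000 in
lemma aux_part2 (K : ℝ) (hK : 1 ≤ K) (ρ : ℝ) (hρ13 : 1 / 3 < ρ) (hρ1 : ρ < 1) :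
    ∃ (a b : ℕ → ℂ) (h g : ℂ → ℂ) (M : ℝ),
      AnalyticOn ℂ h (ball (0:ℂ) 1) ∧ AnalyticOn ℂ g (ball (0:ℂ) 1) ∧
      (∀ z ∈ ball (0:ℂ) 1, HasSum (fun n : ℕ => a n * z ^ n) (h z)) ∧
      (∀ z ∈ ball (0:ℂ) 1, HasSum (fun n : ℕ => b n * z ^ n) (g z)) ∧
      (∀ z ∈ ball (0:ℂ) 1, Complex.abs (deriv h z) ≤ M) ∧
      (∀ z ∈ ball (0:ℂ) 1,
        Complex.abs (deriv g z) ≤ ((K - 1) / (K + 1)) * Complex.abs (deriv h z)) ∧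
      M < ((K + 1) / (2 * K)) *
        ∑' n : ℕ, (Complex.abs (a (n + 1)) + Complex.abs (b (n + 1))) * (n + 1) * ρ ^ n := by
  have hK0 : 0 < K := lt_of_lt_of_le one_pos hK
  have hρ0 : 0 < ρ := lt_trans (by norm_num) hρ13
  obtain ⟨t, ht⟩ : ∃ x : ℝ, x = (1 / ρ - 1) / 2 := ⟨_, rfl⟩
  have h2tρ : 2 * t * ρ = 1 - ρ := by
    rw [ht]; field_simp
  have ht0 : 0 < t := by
    rw [ht]
    have : 1 < 1 / ρ := (one_lt_div hρ0).mpr hρ1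
    linarith
  have ht1 : t < 1 := by
    rw [ht]
    have : 1 / ρ < 3 := by
      rw [div_lt_iff₀ hρ0]; linarith
    linarith
  obtain ⟨aa, haa⟩ : ∃ x : ℝ, x = (1 + t) / 2 := ⟨_, rfl⟩
  have haa0 : 0 < aa := by rw [haa]; linarith
  have haa1 : aa < 1 := by rw [haa]; linarith
  have htaa : t < aa := by rw [haa]; linarith
  have haaρ : aa * ρ < 1 := by nlinarith
  have haasq : aa ^ 2 < 1 := by nlinarith
  obtain ⟨k, hk⟩ : ∃ x : ℝ, x = (K - 1) / (K + 1) := ⟨_, rfl⟩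
  have hk0 : 0 ≤ k := hk ▸ div_nonneg (by linarith) (by linarith)
  obtain ⟨A, hA⟩ : ∃ x : ℂ, x = ((aa : ℝ) : ℂ) := ⟨_, rfl⟩
  have hA0 : A ≠ 0 := by
    rw [hA]
    simp only [ne_eq, Complex.ofReal_eq_zero]
    linarith
  obtain ⟨C, hC⟩ : ∃ x : ℂ, x = (1 - A ^ 2) / A ^ 2 := ⟨_, rfl⟩
  obtain ⟨h, hh⟩ : ∃ x : ℂ → ℂ, x = fun z => z / A + C * Complex.log (1 - A * z) := ⟨_, rfl⟩
  obtain ⟨g, hg⟩ : ∃ x : ℂ → ℂ, x = fun z => ((k : ℝ) : ℂ) * h z := ⟨_, rfl⟩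
  obtain ⟨aseq, haseq⟩ : ∃ x : ℕ → ℂ,
    x = fun n : ℕ => (if n = 1 then 1 / A else 0) - C * A ^ n / n := ⟨_, rfl⟩
  obtain ⟨bseq, hbseq⟩ : ∃ x : ℕ → ℂ, x = fun n : ℕ => ((k : ℝ) : ℂ) * aseq n := ⟨_, rfl⟩
  -- basic facts inside the ball
  have hAz : ∀ z ∈ ball (0:ℂ) 1, Complex.abs (A * z) < 1 := by
    intro z hz
    rw [mem_ball, dist_zero_right, Complex.norm_eq_abs] at hz
    rw [map_mul, hA, Complex.abs_ofReal, abs_of_pos haa0]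
    nlinarith [Complex.abs.nonneg z]
  have hden : ∀ z ∈ ball (0:ℂ) 1, (1 - A * z) ≠ 0 := by
    intro z hz h0
    have h1 : A * z = 1 := by
      have := sub_eq_zero.mp h0
      linear_combination -this
    have h2 := hAz z hz
    rw [h1] at h2
    simp at h2
  have hslit : ∀ z ∈ ball (0:ℂ) 1, (1 - A * z) ∈ Complex.slitPlane := by
    intro z hz
    apply Or.inl
    rw [Complex.sub_re, Complex.one_re]
    have h1 : (A * z).re ≤ Complex.abs (A * z) := Complex.re_le_abs _
    linarith [hAz z hz]
  -- power series of h
  have hhsum : ∀ z ∈ ball (0:ℂ) 1, HasSum (fun n : ℕ => aseq n * z ^ n) (h z) := by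
    intro z hz
    have hAz' : ‖A * z‖ < 1 := by
      rw [Complex.norm_eq_abs]; exact hAz z hz
    have base := Complex.hasSum_taylorSeries_neg_log hAz'
    have s2 := base.mul_left (-C)
    have s2' : HasSum (fun n : ℕ => -C * ((A * z) ^ n / n)) (C * Complex.log (1 - A * z)) := by
      convert s2 using 1
      · rfl
      ring
    have s1 : HasSum (fun n : ℕ => (if n = 1 then 1 / A else 0) * z ^ n) (z / A) := by
      have h1 := hasSum_ite_eq 1 (z / A)
      convert h1 using 1
      funext n
      by_cases hn : n = 1
      · subst hn; simp; ring
      · simp [hn]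
    have hadd := s1.add s2'
    rw [hh]
    convert hadd using 1
    funext n
    rw [haseq]
    simp only []
    rw [mul_pow]
    ring
  -- derivative of h
  have hdh : ∀ z ∈ ball (0:ℂ) 1, HasDerivAt h (1 / A + C * ((1 - A * z)⁻¹ * (-A))) z := by
    intro z hz
    have d1 : HasDerivAt (fun w : ℂ => w / A) (1 / A) z := by
      simpa using (hasDerivAt_id z).div_const A
    have dinner : HasDerivAt (fun w : ℂ => 1 - A * w) (-A) z := by
      simpa using ((hasDerivAt_id z).const_mul A).const_sub 1
    have d2 : HasDerivAt (fun w : ℂ => Complex.log (1 - A * w))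
        ((1 - A * z)⁻¹ * (-A)) z :=
      by exact (Complex.hasDerivAt_log (hslit z hz)).comp z dinner
    rw [hh]
    exact d1.add (d2.const_mul C)
  have hhderiv : ∀ z ∈ ball (0:ℂ) 1, deriv h z = (A - z) / (1 - A * z) := by
    intro z hz
    rw [(hdh z hz).deriv, hC]
    have hdz := hden z hz
    field_simp
    ring
  -- bound on |deriv h|
  have hhbound : ∀ z ∈ ball (0:ℂ) 1, Complex.abs (deriv h z) ≤ 1 := by
    intro z hz
    rw [hhderiv z hz, map_div₀, div_le_one (Complex.abs.pos (hden z hz))]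
    have hz' : Complex.normSq z < 1 := by
      rw [mem_ball, dist_zero_right, Complex.norm_eq_abs] at hz
      rw [← Complex.sq_abs]
      nlinarith [Complex.abs.nonneg z]
    have hid : Complex.normSq (1 - A * z) - Complex.normSq (A - z)
        = (1 - aa ^ 2) * (1 - Complex.normSq z) := by
      rw [hA]
      simp only [Complex.normSq_apply, Complex.sub_re, Complex.sub_im, Complex.mul_re,
        Complex.mul_im, Complex.one_re, Complex.one_im, Complex.ofReal_re, Complex.ofReal_im]
      ring
    have h2 : Complex.abs (A - z) ^ 2 ≤ Complex.abs (1 - A * z) ^ 2 := by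
      rw [Complex.sq_abs, Complex.sq_abs]
      nlinarith [mul_pos (show (0:ℝ) < 1 - aa ^ 2 by linarith)
        (show (0:ℝ) < 1 - Complex.normSq z by linarith)]
    exact (pow_le_pow_iff_left₀ (Complex.abs.nonneg _) (Complex.abs.nonneg _) two_ne_zero).mp h2
  -- differentiability of h, derivative of g
  have hdiffh : ∀ z ∈ ball (0:ℂ) 1, DifferentiableAt ℂ h z := fun z hz =>
    (hdh z hz).differentiableAt
  have hgderiv : ∀ z ∈ ball (0:ℂ) 1, deriv g z = ((k:ℝ):ℂ) * deriv h z := by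
    intro z hz
    rw [hg]
    exact deriv_const_mul _ (hdiffh z hz)
  have hgbound : ∀ z ∈ ball (0:ℂ) 1,
      Complex.abs (deriv g z) ≤ ((K - 1) / (K + 1)) * Complex.abs (deriv h z) := by
    intro z hz
    rw [hgderiv z hz, map_mul, Complex.abs_ofReal, _root_.abs_of_nonneg hk0, ← hk]
  have hdoh : DifferentiableOn ℂ h (ball (0:ℂ) 1) := fun z hz =>
    (hdiffh z hz).differentiableWithinAt
  have hanal_h : AnalyticOn ℂ h (ball (0:ℂ) 1) := hdoh.analyticOn isOpen_ball
  have hanal_g : AnalyticOn ℂ g (ball (0:ℂ) 1) := by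
    have hdog : DifferentiableOn ℂ g (ball (0:ℂ) 1) := by
      intro z hz
      rw [hg]
      exact ((hdiffh z hz).const_mul _).differentiableWithinAt
    exact hdog.analyticOn isOpen_ball
  have hgsum : ∀ z ∈ ball (0:ℂ) 1, HasSum (fun n : ℕ => bseq n * z ^ n) (g z) := by
    intro z hz
    have h1 := (hhsum z hz).mul_left ((k:ℝ):ℂ)
    rw [hg]
    convert h1 using 1
    · rfl
    funext n
    rw [hbseq]
    ring
  -- coefficient absolute values
  have haseq1 : aseq 1 = A := by
    rw [haseq]
    simp only [if_pos rfl, Nat.cast_one, pow_one, if_true]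
    rw [hC]
    field_simp
    ring
  have habs1 : Complex.abs (aseq 1) = aa := by
    rw [haseq1, hA, Complex.abs_ofReal, abs_of_pos haa0]
  have haseqn : ∀ m : ℕ, Complex.abs (aseq (m + 2)) = (1 - aa ^ 2) * aa ^ m / (m + 2) := by
    intro m
    have hm2 : ((m:ℂ) + 2) ≠ 0 := by
      have h1 : (((m + 2 : ℕ)) : ℂ) ≠ 0 := Nat.cast_ne_zero.mpr (by omega)
      push_cast at h1
      exact h1
    have h1 : aseq (m + 2) = ((-((1 - aa ^ 2) * aa ^ m) / (m + 2) : ℝ) : ℂ) := by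
      rw [haseq]
      simp only []
      rw [if_neg (by omega), hC, hA]
      push_cast
      rw [show ((aa:ℂ)) ^ (m + 2) = (aa:ℂ) ^ 2 * (aa:ℂ) ^ m by ring]
      have hA0' : ((aa:ℝ):ℂ) ≠ 0 := by
        simp only [ne_eq, Complex.ofReal_eq_zero]; linarith
      field_simp
      ring
    rw [h1, Complex.abs_ofReal, abs_div, abs_neg]
    rw [_root_.abs_of_nonneg (mul_nonneg (by linarith) (pow_nonneg haa0.le m)),
      _root_.abs_of_pos (by positivity)]
  obtain ⟨v, hv⟩ : ∃ x : ℕ → ℝ,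
    x = fun n : ℕ => Complex.abs (aseq (n + 1)) * ((n:ℝ) + 1) * ρ ^ n := ⟨_, rfl⟩
  have h1ap : 0 < 1 - aa * ρ := by linarith
  have hvshift : HasSum (fun m : ℕ => v (m + 1)) ((1 - aa ^ 2) * ρ * (1 - aa * ρ)⁻¹) := by
    have hgeo := (hasSum_geometric_of_lt_one (by positivity) haaρ).mul_left ((1 - aa ^ 2) * ρ)
    convert hgeo using 1
    · rfl
    funext m
    rw [hv]
    simp only []
    rw [show m + 1 + 1 = m + 2 from rfl, haseqn m]
    push_cast
    have hm2 : ((m:ℝ) + 2) ≠ 0 := by positivity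
    field_simp
    ring
  have hvsum : HasSum v ((1 - aa ^ 2) * ρ * (1 - aa * ρ)⁻¹ + aa) := by
    have h1 := (hasSum_nat_add_iff (f := v) 1).mp hvshift
    convert h1 using 1
    · rfl
    rw [Finset.sum_range_one, hv]
    simp [habs1]
  -- the summand identity
  have hsummand : (fun n : ℕ => (Complex.abs (aseq (n + 1)) + Complex.abs (bseq (n + 1)))
      * ((n:ℝ) + 1) * ρ ^ n) = fun n : ℕ => (1 + k) * v n := by
    funext n
    rw [hbseq]
    simp only [map_mul, Complex.abs_ofReal, _root_.abs_of_nonneg hk0, hv]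
    ring
  refine ⟨aseq, bseq, h, g, 1, hanal_h, hanal_g, hhsum, hgsum, hhbound, hgbound, ?_⟩
  rw [hsummand, tsum_mul_left, hvsum.tsum_eq]
  have hcoefk : (K + 1) / (2 * K) * (1 + k) = 1 := by
    rw [hk]
    field_simp
    ring
  rw [← mul_assoc, hcoefk, one_mul]
  -- final strict inequality
  have key2 : 0 < (1 - aa) * (ρ * (1 + 2 * aa) - 1) := by
    apply mul_pos (by linarith)
    nlinarith [mul_pos hρ0 (show (0:ℝ) < aa - t by linarith)]
  rw [← sub_pos]
  have hexp : (1 - aa ^ 2) * ρ * (1 - aa * ρ)⁻¹ + aa - 1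
      = ((1 - aa) * (ρ * (1 + 2 * aa) - 1)) * (1 - aa * ρ)⁻¹ := by
    field_simp
    ring
  rw [hexp]
  exact mul_pos key2 (inv_pos.mpr h1ap)


theorem bohr_stmt_15 (K : ℝ) (hK : 1 ≤ K) :
    (∀ (a b : ℕ → ℂ) (h g : ℂ → ℂ) (M : ℝ),
      AnalyticOn ℂ h (ball (0:ℂ) 1) → AnalyticOn ℂ g (ball (0:ℂ) 1) →
      (∀ z ∈ ball (0:ℂ) 1, HasSum (fun n : ℕ => a n * z ^ n) (h z)) →
      (∀ z ∈ ball (0:ℂ) 1, HasSum (fun n : ℕ => b n * z ^ n) (g z)) →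
      (∀ z ∈ ball (0:ℂ) 1, ‖deriv h z‖ ≤ M) →
      (∀ z ∈ ball (0:ℂ) 1,
        ‖deriv g z‖ ≤ ((K - 1) / (K + 1)) * ‖deriv h z‖) →
      ∀ r : ℝ, 0 ≤ r → r ≤ 1 / 3 →
        ((K + 1) / (2 * K)) *
          ∑' n : ℕ, (‖a (n + 1)‖ + ‖b (n + 1)‖) * (n + 1) * r ^ n
        ≤ M) ∧
    (∀ ρ : ℝ, 1 / 3 < ρ → ρ < 1 →
      ∃ (a b : ℕ → ℂ) (h g : ℂ → ℂ) (M : ℝ),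
        AnalyticOn ℂ h (ball (0:ℂ) 1) ∧ AnalyticOn ℂ g (ball (0:ℂ) 1) ∧
        (∀ z ∈ ball (0:ℂ) 1, HasSum (fun n : ℕ => a n * z ^ n) (h z)) ∧
        (∀ z ∈ ball (0:ℂ) 1, HasSum (fun n : ℕ => b n * z ^ n) (g z)) ∧
        (∀ z ∈ ball (0:ℂ) 1, ‖deriv h z‖ ≤ M) ∧
        (∀ z ∈ ball (0:ℂ) 1,
          ‖deriv g z‖ ≤ ((K - 1) / (K + 1)) * ‖deriv h z‖) ∧
        M < ((K + 1) / (2 * K)) *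
          ∑' n : ℕ, (‖a (n + 1)‖ + ‖b (n + 1)‖) * (n + 1) * ρ ^ n) := by
  constructor
  · intro a b h g M _ _ hha hgb hMh hqc r hr0 hr13
    exact aux_part1 K hK a b h g M hha hgb hMh hqc r hr0 hr13
  · intro ρ hρ13 hρ1
    exact aux_part2 K hK ρ hρ13 hρ1
end

section
/- If f(z) = Σ a_n zⁿ is analytic on the unit disk with Bloch norm |f(0)| + sup_{z∈𝔻}(1-|z|²)|f'(z)| ≤ 1, then for 0 ≤ r < 1, Σ_{n≥1} |a_n|² rⁿ ≤ (1-|a_0|)² log(1/(1-r)). -/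
set_option maxHeartbeats 1600000

open Metric Complex MeasureTheory AddCircle

private lemma summable_norm_geo {c : ℕ → ℂ}
    (hc : ∀ z ∈ ball (0:ℂ) 1, Summable (fun n => c n * z ^ n))
    {s : ℝ} (h0 : 0 ≤ s) (h1 : s < 1) : Summable fun n => ‖c n‖ * s ^ n := by
  set t : ℝ := (s + 1) / 2 with ht
  have hst : s < t := by rw [ht]; linarith
  have ht1 : t < 1 := by rw [ht]; linarith
  have ht0 : 0 < t := by rw [ht]; linarith
  have hmem : (t : ℂ) ∈ ball (0:ℂ) 1 := by
    simp [Complex.norm_real, abs_of_pos ht0, ht1]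
  have hsum := hc _ hmem
  have hten : Filter.Tendsto (fun n => ‖c n * (t:ℂ) ^ n‖) Filter.atTop (nhds 0) := by
    simpa using hsum.tendsto_atTop_zero.norm
  obtain ⟨C, hC⟩ := hten.bddAbove_range
  refine Summable.of_nonneg_of_le (fun n => mul_nonneg (norm_nonneg _) (pow_nonneg h0 n))
    (fun n => ?_) ((summable_geometric_of_lt_one (div_nonneg h0 ht0.le)
      (by rw [div_lt_one ht0]; exact hst)).mul_left C)
  have h1 : ‖c n * (t:ℂ) ^ n‖ ≤ C := hC ⟨n, rfl⟩
  have h2 : ‖c n * (t:ℂ) ^ n‖ = ‖c n‖ * t ^ n := by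
    simp [norm_mul, norm_pow, Complex.norm_real, abs_of_pos ht0]
  have h3 : ‖c n‖ * s ^ n = (‖c n‖ * t ^ n) * (s / t) ^ n := by
    rw [mul_assoc, ← mul_pow, mul_div_cancel₀ _ ht0.ne']
  rw [h3]
  have h4 : (0:ℝ) ≤ (s / t) ^ n := pow_nonneg (div_nonneg h0 ht0.le) n
  apply mul_le_mul_of_nonneg_right _ h4
  rw [← h2]; exact h1

private lemma integral_tsum_pow {c : ℕ → ℝ} (hc : ∀ n, 0 ≤ c n)
    (hsum : Summable fun n => c n * t ^ n)
    (h0 : 0 ≤ t) :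
    ∫ s in (0:ℝ)..t, (∑' n : ℕ, c n * s ^ n) = ∑' n : ℕ, c n * t ^ (n+1) / ((n:ℝ)+1) := by
  rw [intervalIntegral.integral_of_le h0]
  have hmeas : ∀ n : ℕ, AEStronglyMeasurable (fun s : ℝ => c n * s ^ n)
      (volume.restrict (Set.Ioc 0 t)) :=
    fun n => (continuous_const.mul (continuous_pow n)).aestronglyMeasurable
  have hbd : ∀ n : ℕ, ∫⁻ s in Set.Ioc (0:ℝ) t, ‖c n * s ^ n‖₊ ≤
      ENNReal.ofReal (c n * t ^ n) * ENNReal.ofReal t := by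
    intro n
    have : ∀ᵐ s ∂(volume.restrict (Set.Ioc (0:ℝ) t)),
        (‖c n * s ^ n‖₊ : ENNReal) ≤ ENNReal.ofReal (c n * t ^ n) := by
      rw [ae_restrict_iff' measurableSet_Ioc]
      filter_upwards with s hs
      have hs0 : 0 ≤ s := le_of_lt hs.1
      have hv : 0 ≤ c n * s ^ n := mul_nonneg (hc n) (pow_nonneg hs0 n)
      rw [← enorm_eq_nnnorm, ← ofReal_norm, Real.norm_of_nonneg hv]
      exact ENNReal.ofReal_le_ofReal
        (mul_le_mul_of_nonneg_left (pow_le_pow_left₀ hs0 hs.2 n) (hc n))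
    calc ∫⁻ s in Set.Ioc (0:ℝ) t, ‖c n * s ^ n‖₊
        ≤ ∫⁻ _ in Set.Ioc (0:ℝ) t, ENNReal.ofReal (c n * t ^ n) := lintegral_mono_ae this
      _ = ENNReal.ofReal (c n * t ^ n) * ENNReal.ofReal t := by
          rw [setLIntegral_const, Real.volume_Ioc, sub_zero]
  have hne : ∑' n : ℕ, ∫⁻ s in Set.Ioc (0:ℝ) t, ‖c n * s ^ n‖₊ ≠ ⊤ := by
    apply ne_top_of_le_ne_top _ (ENNReal.tsum_le_tsum hbd)
    rw [ENNReal.tsum_mul_right]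
    apply ENNReal.mul_ne_top _ ENNReal.ofReal_ne_top
    have : ∀ n : ℕ, ENNReal.ofReal (c n * t ^ n) = ((c n * t ^ n).toNNReal : ENNReal) := by
      intro n; rfl
    simp_rw [this]
    rw [ENNReal.tsum_coe_ne_top_iff_summable]
    exact hsum.toNNReal
  rw [MeasureTheory.integral_tsum hmeas hne]
  congr 1; ext n
  rw [← intervalIntegral.integral_of_le h0, intervalIntegral.integral_const_mul,
    integral_pow]
  rw [zero_pow (Nat.succ_ne_zero n)]
  push_cast
  ring

private lemma circle_parseval {b : ℕ → ℂ} {g : ℂ → ℂ}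
    (hg : ∀ z ∈ ball (0:ℂ) 1, HasSum (fun n => b n * z ^ n) (g z))
    (hgc : ContinuousOn g (ball (0:ℂ) 1))
    {ρ C : ℝ} (h0 : 0 ≤ ρ) (h1 : ρ < 1)
    (hC : ∀ z : ℂ, ‖z‖ = ρ → ‖g z‖ ≤ C) :
    Summable (fun n : ℕ => ‖b n‖^2 * (ρ^n)^2) ∧
      ∑' n : ℕ, ‖b n‖^2 * (ρ^n)^2 ≤ C^2 := by
  haveI hfact : Fact (0 < 2*Real.pi) := ⟨by positivity⟩
  have habs : ∀ θ : ℝ, ‖(ρ:ℂ) * Complex.exp (θ * Complex.I)‖ = ρ := by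
    intro θ
    rw [norm_mul, Complex.norm_exp_ofReal_mul_I, mul_one, Complex.norm_real, Real.norm_of_nonneg h0]
  have hmem : ∀ θ : ℝ, (ρ:ℂ) * Complex.exp (θ * Complex.I) ∈ ball (0:ℂ) 1 := by
    intro θ
    rw [mem_ball_zero_iff]
    show ‖_‖ < 1
    rw [habs θ]; exact h1
  set h : ℝ → ℂ := fun θ => g ((ρ:ℂ) * Complex.exp (θ * Complex.I)) with hh
  have hper : Function.Periodic h (2*Real.pi) := by
    intro θ
    simp only [hh]
    congr 2
    push_cast
    rw [add_mul, Complex.exp_add, Complex.exp_two_pi_mul_I, mul_one]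
  have hcont : Continuous h := by
    apply hgc.comp_continuous
    · exact continuous_const.mul (Complex.continuous_exp.comp
        (Complex.continuous_ofReal.mul continuous_const))
    · exact hmem
  set G : AddCircle (2*Real.pi) → ℂ := hper.lift with hG
  have hGc : Continuous G := Continuous.quotient_liftOn' hcont _
  -- G as a sum of fourier monomials
  have hsumb : Summable fun n => ‖b n‖ * ρ ^ n :=
    summable_norm_geo (fun z hz => (hg z hz).summable) h0 h1
  have hGsum : ∀ t : AddCircle (2*Real.pi),
      HasSum (fun m : ℕ => (b m * (ρ:ℂ)^m) • fourier m t) (G t) := by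
    intro t
    induction t using QuotientAddGroup.induction_on with
    | H θ =>
    have h2 : ∀ m : ℕ, (b m * (ρ:ℂ)^m) • fourier (m : ℤ) (θ : AddCircle (2*Real.pi))
        = b m * ((ρ:ℂ) * Complex.exp (θ * Complex.I)) ^ m := by
      intro m
      rw [fourier_coe_apply, smul_eq_mul, mul_pow, ← Complex.exp_nat_mul, ← mul_assoc]
      congr 2
      have hpi : (Real.pi:ℂ) ≠ 0 := by
        simpa using Real.pi_ne_zero
      field_simp
      push_cast; ring
    have h3 : G ((θ:ℝ) : AddCircle (2*Real.pi)) = h θ := hper.lift_coe θ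
    rw [h3]
    simp_rw [h2]
    exact hg _ (hmem θ)
  have hnf : ∀ (n : ℤ) (t : AddCircle (2*Real.pi)), ‖(fourier n t : ℂ)‖ = 1 := by
    intro n t
    exact Circle.norm_coe _
  have hff : ∀ (m : ℕ) (k : ℤ),
      fourierCoeff (⇑(fourier (m:ℤ)) : AddCircle (2*Real.pi) → ℂ) k
        = if k = (m:ℤ) then 1 else 0 := by
    intro m k
    rw [← fourierCoeff_toLp (fourier (m:ℤ)) k, ← fourierBasis_repr]
    have : (ContinuousMap.toLp 2 (@haarAddCircle (2*Real.pi) hfact) ℂ) (fourier (m:ℤ)) = fourierBasis (m:ℤ) := by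
      rw [coe_fourierBasis]
    rw [this, HilbertBasis.repr_self, lp.single_apply]
    split_ifs with hkm
    · subst hkm; simp
    · simp [Pi.single_apply, hkm]
  have hcoeff : ∀ k : ℕ, fourierCoeff G (k:ℤ) = b k * (ρ:ℂ)^k := by
    intro k
    have hterm : ∀ t : AddCircle (2*Real.pi), fourier (-(k:ℤ)) t • G t
        = ∑' m : ℕ, fourier (-(k:ℤ)) t • ((b m * (ρ:ℂ)^m) • fourier (m:ℤ) t) := fun t =>
      (((hGsum t).const_smul ((fourier (-(k:ℤ)) t : ℂ)))).tsum_eq.symm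
    have hmeas : ∀ m : ℕ, AEStronglyMeasurable
        (fun t : AddCircle (2*Real.pi) =>
          fourier (-(k:ℤ)) t • ((b m * (ρ:ℂ)^m) • fourier (m:ℤ) t)) haarAddCircle := by
      intro m
      refine Continuous.aestronglyMeasurable ?_
      exact (((fourier (-(k:ℤ))).continuous.smul
        ((fourier (m:ℤ)).continuous.const_smul (b m * (ρ:ℂ)^m))))
    have hbd : ∑' m : ℕ, ∫⁻ t : AddCircle (2*Real.pi),
        ‖fourier (-(k:ℤ)) t • ((b m * (ρ:ℂ)^m) • fourier (m:ℤ) t)‖₊ ∂haarAddCircle ≠ ⊤ := by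
      have heq : ∀ m : ℕ, ∫⁻ t : AddCircle (2*Real.pi),
          ‖fourier (-(k:ℤ)) t • ((b m * (ρ:ℂ)^m) • fourier (m:ℤ) t)‖₊ ∂haarAddCircle
          = (‖b m * (ρ:ℂ)^m‖₊ : ENNReal) := by
        intro m
        have : ∀ t : AddCircle (2*Real.pi),
            (‖fourier (-(k:ℤ)) t • ((b m * (ρ:ℂ)^m) • fourier (m:ℤ) t)‖₊ : ENNReal)
            = (‖b m * (ρ:ℂ)^m‖₊ : ENNReal) := by
          intro t
          congr 1
          ext
          push_cast
          rw [smul_eq_mul, smul_eq_mul]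
          rw [norm_mul, norm_mul, hnf, hnf, one_mul, mul_one]
        rw [lintegral_congr this, lintegral_const, measure_univ, mul_one]
      rw [tsum_congr heq]
      have hsumnn : Summable fun m : ℕ => ‖b m * (ρ:ℂ)^m‖₊ := by
        rw [← NNReal.summable_coe]
        refine hsumb.congr fun m => ?_
        push_cast
        rw [norm_mul, norm_pow, Complex.norm_real, Real.norm_of_nonneg h0]
      exact ENNReal.tsum_coe_ne_top_iff_summable.mpr hsumnn
    have : fourierCoeff G (k:ℤ) = ∑' m : ℕ, (b m * (ρ:ℂ)^m) •
        fourierCoeff (⇑(fourier (m:ℤ)) : AddCircle (2*Real.pi) → ℂ) (k:ℤ) := by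
      rw [fourierCoeff]
      rw [integral_congr_ae (Filter.Eventually.of_forall hterm)]
      rw [MeasureTheory.integral_tsum hmeas hbd]
      congr 1; ext m
      rw [← fourierCoeff.const_smul (⇑(fourier (m:ℤ))) (b m * (ρ:ℂ)^m) (k:ℤ)]
      rfl
    rw [this]
    rw [tsum_eq_single k]
    · rw [hff k k, if_pos rfl, smul_eq_mul, mul_one]
    · intro m hmk
      rw [hff m k]
      rw [if_neg (by exact_mod_cast (Ne.symm hmk))]
      simp
  set Gc : C(AddCircle (2*Real.pi), ℂ) := ⟨G, hGc⟩ with hGcdef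
  set GLp := ContinuousMap.toLp (E := ℂ) 2 (@haarAddCircle (2*Real.pi) hfact) ℂ Gc with hGLpdef
  have hcoeLp : ∀ i : ℤ, fourierCoeff (⇑(GLp : Lp ℂ 2 (@haarAddCircle (2*Real.pi) hfact)) :
      AddCircle (2*Real.pi) → ℂ) i = fourierCoeff G i := fun i => fourierCoeff_toLp Gc i
  have hC0 : 0 ≤ C := le_trans (norm_nonneg (g (ρ:ℂ)))
    (hC (ρ:ℂ) (by rw [Complex.norm_real, Real.norm_of_nonneg h0]))
  have hGbd : ∀ t : AddCircle (2*Real.pi), ‖G t‖^2 ≤ C^2 := by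
    intro t
    induction t using QuotientAddGroup.induction_on with
    | H θ =>
    have h4 : ‖G ((θ:ℝ) : AddCircle (2*Real.pi))‖ ≤ C := by
      rw [hG, hper.lift_coe]
      exact hC _ (habs θ)
    exact pow_le_pow_left₀ (norm_nonneg _) h4 2
  have hpar := tsum_sq_fourierCoeff GLp
  have hint : ∫ t, ‖GLp t‖^2 ∂(@haarAddCircle (2*Real.pi) hfact) =
      ∫ t, ‖G t‖^2 ∂(@haarAddCircle (2*Real.pi) hfact) := by
    apply integral_congr_ae
    filter_upwards [ContinuousMap.coeFn_toLp (p := 2) (μ := @haarAddCircle (2*Real.pi) hfact) (𝕜 := ℂ) Gc] with t ht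
    rw [ht]
    rfl
  have hintle : ∫ t, ‖G t‖^2 ∂(@haarAddCircle (2*Real.pi) hfact) ≤ C^2 := by
    have h5 : ∫ t, ‖G t‖^2 ∂(@haarAddCircle (2*Real.pi) hfact) ≤
        ∫ _t, C^2 ∂(@haarAddCircle (2*Real.pi) hfact) := by
      apply integral_mono_of_nonneg
      · exact Filter.Eventually.of_forall fun t => sq_nonneg _
      · exact integrable_const _
      · exact Filter.Eventually.of_forall hGbd
    rwa [integral_const, probReal_univ, one_smul] at h5
  have hsumZ : Summable fun i : ℤ => ‖fourierCoeff G i‖^2 := by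
    have hm := lp.memℓp (fourierBasis.repr GLp)
    rw [memℓp_gen_iff (by norm_num : (0:ℝ) < (2:ENNReal).toReal)] at hm
    refine hm.congr fun i => ?_
    rw [fourierBasis_repr, hcoeLp i]
    rw [show ((2:ENNReal).toReal) = ((2:ℕ):ℝ) by norm_num, Real.rpow_natCast]
  have hterm_eq : ∀ n : ℕ, ‖fourierCoeff G ((n:ℕ):ℤ)‖^2 = ‖b n‖^2 * (ρ^n)^2 := by
    intro n
    rw [hcoeff n, norm_mul, norm_pow, Complex.norm_real, Real.norm_of_nonneg h0, mul_pow]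
  have hsumN : Summable fun n : ℕ => ‖b n‖^2 * (ρ^n)^2 := by
    have h6 := hsumZ.comp_injective (Nat.cast_injective : Function.Injective ((↑) : ℕ → ℤ))
    exact h6.congr fun n => hterm_eq n
  refine ⟨hsumN, ?_⟩
  have hle : ∑' n : ℕ, ‖b n‖^2 * (ρ^n)^2 ≤ ∑' i : ℤ, ‖fourierCoeff G i‖^2 := by
    apply Summable.tsum_le_tsum_of_inj ((↑) : ℕ → ℤ) Nat.cast_injective
      (fun c _ => sq_nonneg _) (fun n => le_of_eq (hterm_eq n).symm) hsumN hsumZ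
  have hZeq : ∑' i : ℤ, ‖fourierCoeff G i‖^2 ≤ C^2 := by
    have h7 : ∑' i : ℤ, ‖fourierCoeff G i‖^2 =
        ∫ t, ‖GLp t‖^2 ∂(@haarAddCircle (2*Real.pi) hfact) := by
      rw [← hpar]
      exact tsum_congr fun i => by rw [hcoeLp i]
    rw [h7, hint]
    exact hintle
  exact le_trans hle hZeq

private lemma hasSum_deriv_ball {a : ℕ → ℂ} {f : ℂ → ℂ}
    (ha : ∀ z ∈ ball (0:ℂ) 1, HasSum (fun n : ℕ => a n * z ^ n) (f z)) :
    ∀ z ∈ ball (0:ℂ) 1, HasSum (fun n : ℕ => ((n:ℂ)+1) * a (n+1) * z ^ n) (deriv f z) := by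
  set p := FormalMultilinearSeries.ofScalars ℂ a with hp
  have hps : HasFPowerSeriesOnBall f p 0 1 := by
    refine ⟨?_, zero_lt_one, ?_⟩
    · apply ENNReal.le_of_forall_nnreal_lt
      intro r hr
      apply p.le_radius_of_summable_norm
      have hr1 : (r:ℝ) < 1 := by exact_mod_cast hr
      have := summable_norm_geo (fun z hz => (ha z hz).summable) r.coe_nonneg hr1
      refine this.congr fun n => ?_
      rw [hp, FormalMultilinearSeries.ofScalars_norm]
    · intro y hy
      rw [zero_add]
      have hy' : y ∈ ball (0:ℂ) 1 := by
        rw [mem_ball_zero_iff]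
        rw [EMetric.mem_ball, edist_zero_right] at hy
        rw [← ofReal_norm, ENNReal.ofReal_lt_one] at hy
        exact hy
      simp only [hp, FormalMultilinearSeries.ofScalars_apply_eq, smul_eq_mul]
      exact ha y hy'
  intro z hz
  rcases eq_or_ne z 0 with rfl | hz0
  · have hderiv : deriv f 0 = a 1 := by
      have := hps.hasFPowerSeriesAt.deriv
      rw [this, hp, FormalMultilinearSeries.ofScalars_apply_eq, smul_eq_mul]
      simp
    have h8 : HasSum (fun n : ℕ => ((n:ℂ)+1) * a (n+1) * (0:ℂ) ^ n)
        ((((0:ℕ):ℂ)+1) * a (0+1) * (0:ℂ) ^ 0) := hasSum_single 0 (fun n hn => by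
      rw [zero_pow hn, mul_zero])
    simpa [hderiv] using h8
  · have hz' : z ∈ eball (0:ℂ) 1 := by
      rw [EMetric.mem_ball, edist_zero_right]
      rw [mem_ball_zero_iff] at hz
      rw [← ofReal_norm, ENNReal.ofReal_lt_one]; exact hz
    have h1 := (hps.fderiv.hasSum hz')
    have h2 := h1.mapL (ContinuousLinearMap.apply ℂ ℂ z)
    simp only [ContinuousLinearMap.apply_apply] at h2
    have h3 : ∀ n : ℕ, (p.derivSeries n (fun _ => z)) z
        = ((n:ℂ)+1) * a (n+1) * z ^ (n+1) := by
      intro n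
      rw [FormalMultilinearSeries.derivSeries_apply_diag, hp,
        FormalMultilinearSeries.ofScalars_apply_eq, ← Nat.cast_smul_eq_nsmul ℂ,
        smul_eq_mul, smul_eq_mul]
      push_cast
      ring
    have h4 : (fderiv ℂ f (0 + z)) z = z * deriv f z := by
      rw [zero_add, ← fderiv_apply_one_eq_deriv, ← smul_eq_mul, ← _root_.map_smul, smul_eq_mul, mul_one]
    rw [funext h3, h4] at h2
    have h5 := h2.mul_left z⁻¹
    rw [inv_mul_cancel_left₀ hz0] at h5
    have h6 : (fun i : ℕ => z⁻¹ * (((i:ℂ)+1) * a (i+1) * z^(i+1)))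
        = fun i : ℕ => ((i:ℂ)+1) * a (i+1) * z^i := by
      funext i
      rw [pow_succ]
      field_simp
    rw [h6] at h5
    exact h5


private lemma monotoneOn_tsum_pow {c : ℕ → ℝ} (hc : ∀ n, 0 ≤ c n) {t : ℝ} (ht : t < 1)
    (hs : ∀ s : ℝ, 0 ≤ s → s < 1 → Summable fun n => c n * s ^ n) :
    MonotoneOn (fun s => ∑' n : ℕ, c n * s ^ n) (Set.Icc 0 t) := by
  intro s1 hs1 s2 hs2 h12
  have hsum1 := hs s1 hs1.1 (lt_of_le_of_lt hs1.2 ht)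
  have hsum2 := hs s2 hs2.1 (lt_of_le_of_lt hs2.2 ht)
  exact Summable.tsum_le_tsum (fun n => mul_le_mul_of_nonneg_left
    (pow_le_pow_left₀ hs1.1 h12 n) (hc n)) hsum1 hsum2

theorem bohr_stmt_16 (a : ℕ → ℂ) (f : ℂ → ℂ)
    (hf : AnalyticOn ℂ f (ball (0:ℂ) 1))
    (ha : ∀ z ∈ ball (0:ℂ) 1, HasSum (fun n : ℕ => a n * z ^ n) (f z))
    (hbloch : ∀ z ∈ ball (0:ℂ) 1,
      ‖f 0‖ + (1 - (‖z‖)^2) * ‖deriv f z‖ ≤ 1)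
    (r : ℝ) (hr0 : 0 ≤ r) (hr1 : r < 1) :
    ∑' n : ℕ, (‖a (n + 1)‖)^2 * r ^ (n + 1) ≤
      (1 - ‖a 0‖)^2 * Real.log (1 / (1 - r)) := by
  have h0mem : (0:ℂ) ∈ ball (0:ℂ) 1 := by
    rw [mem_ball_zero_iff]; norm_num
  -- a 0 = f 0
  have ha0 : a 0 = f 0 := by
    have h1 := ha 0 h0mem
    have h2 : HasSum (fun n : ℕ => a n * (0:ℂ) ^ n) (a 0 * (0:ℂ) ^ 0) :=
      hasSum_single 0 (fun n hn => by rw [zero_pow hn, mul_zero])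
    have := h2.unique h1
    simpa using this
  set M : ℝ := 1 - ‖a 0‖ with hM
  have hM0 : 0 ≤ M := by
    have h1 := hbloch 0 h0mem
    have h2 : 0 ≤ (1 - (‖(0:ℂ)‖)^2) * ‖deriv f 0‖ := by
      apply mul_nonneg _ (norm_nonneg _)
      simp
    rw [hM, ha0]
    linarith
  -- derivative bound
  have hd : ∀ z ∈ ball (0:ℂ) 1, ‖deriv f z‖ ≤ M / (1 - (‖z‖)^2) := by
    intro z hz
    have h1 := hbloch z hz
    have habs1 : ‖z‖ < 1 := mem_ball_zero_iff.mp hz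
    have hpos : 0 < 1 - (‖z‖)^2 := by
      have h2 : (‖z‖)^2 < 1 := by
        have := norm_nonneg z
        nlinarith
      linarith
    rw [le_div_iff₀ hpos, hM, ha0]
    linarith [mul_comm (1 - (‖z‖)^2) (‖deriv f z‖)]
  -- continuity of deriv f
  have hgc : ContinuousOn (deriv f) (ball (0:ℂ) 1) := by
    have hf' : AnalyticOnNhd ℂ f (ball (0:ℂ) 1) :=
      (isOpen_ball.analyticOn_iff_analyticOnNhd).mp hf
    exact hf'.deriv.continuousOn
  set b : ℕ → ℂ := fun n => ((n:ℂ)+1) * a (n+1) with hb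
  have hbsum := hasSum_deriv_ball ha
  set c : ℕ → ℝ := fun n => ‖b n‖^2 with hcdef
  have hc : ∀ n, 0 ≤ c n := fun n => sq_nonneg _
  -- Parseval bound
  have hkey : ∀ s : ℝ, 0 ≤ s → s < 1 →
      Summable (fun n => c n * s ^ n) ∧ ∑' n : ℕ, c n * s ^ n ≤ M^2 / (1-s)^2 := by
    intro s h0s h1s
    set ρ : ℝ := Real.sqrt s with hρ
    have hρ0 : 0 ≤ ρ := Real.sqrt_nonneg s
    have hρ2 : ρ^2 = s := Real.sq_sqrt h0s
    have hρ1 : ρ < 1 := by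
      nlinarith [hρ2, hρ0]
    have hC : ∀ z : ℂ, ‖z‖ = ρ → ‖deriv f z‖ ≤ M / (1-s) := by
      intro z hzabs
      have hzmem : z ∈ ball (0:ℂ) 1 := by
        rw [mem_ball_zero_iff]
        show ‖z‖ < 1
        rw [hzabs]; exact hρ1
      have := hd z hzmem
      rwa [hzabs, hρ2] at this
    obtain ⟨hS, hT⟩ := circle_parseval hbsum hgc hρ0 hρ1 hC
    have hterm : ∀ n : ℕ, ‖b n‖^2 * (ρ^n)^2 = c n * s^n := by
      intro n
      rw [← pow_mul, mul_comm n 2, pow_mul, hρ2]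
    constructor
    · exact hS.congr hterm
    · have h3 : ∑' n : ℕ, c n * s^n = ∑' n : ℕ, ‖b n‖^2 * (ρ^n)^2 :=
        tsum_congr fun n => (hterm n).symm
      rw [h3]
      calc ∑' n : ℕ, ‖b n‖^2 * (ρ^n)^2 ≤ (M/(1-s))^2 := hT
        _ = M^2/(1-s)^2 := div_pow M (1-s) 2
  -- first integration
  have hstep1 : ∀ t : ℝ, 0 ≤ t → t < 1 →
      ∑' n : ℕ, c n * t ^ n / ((n:ℝ)+1) ≤ M^2 / (1-t) := by
    intro t h0t h1t
    rcases eq_or_lt_of_le h0t with rfl | htpos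
    · have h4 : ∑' n : ℕ, c n * (0:ℝ) ^ n / ((n:ℝ)+1) = c 0 := by
        rw [tsum_eq_single 0 (fun n hn => by rw [zero_pow hn, mul_zero, zero_div])]
        norm_num
      have h5 : ∑' n : ℕ, c n * (0:ℝ) ^ n = c 0 := by
        rw [tsum_eq_single 0 (fun n hn => by rw [zero_pow hn, mul_zero])]
        norm_num
      rw [h4]
      have := (hkey 0 le_rfl one_pos).2
      rw [h5] at this
      simpa using this
    · have hintΦ : IntervalIntegrable (fun s => ∑' n : ℕ, c n * s ^ n) volume 0 t := by
        apply MonotoneOn.intervalIntegrable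
        rw [Set.uIcc_of_le h0t]
        exact monotoneOn_tsum_pow hc h1t (fun s h1 h2 => (hkey s h1 h2).1)
      have hintψ : IntervalIntegrable (fun s => M^2/(1-s)^2) volume 0 t := by
        apply ContinuousOn.intervalIntegrable
        apply ContinuousOn.div continuousOn_const
        · exact ((continuous_const.sub continuous_id).pow 2).continuousOn
        · intro s hs
          rw [Set.uIcc_of_le h0t] at hs
          have h1s : (0:ℝ) < 1 - s := by
            have : s < 1 := lt_of_le_of_lt hs.2 h1t
            linarith
          positivity
      have hmono := intervalIntegral.integral_mono_on h0t hintΦ hintψ (fun s hs => by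
        have h6 := (hkey s hs.1 (lt_of_le_of_lt hs.2 h1t)).2
        exact h6)
      rw [integral_tsum_pow hc (hkey t h0t h1t).1 h0t] at hmono
      have hftc : ∫ s in (0:ℝ)..t, M^2/(1-s)^2 = M^2 * (t/(1-t)) := by
        have hderiv : ∀ s ∈ Set.uIcc (0:ℝ) t,
            HasDerivAt (fun s : ℝ => M^2 * (1-s)⁻¹) (M^2/(1-s)^2) s := by
          intro s hs
          rw [Set.uIcc_of_le h0t] at hs
          have hne : (1:ℝ) - s ≠ 0 := by
            have : s < 1 := lt_of_le_of_lt hs.2 h1t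
            linarith
          have h7 : HasDerivAt (fun s : ℝ => 1-s) (-1) s := by
            simpa using (hasDerivAt_id s).const_sub 1
          have h8 := (h7.inv hne).const_mul (M^2)
          refine h8.congr_deriv ?_
          ring
        rw [intervalIntegral.integral_eq_sub_of_hasDerivAt hderiv hintψ]
        have hne : (1:ℝ) - t ≠ 0 := by linarith
        field_simp
        ring
      rw [hftc] at hmono
      have hmul : ∑' n : ℕ, c n * t ^ (n+1) / ((n:ℝ)+1)
          = t * ∑' n : ℕ, c n * t ^ n / ((n:ℝ)+1) := by
        rw [← tsum_mul_left]
        exact tsum_congr fun n => by rw [pow_succ]; ring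
      rw [hmul] at hmono
      have h9 : M^2 * (t/(1-t)) = t * (M^2/(1-t)) := by ring
      rw [h9] at hmono
      exact le_of_mul_le_mul_left hmono htpos
  -- second integration
  set c' : ℕ → ℝ := fun n => c n / ((n:ℝ)+1) with hc'def
  have hc' : ∀ n, 0 ≤ c' n := fun n => div_nonneg (hc n) (by positivity)
  have hsum' : ∀ s : ℝ, 0 ≤ s → s < 1 → Summable fun n => c' n * s ^ n := by
    intro s h0s h1s
    apply Summable.of_nonneg_of_le (fun n => mul_nonneg (hc' n) (pow_nonneg h0s n))
      (fun n => ?_) (hkey s h0s h1s).1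
    apply mul_le_mul_of_nonneg_right _ (pow_nonneg h0s n)
    rw [hc'def]
    apply div_le_self (hc n)
    have hnn : (0:ℝ) ≤ (n:ℝ) := Nat.cast_nonneg n
    linarith
  have hintΦ2 : IntervalIntegrable (fun t => ∑' n : ℕ, c' n * t ^ n) volume 0 r := by
    apply MonotoneOn.intervalIntegrable
    rw [Set.uIcc_of_le hr0]
    exact monotoneOn_tsum_pow hc' hr1 hsum'
  have hintψ2 : IntervalIntegrable (fun t => M^2/(1-t)) volume 0 r := by
    apply ContinuousOn.intervalIntegrable
    apply ContinuousOn.div continuousOn_const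
    · exact (continuous_const.sub continuous_id).continuousOn
    · intro s hs
      rw [Set.uIcc_of_le hr0] at hs
      have : s < 1 := lt_of_le_of_lt hs.2 hr1
      intro hzero; linarith [sub_eq_zero.mp hzero]
  have hmono2 := intervalIntegral.integral_mono_on hr0 hintΦ2 hintψ2 (fun t ht => by
    have h10 := hstep1 t ht.1 (lt_of_le_of_lt ht.2 hr1)
    have h11 : ∑' n : ℕ, c' n * t ^ n = ∑' n : ℕ, c n * t ^ n / ((n:ℝ)+1) :=
      tsum_congr fun n => by rw [hc'def]; ring
    rw [h11]
    exact h10)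
  rw [integral_tsum_pow hc' (hsum' r hr0 hr1) hr0] at hmono2
  have hftc2 : ∫ t in (0:ℝ)..r, M^2/(1-t) = M^2 * Real.log (1/(1-r)) := by
    have hderiv : ∀ t ∈ Set.uIcc (0:ℝ) r,
        HasDerivAt (fun t : ℝ => -(M^2 * Real.log (1-t))) (M^2/(1-t)) t := by
      intro t ht
      rw [Set.uIcc_of_le hr0] at ht
      have hne : (1:ℝ) - t ≠ 0 := by
        have : t < 1 := lt_of_le_of_lt ht.2 hr1
        linarith
      have h7 : HasDerivAt (fun t : ℝ => 1-t) (-1) t := by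
        simpa using (hasDerivAt_id t).const_sub 1
      have h8 := ((h7.log hne).const_mul (M^2)).neg
      refine h8.congr_deriv ?_
      ring
    rw [intervalIntegral.integral_eq_sub_of_hasDerivAt hderiv hintψ2]
    rw [one_div, Real.log_inv]
    simp [Real.log_one]
  rw [hftc2] at hmono2
  -- final identification
  have hfinal : ∑' n : ℕ, (‖a (n + 1)‖)^2 * r ^ (n + 1)
      = ∑' n : ℕ, c' n * r ^ (n+1) / ((n:ℝ)+1) := by
    apply tsum_congr
    intro n
    simp only [hc'def, hcdef, hb]
    have hnorm : ‖((n:ℂ)+1) * a (n+1)‖ = ((n:ℝ)+1) * ‖a (n+1)‖ := by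
      rw [norm_mul]
      congr 1
      have : ((n:ℂ)+1) = ((n+1 : ℕ) : ℂ) := by push_cast; ring
      rw [this, Complex.norm_natCast]
      push_cast; ring
    rw [hnorm]
    have hne : ((n:ℝ)+1) ≠ 0 := by positivity
    rw [mul_pow]
    field_simp
  rw [hfinal]
  calc ∑' n : ℕ, c' n * r ^ (n+1) / ((n:ℝ)+1) ≤ M^2 * Real.log (1/(1-r)) := hmono2
    _ = (1 - ‖a 0‖)^2 * Real.log (1/(1-r)) := by rw [hM]
end
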